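/- arXiv:1910.07606 — 8 statements merged into one kernel-verified Lean document; each statement's English description precedes it below -/
import Mathlib

section
/- Let S be a densely defined positive symmetric operator on a Hilbert space H, and let A = e^{-Q} be a positive self-adjoint extension of S (so Q = -ln A is self-adjoint). Then A is an extremal extension of S (i.e., inf_{f∈D(S)} ⟨A(φ-f), φ-f⟩ = 0 for all φ ∈ D(A)) if and only if D(S) is dense in the Hilbert space H_{-Q} obtained by completing D(e^{-Q}) with respect to the inner product (f,g)_{-Q} = ⟨e^{-Q/2}f, e^{-Q/2}g⟩. -/
open scoped ComplexInnerProductSpace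

noncomputable section

variable {H : Type*} [NormedAddCommGroup H] [InnerProductSpace ℂ H] [CompleteSpace H]

/-- `A` is a nonnegative (possibly unbounded) operator. -/
def LinearPMap.IsNonneg (A : H →ₗ.[ℂ] H) : Prop :=
  ∀ f : A.domain, 0 ≤ (⟪A f, (f : H)⟫).re

/-- `A` is a positive operator. -/
def LinearPMap.IsPositive (A : H →ₗ.[ℂ] H) : Prop :=
  ∀ f : A.domain, (f : H) ≠ 0 → 0 < (⟪A f, (f : H)⟫).re

/-- `S` is a symmetric operator. -/
def LinearPMap.IsSymmetric' (S : H →ₗ.[ℂ] H) : Prop :=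
  ∀ x y : S.domain, ⟪S x, (y : H)⟫ = ⟪(x : H), S y⟫

/-- `R` is a square root of `A`. -/
def IsSqrtOf (R A : H →ₗ.[ℂ] H) : Prop :=
  (∀ x : H, x ∈ A.domain ↔ ∃ hx : x ∈ R.domain, R ⟨x, hx⟩ ∈ R.domain) ∧
  ∀ (x : A.domain) (hx : (x : H) ∈ R.domain) (hx2 : R ⟨(x : H), hx⟩ ∈ R.domain),
    A x = R ⟨R ⟨(x : H), hx⟩, hx2⟩

/-- For a self-adjoint square root, `⟨A x, x⟩.re = ‖sA x‖²`. -/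
lemma key {A sA : H →ₗ.[ℂ] H} (hsA : IsSelfAdjoint sA) (hsq : IsSqrtOf sA A)
    (x : A.domain) (hx : (x : H) ∈ sA.domain)
    (hx2 : sA ⟨(x : H), hx⟩ ∈ sA.domain) :
    (⟪A x, (x : H)⟫).re = ‖sA ⟨(x : H), hx⟩‖ ^ 2 := by
  have hsym : sA.IsFormalAdjoint sA := by
    have hd : Dense (sA.domain : Set H) := hsA.dense_domain
    rw [LinearPMap.isSelfAdjoint_def] at hsA
    have h := sA.adjoint_isFormalAdjoint hd
    rwa [hsA] at h
  have h1 : A x = sA ⟨sA ⟨(x : H), hx⟩, hx2⟩ := hsq.2 x hx hx2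
  have h2 := hsym ⟨sA ⟨(x : H), hx⟩, hx2⟩ ⟨(x : H), hx⟩
  rw [h1]
  simp only at h2
  rw [h2]
  exact inner_self_eq_norm_sq (𝕜 := ℂ) _


/-- Let `S` be a densely defined positive symmetric operator and let `A = e^{-Q}` be a positive
self-adjoint extension of `S`, with `sA = e^{-Q/2}` its positive self-adjoint square root.
Then `A` is an extremal extension of `S` (i.e. `inf_{f ∈ D(S)} ⟨A(φ-f), φ-f⟩ = 0` for every
`φ ∈ D(A)`) if and only if `D(S)` is dense in the Hilbert space `H_{-Q}`, i.e. every element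
`φ` of `D(e^{-Q})` can be approximated by elements of `D(S)` in the norm
`‖f‖_{-Q} = ‖e^{-Q/2} f‖`. -/
theorem extremal_iff_dense_in_completion
    (S A sA : H →ₗ.[ℂ] H)
    (hSdense : Dense (S.domain : Set H))
    (hSsym : S.IsSymmetric') (hSpos : S.IsPositive)
    (hA : IsSelfAdjoint A) (hApos : A.IsPositive)
    (hsA : IsSelfAdjoint sA) (hsAnn : sA.IsNonneg)
    (hsq : IsSqrtOf sA A) (hext : S ≤ A) :
    (∀ φ : A.domain, ∀ ε > 0, ∃ f : S.domain,
        (⟪A (φ - ⟨(f : H), hext.1 f.2⟩), ((φ : H) - (f : H))⟫).re < ε)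
    ↔
    (∀ φ : A.domain, ∀ ε > 0, ∃ (f : S.domain)
        (hm : (φ : H) - (f : H) ∈ sA.domain), ‖sA ⟨(φ : H) - (f : H), hm⟩‖ < ε) := by
  constructor
  · intro h φ ε hε
    obtain ⟨f, hf⟩ := h φ (ε ^ 2) (by positivity)
    set z : A.domain := φ - ⟨(f : H), hext.1 f.2⟩ with hz
    have hzc : (z : H) = (φ : H) - (f : H) := rfl
    obtain ⟨hx, hx2⟩ := (hsq.1 (z : H)).mp z.2
    have := key hsA hsq z hx hx2
    refine ⟨f, hzc ▸ hx, ?_⟩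
    have hlt : ‖sA ⟨(z : H), hx⟩‖ ^ 2 < ε ^ 2 := by
      rw [← this]
      simpa [hzc] using hf
    have hnn : (0:ℝ) ≤ ‖sA ⟨(z : H), hx⟩‖ := norm_nonneg _
    exact lt_of_pow_lt_pow_left₀ 2 hε.le hlt
  · intro h φ ε hε
    obtain ⟨f, hm, hf⟩ := h φ (Real.sqrt ε) (Real.sqrt_pos.mpr hε)
    refine ⟨f, ?_⟩
    set z : A.domain := φ - ⟨(f : H), hext.1 f.2⟩ with hz
    have hzc : (z : H) = (φ : H) - (f : H) := rfl
    obtain ⟨hx, hx2⟩ := (hsq.1 (z : H)).mp z.2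
    have hk := key hsA hsq z hx hx2
    have : (⟪A z, (z : H)⟫).re = ‖sA ⟨(φ : H) - (f : H), hm⟩‖ ^ 2 := by
      rw [hk]; congr 1
    calc (⟪A z, (z : H)⟫).re = ‖sA ⟨(φ : H) - (f : H), hm⟩‖ ^ 2 := this
      _ < Real.sqrt ε ^ 2 := by
          exact pow_lt_pow_left₀ hf (norm_nonneg _) (by norm_num)
      _ = ε := Real.sq_sqrt hε.le
end
end

section
/- Let {φ_n} be a semi-regular sequence in a Hilbert space H (minimal and complete), with biorthogonal sequence {ψ_n}, and let S be the positive symmetric operator Sφ_n = ψ_n extended linearly to D(S) = span{φ_n}. If {φ_n} is a generalized Riesz system, i.e., there exists a self-adjoint operator Q and an orthonormal basis {e_n} with e_n ∈ D(e^{Q/2}) ∩ D(e^{-Q/2}) and φ_n = e^{Q/2}e_n, then the Friedrichs extension A_F of S is a positive operator. -/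
open scoped ComplexInnerProductSpace
open Filter Topology

noncomputable section

variable {H : Type*} [NormedAddCommGroup H] [InnerProductSpace ℂ H] [CompleteSpace H]

/-- The form order `A ≥ B` expressed via square roots. -/
def FormGE (sA sB : H →ₗ.[ℂ] H) : Prop :=
  sA.domain ≤ sB.domain ∧
  ∀ (f : sA.domain) (hf : (f : H) ∈ sB.domain), ‖sB ⟨(f : H), hf⟩‖ ≤ ‖sA f‖

/-- `{e_n}` is an orthonormal basis of `H`. -/
def IsONB (e : ℕ → H) : Prop :=
  Orthonormal ℂ e ∧ Dense ((Submodule.span ℂ (Set.range e) : Submodule ℂ H) : Set H)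

/-- `(A_F, sAF)` is the Friedrichs extension of `S` (with its square root): it is a nonnegative
self-adjoint extension of `S` which is greatest in the form order among all nonnegative
self-adjoint extensions of `S`. -/
def IsFriedrichsExtOf (AF sAF S : H →ₗ.[ℂ] H) : Prop :=
  IsSelfAdjoint AF ∧ AF.IsNonneg ∧ S ≤ AF ∧
  IsSelfAdjoint sAF ∧ sAF.IsNonneg ∧ IsSqrtOf sAF AF ∧
  ∀ B sB : H →ₗ.[ℂ] H, IsSelfAdjoint B → B.IsNonneg → S ≤ B →
    IsSelfAdjoint sB → sB.IsNonneg → IsSqrtOf sB B → FormGE sAF sB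

/-- `{φ_n}` is a generalized Riesz system: `φ_n = e^{Q/2} e_n` for a self-adjoint operator `Q`
and an orthonormal basis `{e_n}` with `e_n ∈ D(e^{Q/2}) ∩ D(e^{-Q/2})`.  Here `E = e^{Q/2}` and
`F = e^{-Q/2}` are encoded as a pair of mutually inverse positive self-adjoint operators
(`Q = 2 ln E` is then self-adjoint). -/
def IsGRS (φ : ℕ → H) : Prop :=
  ∃ (E F : H →ₗ.[ℂ] H) (e : ℕ → H),
    IsSelfAdjoint E ∧ IsSelfAdjoint F ∧ E.IsPositive ∧ F.IsPositive ∧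
    (∀ x : E.domain, ∃ h : E x ∈ F.domain, F ⟨E x, h⟩ = (x : H)) ∧
    (∀ y : F.domain, ∃ h : F y ∈ E.domain, E ⟨F y, h⟩ = (y : H)) ∧
    IsONB e ∧
    ∀ n, ∃ (h1 : e n ∈ E.domain) (_ : e n ∈ F.domain), φ n = E ⟨e n, h1⟩


namespace FriedrichsAux

omit [CompleteSpace H] in
/-- application congruence for LinearPMap -/
theorem appCongr (F : H →ₗ.[ℂ] H) {a b : H} (e : a = b) (h : a ∈ F.domain) (h' : b ∈ F.domain) :
    F ⟨a, h⟩ = F ⟨b, h'⟩ := by subst e; rfl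

theorem symm_of_sa {F : H →ₗ.[ℂ] H} (hF : IsSelfAdjoint F) (x y : F.domain) :
    ⟪F x, (y : H)⟫ = ⟪(x : H), F y⟫ := by
  have hd : Dense (F.domain : Set H) := hF.dense_domain
  have h := LinearPMap.adjoint_isFormalAdjoint hd (T := F)
  rw [LinearPMap.isSelfAdjoint_def] at hF
  rw [hF] at h
  exact h x y

theorem mem_of_inner {F : H →ₗ.[ℂ] H} (hF : IsSelfAdjoint F) {a b : H}
    (h : ∀ x : F.domain, ⟪F x, a⟫ = ⟪(x : H), b⟫) :
    ∃ ha : a ∈ F.domain, F ⟨a, ha⟩ = b := by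
  have hd : Dense (F.domain : Set H) := hF.dense_domain
  have hF' := LinearPMap.isSelfAdjoint_def.mp hF
  have ha' : a ∈ F.adjoint.domain := LinearPMap.mem_adjoint_domain_of_exists a
    ⟨b, fun x => by rw [← inner_conj_symm, ← h x, inner_conj_symm]⟩
  have hval : F.adjoint ⟨a, ha'⟩ = b :=
    LinearPMap.adjoint_apply_eq hd ⟨a, ha'⟩ (fun x => by
      rw [← inner_conj_symm, ← h x, inner_conj_symm])
  have hdom : F.adjoint.domain = F.domain := congrArg LinearPMap.domain hF'
  have ha : a ∈ F.domain := hdom ▸ ha'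
  refine ⟨ha, ?_⟩
  have hle : F.adjoint ≤ F := le_of_eq hF'
  rw [← hval]
  exact (hle.2 (x := ⟨a, ha'⟩) (y := ⟨a, ha⟩) rfl).symm


omit [CompleteSpace H] in
theorem memCongr (F : H →ₗ.[ℂ] H) {a b : H} (e : a = b) (h : a ∈ F.domain) : b ∈ F.domain :=
  e ▸ h

/-- domain of the square of a partially defined operator -/
def sqDomain (F : H →ₗ.[ℂ] H) : Submodule ℂ H where
  carrier := {x | ∃ h : x ∈ F.domain, F ⟨x, h⟩ ∈ F.domain}
  zero_mem' := by
    refine ⟨F.domain.zero_mem, ?_⟩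
    have h0 : F ⟨0, F.domain.zero_mem⟩ = 0 := by
      calc F ⟨0, F.domain.zero_mem⟩ = F 0 := congrArg _ (Subtype.ext rfl)
        _ = 0 := F.map_zero
    rw [h0]; exact F.domain.zero_mem
  add_mem' := by
    rintro x y ⟨hx, hx2⟩ ⟨hy, hy2⟩
    refine ⟨F.domain.add_mem hx hy, ?_⟩
    have h0 : F ⟨x + y, F.domain.add_mem hx hy⟩ = F ⟨x, hx⟩ + F ⟨y, hy⟩ := by
      calc F ⟨x + y, F.domain.add_mem hx hy⟩ = F (⟨x, hx⟩ + ⟨y, hy⟩) :=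
            congrArg _ (Subtype.ext rfl)
        _ = F ⟨x, hx⟩ + F ⟨y, hy⟩ := F.map_add _ _
    rw [h0]; exact F.domain.add_mem hx2 hy2
  smul_mem' := by
    rintro c x ⟨hx, hx2⟩
    refine ⟨F.domain.smul_mem c hx, ?_⟩
    have h0 : F ⟨c • x, F.domain.smul_mem c hx⟩ = c • F ⟨x, hx⟩ := by
      calc F ⟨c • x, F.domain.smul_mem c hx⟩ = F (c • ⟨x, hx⟩) :=
            congrArg _ (Subtype.ext rfl)
        _ = c • F ⟨x, hx⟩ := F.map_smul _ _
    rw [h0]; exact F.domain.smul_mem c hx2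

omit [CompleteSpace H] in
theorem mem_sqDomain_iff {F : H →ₗ.[ℂ] H} {x : H} :
    x ∈ sqDomain F ↔ ∃ h : x ∈ F.domain, F ⟨x, h⟩ ∈ F.domain := Iff.rfl

/-- the map `x ↦ F x` from `sqDomain F` into `F.domain` -/
def sqMid (F : H →ₗ.[ℂ] H) : sqDomain F →ₗ[ℂ] F.domain where
  toFun x := ⟨F ⟨x.1, x.2.choose⟩, x.2.choose_spec⟩
  map_add' x y := by
    ext
    show (F ⟨((x + y : sqDomain F) : H), (x + y).2.choose⟩ : H)
      = F ⟨(x : H), x.2.choose⟩ + F ⟨(y : H), y.2.choose⟩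
    calc F ⟨((x + y : sqDomain F) : H), (x + y).2.choose⟩
        = F (⟨(x : H), x.2.choose⟩ + ⟨(y : H), y.2.choose⟩) := congrArg _ (Subtype.ext rfl)
      _ = _ := F.map_add _ _
  map_smul' c x := by
    ext
    show (F ⟨((c • x : sqDomain F) : H), (c • x).2.choose⟩ : H) = c • F ⟨(x : H), x.2.choose⟩
    calc F ⟨((c • x : sqDomain F) : H), (c • x).2.choose⟩
        = F (c • ⟨(x : H), x.2.choose⟩) := congrArg _ (Subtype.ext rfl)
      _ = _ := F.map_smul _ _

/-- the square `F ∘ F` of a partially defined operator -/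
def sq (F : H →ₗ.[ℂ] H) : H →ₗ.[ℂ] H :=
  ⟨sqDomain F, F.toFun.comp (sqMid F)⟩

omit [CompleteSpace H] in
theorem sq_domain (F : H →ₗ.[ℂ] H) : (sq F).domain = sqDomain F := rfl

omit [CompleteSpace H] in
theorem sq_apply (F : H →ₗ.[ℂ] H) {x : H} (hm : x ∈ (sq F).domain)
    (hx : x ∈ F.domain) (hx2 : F ⟨x, hx⟩ ∈ F.domain) :
    sq F ⟨x, hm⟩ = F ⟨F ⟨x, hx⟩, hx2⟩ := by
  show F ((sqMid F) ⟨x, hm⟩) = _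
  have h1 : F ⟨x, hm.choose⟩ = F ⟨x, hx⟩ := appCongr F rfl _ _
  exact appCongr F h1 _ _

section VN

variable (F : H →ₗ.[ℂ] H)

/-- embedding of `H × H` into the L2 product -/
def toL2 : (H × H) →ₗ[ℂ] WithLp 2 (H × H) :=
  (WithLp.linearEquiv 2 ℂ (H × H)).symm.toLinearMap

omit [CompleteSpace H] in
theorem toL2_injective : Function.Injective (toL2 (H := H)) :=
  (WithLp.linearEquiv 2 ℂ (H × H)).symm.injective

omit [CompleteSpace H] in
theorem toL2_surjective : Function.Surjective (toL2 (H := H)) :=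
  (WithLp.linearEquiv 2 ℂ (H × H)).symm.surjective

omit [CompleteSpace H] in
theorem l2_inner (a b c d : H) : ⟪toL2 (a, b), toL2 (c, d)⟫ = ⟪a, c⟫ + ⟪b, d⟫ := rfl

/-- the rotation `(x, y) ↦ (-y, x)` -/
def rot : (H × H) →ₗ[ℂ] (H × H) :=
  LinearMap.prod (-(LinearMap.snd ℂ H H)) (LinearMap.fst ℂ H H)

/-- rotated graph of `F` inside the L2 product -/
def Mgraph : Submodule ℂ (WithLp 2 (H × H)) :=
  F.graph.map (toL2 ∘ₗ rot)

/-- graph of `F` inside the L2 product -/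
def Ggraph : Submodule ℂ (WithLp 2 (H × H)) :=
  F.graph.map toL2

omit [CompleteSpace H] in
theorem mem_Mgraph_iff {z : WithLp 2 (H × H)} :
    z ∈ Mgraph F ↔ ∃ x : F.domain, z = toL2 (-(F x), (x : H)) := by
  constructor
  · rintro ⟨p, hp, rfl⟩
    obtain ⟨x, hx1, hx2⟩ := F.mem_graph_iff.mp hp
    exact ⟨x, by simp [rot, ← hx1, ← hx2]⟩
  · rintro ⟨x, rfl⟩
    exact ⟨((x : H), F x), F.mem_graph x, by simp [rot]⟩

omit [CompleteSpace H] in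
theorem mem_Ggraph_iff {z : WithLp 2 (H × H)} :
    z ∈ Ggraph F ↔ ∃ x : F.domain, z = toL2 ((x : H), F x) := by
  constructor
  · rintro ⟨p, hp, rfl⟩
    obtain ⟨x, hx1, hx2⟩ := F.mem_graph_iff.mp hp
    exact ⟨x, by simp [hx1, hx2]⟩
  · rintro ⟨x, rfl⟩
    exact ⟨((x : H), F x), F.mem_graph x, rfl⟩

variable {F}

theorem Morth_eq_Ggraph (hF : IsSelfAdjoint F) : (Mgraph F)ᗮ = Ggraph F := by
  ext z
  obtain ⟨⟨a, b⟩, rfl⟩ := toL2_surjective z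
  rw [Submodule.mem_orthogonal, mem_Ggraph_iff]
  constructor
  · intro h
    have h' : ∀ x : F.domain, ⟪F x, a⟫ = ⟪(x : H), b⟫ := by
      intro x
      have := h _ ((mem_Mgraph_iff F).mpr ⟨x, rfl⟩)
      rw [l2_inner, inner_neg_left] at this
      linear_combination -this
    obtain ⟨ha, hab⟩ := mem_of_inner hF h'
    exact ⟨⟨a, ha⟩, by rw [hab]⟩
  · rintro ⟨x, hx⟩ u hu
    obtain ⟨w, rfl⟩ := (mem_Mgraph_iff F).mp hu
    obtain ⟨h1, h2⟩ := Prod.mk.injEq .. ▸ (toL2_injective hx)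
    subst h1; subst h2
    rw [l2_inner, inner_neg_left, symm_of_sa hF w x]
    ring

theorem Gorth_eq_Mgraph (hF : IsSelfAdjoint F) : (Ggraph F)ᗮ = Mgraph F := by
  ext z
  obtain ⟨⟨a, b⟩, rfl⟩ := toL2_surjective z
  rw [Submodule.mem_orthogonal, mem_Mgraph_iff]
  constructor
  · intro h
    have h' : ∀ x : F.domain, ⟪F x, b⟫ = ⟪(x : H), -a⟫ := by
      intro x
      have := h _ ((mem_Ggraph_iff F).mpr ⟨x, rfl⟩)
      rw [l2_inner] at this
      rw [inner_neg_right]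
      linear_combination this
    obtain ⟨hb, hba⟩ := mem_of_inner hF h'
    refine ⟨⟨b, hb⟩, ?_⟩
    have : -(F ⟨b, hb⟩) = a := by rw [hba, neg_neg]
    rw [this]
  · rintro ⟨x, hx⟩ u hu
    obtain ⟨w, rfl⟩ := (mem_Ggraph_iff F).mp hu
    obtain ⟨h1, h2⟩ := Prod.mk.injEq .. ▸ (toL2_injective hx)
    subst h1; subst h2
    rw [l2_inner, inner_neg_right, symm_of_sa hF w x]
    ring

theorem oneAddSq_surj (hF : IsSelfAdjoint F) (h : H) :
    ∃ x : (sq F).domain, (x : H) + sq F x = h := by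
  have hMclosed : IsClosed ((Mgraph F) : Set (WithLp 2 (H × H))) := by
    rw [← Gorth_eq_Mgraph hF]
    exact Submodule.isClosed_orthogonal _
  have : CompleteSpace (Mgraph F) := hMclosed.completeSpace_coe
  obtain ⟨m, hm, g, hg, hsum⟩ := (Mgraph F).exists_add_mem_mem_orthogonal (toL2 (h, 0))
  rw [Morth_eq_Ggraph hF] at hg
  obtain ⟨x, rfl⟩ := (mem_Mgraph_iff F).mp hm
  obtain ⟨y, rfl⟩ := (mem_Ggraph_iff F).mp hg
  rw [← map_add] at hsum
  obtain ⟨hh, h0⟩ := Prod.mk.injEq .. ▸ (toL2_injective hsum)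
  -- hh : h = -(F x) + y,  h0 : 0 = x + F y
  have hFy : F y = -(x : H) := eq_neg_of_add_eq_zero_right h0.symm
  have hy2 : F ⟨(y : H), y.2⟩ ∈ F.domain := by
    rw [show (⟨(y : H), y.2⟩ : F.domain) = y from rfl, hFy]
    exact F.domain.neg_mem x.2
  have hymem : (y : H) ∈ (sq F).domain := ⟨y.2, hy2⟩
  refine ⟨⟨(y : H), hymem⟩, ?_⟩
  have hval : sq F ⟨(y : H), hymem⟩ = -(F x) := by
    rw [sq_apply F hymem y.2 hy2]
    have e1 : F ⟨(y : H), y.2⟩ = -(x : H) := by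
      rw [show (⟨(y : H), y.2⟩ : F.domain) = y from rfl]; exact hFy
    rw [appCongr F e1 hy2 (F.domain.neg_mem x.2)]
    calc F ⟨-(x : H), F.domain.neg_mem x.2⟩ = F (-x) := congrArg _ (Subtype.ext rfl)
      _ = -(F x) := by rw [← neg_one_smul ℂ x, F.map_smul, neg_one_smul]
  rw [hval, hh, add_comm]

end VN

section SA

variable {F : H →ₗ.[ℂ] H}

theorem sq_symm (hF : IsSelfAdjoint F) (x y : (sq F).domain) :
    ⟪sq F x, (y : H)⟫ = ⟪(x : H), sq F y⟫ := by
  obtain ⟨hx1, hx2⟩ := x.2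
  obtain ⟨hy1, hy2⟩ := y.2
  rw [show sq F x = F ⟨F ⟨(x : H), hx1⟩, hx2⟩ from sq_apply F x.2 hx1 hx2,
    show sq F y = F ⟨F ⟨(y : H), hy1⟩, hy2⟩ from sq_apply F y.2 hy1 hy2,
    symm_of_sa hF ⟨F ⟨(x : H), hx1⟩, hx2⟩ ⟨(y : H), hy1⟩,
    ← symm_of_sa hF ⟨(x : H), hx1⟩ ⟨F ⟨(y : H), hy1⟩, hy2⟩]

theorem inner_sq_self (hF : IsSelfAdjoint F) (x : (sq F).domain) :
    ⟪(x : H), sq F x⟫ = ⟪F ⟨(x : H), x.2.choose⟩, F ⟨(x : H), x.2.choose⟩⟫ := by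
  rw [show sq F x = F ⟨F ⟨(x : H), x.2.choose⟩, x.2.choose_spec⟩ from
    sq_apply F x.2 x.2.choose x.2.choose_spec,
    ← symm_of_sa hF ⟨(x : H), x.2.choose⟩ ⟨F ⟨(x : H), x.2.choose⟩, x.2.choose_spec⟩]

theorem sq_dense (hF : IsSelfAdjoint F) : Dense (((sq F).domain : Submodule ℂ H) : Set H) := by
  rw [Submodule.dense_iff_topologicalClosure_eq_top, Submodule.topologicalClosure_eq_top_iff]
  rw [Submodule.eq_bot_iff]
  intro g hg
  rw [Submodule.mem_orthogonal] at hg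
  obtain ⟨u, hu⟩ := oneAddSq_surj hF g
  have h0 : ⟪(u : H), g⟫ = 0 := hg _ u.2
  rw [← hu, inner_add_right, inner_sq_self hF, inner_self_eq_norm_sq_to_K,
    inner_self_eq_norm_sq_to_K] at h0
  have h0' : ‖((u : (sq F).domain) : H)‖ ^ 2 + ‖F ⟨(u : H), u.2.choose⟩‖ ^ 2 = 0 := by
    have h0c := congrArg Complex.re h0
    simpa [← Complex.ofReal_pow] using h0c
  have hu0 : ‖(u : H)‖ ^ 2 = 0 := by
    nlinarith [sq_nonneg ‖(u : H)‖, sq_nonneg ‖F ⟨(u : H), u.2.choose⟩‖]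
  have hu0' : (u : H) = 0 := by
    rwa [pow_eq_zero_iff (two_ne_zero), norm_eq_zero] at hu0
  have hu0'' : u = 0 := Subtype.ext hu0'
  rw [← hu, hu0'', (sq F).map_zero, add_zero, ZeroMemClass.coe_zero]

theorem sq_isSelfAdjoint (hF : IsSelfAdjoint F) : IsSelfAdjoint (sq F) := by
  have hd := sq_dense hF
  have hsymm : (sq F).IsFormalAdjoint (sq F) := fun x y => sq_symm hF x y
  have le1 : sq F ≤ (sq F).adjoint := LinearPMap.IsFormalAdjoint.le_adjoint hd hsymm
  have haf := LinearPMap.adjoint_isFormalAdjoint hd (T := sq F)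
  have aux : ∀ y : (sq F).adjoint.domain,
      ∃ hy : (y : H) ∈ (sq F).domain, sq F ⟨(y : H), hy⟩ = (sq F).adjoint y := by
    intro y
    set z := (sq F).adjoint y with hz
    obtain ⟨x₀, hx₀⟩ := oneAddSq_surj hF ((y : H) + z)
    have key : ∀ x : (sq F).domain, ⟪(x : H) + sq F x, (y : H) - (x₀ : H)⟫ = 0 := by
      intro x
      have h1 : ⟪sq F x, (y : H)⟫ = ⟪(x : H), z⟫ := by
        rw [← inner_conj_symm, ← haf y x, inner_conj_symm]
      have h2 : ⟪sq F x, (x₀ : H)⟫ = ⟪(x : H), sq F x₀⟫ := sq_symm hF x x₀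
      calc ⟪(x : H) + sq F x, (y : H) - (x₀ : H)⟫
          = ⟪(x : H), (y : H)⟫ + ⟪sq F x, (y : H)⟫
            - (⟪(x : H), (x₀ : H)⟫ + ⟪sq F x, (x₀ : H)⟫) := by
            rw [inner_sub_right, inner_add_left, inner_add_left]
        _ = ⟪(x : H), (y : H)⟫ + ⟪(x : H), z⟫
            - (⟪(x : H), (x₀ : H)⟫ + ⟪(x : H), sq F x₀⟫) := by rw [h1, h2]
        _ = ⟪(x : H), ((y : H) + z) - ((x₀ : H) + sq F x₀)⟫ := by
            rw [inner_sub_right, inner_add_right, inner_add_right]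
        _ = 0 := by rw [hx₀, sub_self, inner_zero_right]
    obtain ⟨x₁, hx₁⟩ := oneAddSq_surj hF ((y : H) - (x₀ : H))
    have hself := key x₁
    rw [hx₁] at hself
    have hyx₀ : (y : H) = (x₀ : H) := by
      have := inner_self_eq_zero.mp hself
      exact sub_eq_zero.mp this
    refine ⟨hyx₀ ▸ x₀.2, ?_⟩
    have hTx₀ : sq F x₀ = z := by
      have : (x₀ : H) + sq F x₀ = (x₀ : H) + z := by rw [hx₀, hyx₀]
      exact add_left_cancel this
    rw [← hTx₀]
    exact appCongr (sq F) hyx₀ _ _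
  have le2 : (sq F).adjoint ≤ sq F := by
    refine ⟨fun a ha => (aux ⟨a, ha⟩).choose, fun x y' he => ?_⟩
    obtain ⟨hy, hval⟩ := aux x
    rw [← hval]
    exact (appCongr (sq F) he.symm _ _).symm
  exact LinearPMap.isSelfAdjoint_def.mpr (le_antisymm le2 le1)

end SA
end FriedrichsAux


open FriedrichsAux

/-- If a semi-regular sequence `{φ_n}` (minimal with biorthogonal sequence `{ψ_n}`, and complete)
is a generalized Riesz system, then the Friedrichs extension `A_F` of the operator `S`
(`Sφ_n = ψ_n` on `span{φ_n}`) is a positive operator. -/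
theorem friedrichs_positive_of_GRS
    (φ ψ : ℕ → H)
    (hbi : ∀ n m, ⟪ψ n, φ m⟫ = if n = m then (1 : ℂ) else 0)
    (hcomp : Dense ((Submodule.span ℂ (Set.range φ) : Submodule ℂ H) : Set H))
    (S : H →ₗ.[ℂ] H)
    (hdom : S.domain = Submodule.span ℂ (Set.range φ))
    (hS : ∀ n, ∃ h : φ n ∈ S.domain, S ⟨φ n, h⟩ = ψ n)
    (AF sAF : H →ₗ.[ℂ] H) (hAF : IsFriedrichsExtOf AF sAF S)
    (hGRS : IsGRS φ) : AF.IsPositive := by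
  classical
  obtain ⟨hAFsa, hAFnn, hSAF, hsAFsa, hsAFnn, hsqrt, hmax⟩ := hAF
  obtain ⟨E, F, e, hEsa, hFsa, hEpos, hFpos, hEF, hFE, ⟨horth, hde⟩, hphi⟩ := hGRS
  choose h1 h2 hphiE using hphi
  -- each φ n lies in the domain of F and F φ n = e n
  have hphiF : ∀ n, φ n ∈ F.domain := by
    intro n
    rw [hphiE n]
    exact (hEF ⟨e n, h1 n⟩).choose
  have hFphi : ∀ n, F ⟨φ n, hphiF n⟩ = e n := by
    intro n
    rw [appCongr F (hphiE n) (hphiF n) (hEF ⟨e n, h1 n⟩).choose]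
    exact (hEF ⟨e n, h1 n⟩).choose_spec
  -- the biorthogonal sequence is `F e_n`
  have hpsi : ∀ n, ψ n = F ⟨e n, h2 n⟩ := by
    intro n
    have horthog : ∀ m, ⟪ψ n - F ⟨e n, h2 n⟩, φ m⟫ = 0 := by
      intro m
      rw [inner_sub_left, hbi n m]
      have hFen : ⟪F ⟨e n, h2 n⟩, φ m⟫ = if n = m then (1 : ℂ) else 0 := by
        obtain ⟨hm, hFEm⟩ := hEF ⟨e m, h1 m⟩
        have : ⟪F ⟨e n, h2 n⟩, φ m⟫
            = ⟪F ⟨e n, h2 n⟩, ((⟨E ⟨e m, h1 m⟩, hm⟩ : F.domain) : H)⟫ := by rw [hphiE m]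
        rw [this, symm_of_sa hFsa ⟨e n, h2 n⟩ ⟨E ⟨e m, h1 m⟩, hm⟩, hFEm]
        exact orthonormal_iff_ite.mp horth n m
      rw [hFen, sub_self]
    have hz : ψ n - F ⟨e n, h2 n⟩ = 0 := by
      apply hcomp.eq_zero_of_inner_left (𝕜 := ℂ)
      intro v hv
      show ⟪ψ n - F ⟨e n, h2 n⟩, v⟫ = 0
      refine Submodule.span_induction ?_ ?_ ?_ ?_ hv
      · rintro y ⟨m, rfl⟩
        exact horthog m
      · exact inner_zero_right _
      · intro a b _ _ ha hb
        rw [inner_add_right, ha, hb, add_zero]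
      · intro c a _ ha
        rw [inner_smul_right, ha, mul_zero]
    exact sub_eq_zero.mp hz
  -- the candidate comparison operator `B = F²`
  have hBsa : IsSelfAdjoint (sq F) := sq_isSelfAdjoint hFsa
  have hBnn : (sq F).IsNonneg := by
    intro x
    have h := inner_sq_self hFsa x
    have h' : ⟪sq F x, (x : H)⟫
        = ⟪F ⟨(x : H), x.2.choose⟩, F ⟨(x : H), x.2.choose⟩⟫ := by
      rw [← inner_conj_symm, h, inner_conj_symm]
    rw [h', inner_self_eq_norm_sq_to_K]
    simp [← Complex.ofReal_pow]
  have hphiB : ∀ n, φ n ∈ (sq F).domain := by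
    intro n
    exact ⟨hphiF n, memCongr F (hFphi n).symm (h2 n)⟩
  have hBphi : ∀ n, ∀ hn : φ n ∈ (sq F).domain, sq F ⟨φ n, hn⟩ = ψ n := by
    intro n hn
    rw [sq_apply F hn (hphiF n) (memCongr F (hFphi n).symm (h2 n)),
      appCongr F (hFphi n) _ (h2 n), hpsi n]
  have hSB : S ≤ sq F := by
    have hspan : Submodule.span ℂ (Set.range φ) ≤ (sq F).domain := by
      rw [Submodule.span_le]
      rintro y ⟨n, rfl⟩
      exact hphiB n
    have hagree : ∀ v (hv : v ∈ Submodule.span ℂ (Set.range φ)),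
        ∀ (ha : v ∈ S.domain) (hb : v ∈ (sq F).domain), S ⟨v, ha⟩ = sq F ⟨v, hb⟩ := by
      intro v hv
      refine Submodule.span_induction ?_ ?_ ?_ ?_ hv
      · rintro y ⟨n, rfl⟩ ha hb
        obtain ⟨hn, hval⟩ := hS n
        rw [appCongr S rfl ha hn, hval, hBphi n hb]
      · intro ha hb
        rw [appCongr S rfl ha S.domain.zero_mem, appCongr (sq F) rfl hb (sq F).domain.zero_mem]
        calc S ⟨0, S.domain.zero_mem⟩ = S 0 := congrArg _ (Subtype.ext rfl)
          _ = 0 := S.map_zero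
          _ = sq F 0 := (sq F).map_zero.symm
          _ = sq F ⟨0, (sq F).domain.zero_mem⟩ := congrArg _ (Subtype.ext rfl)
      · intro a b hma hmb iha ihb hab hab'
        have ha : a ∈ S.domain := hdom ▸ hma
        have hb : b ∈ S.domain := hdom ▸ hmb
        have ha' : a ∈ (sq F).domain := hspan hma
        have hb' : b ∈ (sq F).domain := hspan hmb
        calc S ⟨a + b, hab⟩ = S (⟨a, ha⟩ + ⟨b, hb⟩) := congrArg _ (Subtype.ext rfl)
          _ = S ⟨a, ha⟩ + S ⟨b, hb⟩ := S.map_add _ _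
          _ = sq F ⟨a, ha'⟩ + sq F ⟨b, hb'⟩ := by rw [iha ha ha', ihb hb hb']
          _ = sq F (⟨a, ha'⟩ + ⟨b, hb'⟩) := ((sq F).map_add _ _).symm
          _ = sq F ⟨a + b, hab'⟩ := congrArg _ (Subtype.ext rfl)
      · intro c a hma iha hca hca'
        have ha : a ∈ S.domain := hdom ▸ hma
        have ha' : a ∈ (sq F).domain := hspan hma
        calc S ⟨c • a, hca⟩ = S (c • ⟨a, ha⟩) := congrArg _ (Subtype.ext rfl)
          _ = c • S ⟨a, ha⟩ := S.map_smul _ _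
          _ = c • sq F ⟨a, ha'⟩ := by rw [iha ha ha']
          _ = sq F (c • ⟨a, ha'⟩) := ((sq F).map_smul _ _).symm
          _ = sq F ⟨c • a, hca'⟩ := congrArg _ (Subtype.ext rfl)
    refine ⟨hdom ▸ hspan, ?_⟩
    intro x y hxy
    have hx' : (x : H) ∈ Submodule.span ℂ (Set.range φ) := hdom ▸ x.2
    have := hagree (x : H) hx' x.2 (hxy ▸ y.2)
    rw [show S x = S ⟨(x : H), x.2⟩ from rfl, this]
    exact appCongr (sq F) hxy _ _
  have hFnn : F.IsNonneg := by
    intro x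
    by_cases hx : (x : H) = 0
    · rw [hx, inner_zero_right]; simp
    · exact le_of_lt (hFpos x hx)
  have hsqrtFB : IsSqrtOf F (sq F) :=
    ⟨fun x => Iff.rfl, fun x hx hx2 => sq_apply F x.2 hx hx2⟩
  have hform : FormGE sAF F := hmax (sq F) F hBsa hBnn hSB hFsa hFnn hsqrtFB
  -- conclude positivity
  intro f hf0
  obtain ⟨hfs, hfs2⟩ := (hsqrt.1 (f : H)).mp f.2
  have hAFf : AF f = sAF ⟨sAF ⟨(f : H), hfs⟩, hfs2⟩ := hsqrt.2 f hfs hfs2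
  have hinner : ⟪AF f, (f : H)⟫ = ⟪sAF ⟨(f : H), hfs⟩, sAF ⟨(f : H), hfs⟩⟫ := by
    rw [hAFf]
    exact symm_of_sa hsAFsa ⟨sAF ⟨(f : H), hfs⟩, hfs2⟩ ⟨(f : H), hfs⟩
  have hne : sAF ⟨(f : H), hfs⟩ ≠ 0 := by
    intro h0
    have hfF : (f : H) ∈ F.domain := hform.1 hfs
    have hb := hform.2 ⟨(f : H), hfs⟩ hfF
    rw [h0, norm_zero] at hb
    have hF0 : F ⟨(f : H), hfF⟩ = 0 := by
      rwa [norm_le_zero_iff] at hb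
    have hpos := hFpos ⟨(f : H), hfF⟩ hf0
    rw [hF0, inner_zero_left] at hpos
    simp at hpos
  rw [hinner, inner_self_eq_norm_sq_to_K]
  simpa [← Complex.ofReal_pow] using pow_pos (norm_pos_iff.mpr hne) 2
end
end

section
/- Let {φ_n} be a semi-regular sequence with associated symmetric operator S. The Friedrichs extension A_F of S is positive if and only if the closure S̄ of S is positive and the conditions lim_{n→∞} ⟨S̄f_n, f_n⟩ = 0 and lim_{n→∞} f_n = g (with f_n ∈ D(S̄)) imply g = 0. -/
open scoped ComplexInnerProductSpace
open Filter Topology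

noncomputable section

variable {H : Type*} [NormedAddCommGroup H] [InnerProductSpace ℂ H] [CompleteSpace H]

open scoped ComplexConjugate Pointwise

/-- The adjoint of a densely defined operator is closed. -/
theorem adjoint_isClosed' (T : H →ₗ.[ℂ] H) (hT : Dense (T.domain : Set H)) :
    T.adjoint.IsClosed := by
  have hgraph : (T.adjoint.graph : Set (H × H)) =
      ⋂ x : T.domain, {p : H × H | ⟪p.2, (x : H)⟫ = ⟪p.1, T x⟫} := by
    ext p
    simp only [SetLike.mem_coe, LinearPMap.mem_graph_iff, Set.mem_iInter, Set.mem_setOf_eq]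
    constructor
    · rintro ⟨y, hy1, hy2⟩ x
      rw [← hy1, ← hy2]
      exact (LinearPMap.adjoint_isFormalAdjoint hT) y x
    · intro hp
      have hmem : p.1 ∈ T.adjoint.domain :=
        LinearPMap.mem_adjoint_domain_of_exists _ ⟨p.2, fun x => hp x⟩
      exact ⟨⟨p.1, hmem⟩, rfl, LinearPMap.adjoint_apply_eq hT _ (fun x => hp x)⟩
  show IsClosed (T.adjoint.graph : Set (H × H))
  rw [hgraph]
  refine isClosed_iInter fun x => ?_
  exact isClosed_eq (Continuous.inner continuous_snd continuous_const)
    (Continuous.inner continuous_fst continuous_const)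

theorem isSelfAdjoint_isClosed {A : H →ₗ.[ℂ] H} (hA : IsSelfAdjoint A) : A.IsClosed := by
  have hd := hA.dense_domain
  rw [LinearPMap.isSelfAdjoint_def] at hA
  rw [← hA]
  exact adjoint_isClosed' A hd

theorem isSelfAdjoint_symm {A : H →ₗ.[ℂ] H} (hA : IsSelfAdjoint A)
    (x y : A.domain) : ⟪A x, (y : H)⟫ = ⟪(x : H), A y⟫ := by
  have hd := hA.dense_domain
  have h := LinearPMap.adjoint_isFormalAdjoint hd
  rw [LinearPMap.isSelfAdjoint_def] at hA
  rw [hA] at h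
  exact h x y

theorem closure_eq_self {A : H →ₗ.[ℂ] H} (hA : A.IsClosed) : A.closure = A := by
  refine LinearPMap.eq_of_eq_graph ?_
  rw [← hA.isClosable.graph_closure_eq_closure_graph]
  exact IsClosed.submodule_topologicalClosure_eq hA

theorem re_inner_eq_norm_sqrt_sq {A sA : H →ₗ.[ℂ] H} (hsA : IsSelfAdjoint sA)
    (hsq : IsSqrtOf sA A) (f : A.domain) (hx : (f : H) ∈ sA.domain) :
    (⟪A f, (f : H)⟫).re = ‖sA ⟨(f : H), hx⟩‖ ^ 2 := by
  obtain ⟨hx', hx2⟩ := (hsq.1 (f : H)).mp f.2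
  have hval : A f = sA ⟨sA ⟨(f : H), hx⟩, hx2⟩ := hsq.2 f hx hx2
  rw [hval, isSelfAdjoint_symm hsA ⟨sA ⟨(f : H), hx⟩, hx2⟩ ⟨(f : H), hx⟩]
  have h5 := inner_self_eq_norm_sq (𝕜 := ℂ) (sA ⟨(f : H), hx⟩)
  simp only [RCLike.re_to_complex] at h5
  exact h5

section Lambda

variable (φ ψ : ℕ → H)

theorem phi_li (hbi : ∀ n m, ⟪ψ n, φ m⟫ = if n = m then (1 : ℂ) else 0) :
    LinearIndependent ℂ φ := by
  rw [linearIndependent_iff']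
  intro s g hsum i hi
  have h0 : ⟪ψ i, ∑ j ∈ s, g j • φ j⟫ = 0 := by rw [hsum, inner_zero_right]
  rw [inner_sum] at h0
  simp only [inner_smul_right, hbi, mul_ite, mul_one, mul_zero] at h0
  rw [Finset.sum_ite_eq s i g] at h0
  simpa [hi] using h0

theorem exists_Lambda
    (hbi : ∀ n m, ⟪ψ n, φ m⟫ = if n = m then (1 : ℂ) else 0)
    (S : H →ₗ.[ℂ] H)
    (hdom : S.domain = Submodule.span ℂ (Set.range φ))
    (hS : ∀ n, ∃ h : φ n ∈ S.domain, S ⟨φ n, h⟩ = ψ n) :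
    ∃ Λ : S.domain →ₗ[ℂ] H, ∀ x y : S.domain, ⟪S x, (y : H)⟫ = ⟪Λ x, Λ y⟫ := by
  classical
  have hli := phi_li φ ψ hbi
  set e : ℕ → H := InnerProductSpace.gramSchmidtNormed ℂ φ with he_def
  have he : Orthonormal ℂ e := InnerProductSpace.gramSchmidtNormed_orthonormal hli
  have he' := orthonormal_iff_ite.mp he
  set basS : Module.Basis ℕ ℂ S.domain :=
    (Module.Basis.span hli).map (LinearEquiv.ofEq _ _ hdom).symm with hbasS_def
  have hbasS_coe : ∀ n, ((basS n : S.domain) : H) = φ n := by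
    intro n
    simp only [hbasS_def, Module.Basis.map_apply]
    have : ((LinearEquiv.ofEq _ _ hdom).symm ((Module.Basis.span hli) n) : H)
        = ((Module.Basis.span hli) n : H) := rfl
    rw [this, Module.Basis.span_apply]
  set Λ : S.domain →ₗ[ℂ] H := basS.constr ℂ e with hΛ_def
  have hΛbas : ∀ n, Λ (basS n) = e n := fun n => Module.Basis.constr_basis basS ℂ e n
  have hSbas : ∀ n, S (basS n) = ψ n := by
    intro n
    obtain ⟨hm, hSm⟩ := hS n
    have : basS n = ⟨φ n, hm⟩ := Subtype.ext (hbasS_coe n)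
    rw [this]
    exact hSm
  -- step A : ∀ n a, ⟪ψ n, a⟫ = ⟪e n, Λ a⟫
  have stepA : ∀ (n : ℕ) (a : S.domain), ⟪ψ n, (a : H)⟫ = ⟪e n, Λ a⟫ := by
    intro n a
    have h := Module.Basis.ext (f₁ := ((innerSL ℂ (ψ n)).toLinearMap).comp S.domain.subtype)
      (f₂ := ((innerSL ℂ (e n)).toLinearMap).comp Λ) (b := basS) ?_
    · exact congrFun (congrArg (fun (L : S.domain →ₗ[ℂ] ℂ) => ⇑L) h) a
    · intro m
      simp only [LinearMap.comp_apply, ContinuousLinearMap.coe_coe, innerSL_apply_apply,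
        Submodule.subtype_apply, hbasS_coe, hΛbas]
      rw [hbi, he']
  -- step K : ∀ a b, ⟪a, S b⟫ = ⟪Λ a, Λ b⟫
  have stepK : ∀ a b : S.domain, ⟪(a : H), S b⟫ = ⟪Λ a, Λ b⟫ := by
    intro a b
    have h := Module.Basis.ext (f₁ := ((innerSL ℂ ((a : H))).toLinearMap).comp S.toFun)
      (f₂ := ((innerSL ℂ (Λ a)).toLinearMap).comp Λ) (b := basS) ?_
    · exact congrFun (congrArg (fun (L : S.domain →ₗ[ℂ] ℂ) => ⇑L) h) b
    · intro m
      simp only [LinearMap.comp_apply, ContinuousLinearMap.coe_coe, innerSL_apply_apply, hΛbas]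
      have : S.toFun (basS m) = S (basS m) := rfl
      rw [this, hSbas]
      calc ⟪(a : H), ψ m⟫ = conj ⟪ψ m, (a : H)⟫ := (inner_conj_symm _ _).symm
        _ = conj ⟪e m, Λ a⟫ := by rw [stepA]
        _ = ⟪Λ a, e m⟫ := inner_conj_symm _ _
  refine ⟨Λ, fun x y => ?_⟩
  calc ⟪S x, (y : H)⟫ = conj ⟪(y : H), S x⟫ := (inner_conj_symm _ _).symm
    _ = conj ⟪Λ y, Λ x⟫ := by rw [stepK]
    _ = ⟪Λ x, Λ y⟫ := inner_conj_symm _ _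

end Lambda

open scoped ComplexConjugate Pointwise
set_option maxHeartbeats 1000000
set_option synthInstance.maxHeartbeats 400000

theorem inner_orthogonalProjection_left_eq_right {E : Type*} [NormedAddCommGroup E]
    [InnerProductSpace ℂ E] (K : Submodule ℂ E) [K.HasOrthogonalProjection] (u v : E) :
    ⟪(K.orthogonalProjectionOnto u : E), v⟫ = ⟪u, (K.orthogonalProjectionOnto v : E)⟫ :=
  K.inner_starProjection_left_eq_right u v

section Core

theorem dense_range_symm_inj (T : H →L[ℂ] H)
    (hsymm : ∀ x y : H, ⟪T x, y⟫ = ⟪x, T y⟫) (hinj : Function.Injective T) :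
    Dense ((LinearMap.range (T : H →ₗ[ℂ] H) : Submodule ℂ H) : Set H) := by
  rw [Submodule.dense_iff_topologicalClosure_eq_top,
    Submodule.topologicalClosure_eq_top_iff, Submodule.eq_bot_iff]
  intro z hz
  have hz' : ∀ u : H, ⟪u, T z⟫ = 0 := by
    intro u
    have := hz (T u) (LinearMap.mem_range_self _ u)
    rwa [hsymm] at this
  have hTz : T z = 0 := by
    have := hz' (T z)
    rwa [inner_self_eq_zero] at this
  exact hinj (by rw [hTz, map_zero])

theorem spec_le_one' (C : H →L[ℂ] H) (h1 : C ≤ 1) : ∀ t ∈ spectrum ℝ C, t ≤ 1 := by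
  intro t ht
  have h0 : (0:H→L[ℂ]H) ≤ 1 - C := sub_nonneg.mpr h1
  have hmem : (1:ℝ) - t ∈ ({(1:ℝ)} : Set ℝ) - spectrum ℝ C := Set.sub_mem_sub rfl ht
  rw [spectrum.singleton_sub_eq, map_one] at hmem
  have := spectrum_nonneg_of_nonneg h0 hmem
  linarith

theorem exists_good_ext (S : H →ₗ.[ℂ] H) (hdense : Dense (S.domain : Set H))
    (Λ : S.domain →ₗ[ℂ] H)
    (hkey : ∀ x y : S.domain, ⟪S x, (y : H)⟫ = ⟪Λ x, Λ y⟫) :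
    ∃ B sB : H →ₗ.[ℂ] H, IsSelfAdjoint B ∧ B.IsNonneg ∧ S ≤ B ∧
      IsSelfAdjoint sB ∧ sB.IsNonneg ∧ IsSqrtOf sB B ∧
      ∀ f : sB.domain, sB f = 0 →
        ∃ x : ℕ → S.domain,
          Tendsto (fun n => ((x n : H))) atTop (𝓝 (f : H)) ∧
          Tendsto (fun n => (⟪S (x n), ((x n) : H)⟫).re) atTop (𝓝 0) := by
  classical
  set W := WithLp 2 (H × H) with hW_def
  set ι : H →L[ℂ] W :=
    ((WithLp.prodContinuousLinearEquiv 2 ℂ H H).symm : (H × H) →L[ℂ] W).comp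
      (ContinuousLinearMap.inl ℂ H H) with hι_def
  have hι1 : ∀ x : H, (ι x).fst = x := fun _ => rfl
  have hι2 : ∀ x : H, (ι x).snd = 0 := fun _ => rfl
  set Γ : S.domain →ₗ[ℂ] W :=
    ((WithLp.linearEquiv 2 ℂ (H × H)).symm.toLinearMap).comp (S.domain.subtype.prod Λ)
    with hΓ_def
  have hΓ1 : ∀ a : S.domain, (Γ a).fst = (a : H) := fun _ => rfl
  have hΓ2 : ∀ a : S.domain, (Γ a).snd = Λ a := fun _ => rfl
  set G : Submodule ℂ W := (LinearMap.range Γ).topologicalClosure with hG_def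
  haveI : CompleteSpace G :=
    (Submodule.isClosed_topologicalClosure (LinearMap.range Γ)).completeSpace_coe
  set P := G.orthogonalProjectionOnto with hP_def
  set C : H →L[ℂ] H := (ContinuousLinearMap.fst ℂ H H).comp
    (((WithLp.prodContinuousLinearEquiv 2 ℂ H H) : W →L[ℂ] H × H).comp
      (G.subtypeL.comp (P.comp ι))) with hC_def
  have hCapp : ∀ x : H, C x = ((P (ι x) : W)).fst := fun _ => rfl
  have hinner : ∀ u v : W, ⟪u, v⟫ = ⟪u.fst, v.fst⟫ + ⟪u.snd, v.snd⟫ :=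
    fun u v => WithLp.prod_inner_apply u v
  have hGmem : ∀ a : S.domain, (Γ a : W) ∈ G :=
    fun a => Submodule.le_topologicalClosure _ (LinearMap.mem_range_self Γ a)
  have hPfix : ∀ v : W, v ∈ G → ((P v : W)) = v := by
    intro v hv
    have := Submodule.orthogonalProjection_mem_subspace_eq_self (K := G) ⟨v, hv⟩
    rw [show ((⟨v, hv⟩ : G) : W) = v from rfl] at this
    rw [this]
  have hιinner_r : ∀ (v : W) (x : H), ⟪v, ι x⟫ = ⟪v.fst, x⟫ := by
    intro v x
    rw [hinner, hι1, hι2, inner_zero_right, add_zero]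
  have hιinner_l : ∀ (x : H) (v : W), ⟪ι x, v⟫ = ⟪x, v.fst⟫ := by
    intro x v
    rw [hinner, hι1, hι2, inner_zero_left, add_zero]
  have hCsymm : ∀ x y : H, ⟪C x, y⟫ = ⟪x, C y⟫ := by
    intro x y
    rw [hCapp, hCapp, ← hιinner_r (P (ι x) : W) y, ← hιinner_l x (P (ι y) : W)]
    exact inner_orthogonalProjection_left_eq_right G (ι x) (ι y)
  have hCsa : IsSelfAdjoint C :=
    ContinuousLinearMap.isSelfAdjoint_iff_isSymmetric.mpr (fun x y => hCsymm x y)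
  have hCre : ∀ x : H, (⟪x, C x⟫).re = ‖(P (ι x) : W)‖ ^ 2 := by
    intro x
    have h1 : ⟪((P (ι x)) : W), ((P (ι x)) : W)⟫ = ⟪ι x, ((P (((P (ι x)) : W))) : W)⟫ :=
      inner_orthogonalProjection_left_eq_right G _ _
    rw [hPfix _ (P (ι x)).2] at h1
    have h2 : ⟪x, C x⟫ = ⟪ι x, ((P (ι x)) : W)⟫ := by rw [hCapp, ← hιinner_l]
    rw [h2, ← h1]
    have h5 := inner_self_eq_norm_sq (𝕜 := ℂ) ((P (ι x)) : W); simp only [RCLike.re_to_complex] at h5; exact h5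
  have hιnorm : ∀ x : H, ‖ι x‖ = ‖x‖ := by
    intro x
    have h1 : ‖ι x‖ ^ 2 = ‖x‖ ^ 2 := by
      rw [WithLp.prod_norm_sq_eq_of_L2 (ι x), hι1, hι2, norm_zero]
      ring
    nlinarith [norm_nonneg (ι x), norm_nonneg x]
  have hPle : ∀ v : W, ‖(P v : W)‖ ≤ ‖v‖ := by
    intro v
    calc ‖(P v : W)‖ ≤ ‖(P : W →L[ℂ] G)‖ * ‖v‖ := (P : W →L[ℂ] G).le_opNorm v
      _ ≤ 1 * ‖v‖ := by
          have := Submodule.orthogonalProjection_norm_le G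
          nlinarith [norm_nonneg v]
      _ = ‖v‖ := one_mul _
  -- order facts
  have hC0 : (0 : H →L[ℂ] H) ≤ C := by
    rw [ContinuousLinearMap.nonneg_iff_isPositive]
    refine ⟨ContinuousLinearMap.isSelfAdjoint_iff_isSymmetric.mp hCsa, fun x => ?_⟩
    have : (0:ℝ) ≤ (⟪x, C x⟫).re := by rw [hCre]; positivity
    simpa [ContinuousLinearMap.reApplyInnerSelf, inner_re_symm] using this
  have hC1 : C ≤ 1 := by
    rw [← sub_nonneg, ContinuousLinearMap.nonneg_iff_isPositive]
    refine ⟨ContinuousLinearMap.isSelfAdjoint_iff_isSymmetric.mp ((IsSelfAdjoint.one _).sub hCsa), fun x => ?_⟩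
    have h1 : (⟪x, C x⟫).re ≤ ‖x‖ ^ 2 := by
      rw [hCre]
      have := hPle (ι x)
      rw [hιnorm] at this
      nlinarith [norm_nonneg (P (ι x) : W)]
    have h2 : ((⟪x, (1 - C) x⟫ : ℂ)).re = ‖x‖^2 - (⟪x, C x⟫).re := by
      simp only [ContinuousLinearMap.sub_apply, ContinuousLinearMap.one_apply,
        inner_sub_right]
      have h3 : (⟪x, x⟫ : ℂ).re = ‖x‖ ^ 2 := by
        simpa using inner_self_eq_norm_sq (𝕜 := ℂ) x
      rw [Complex.sub_re, h3]
    have h4 : (0:ℝ) ≤ (⟪x, (1 - C) x⟫).re := by rw [h2]; linarith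
    show (0:ℝ) ≤ RCLike.re ⟪(1 - C) x, x⟫; rw [inner_re_symm]; exact h4
  have hCinj : Function.Injective C := by
    intro x y hxy
    suffices h : ∀ z : H, C z = 0 → z = 0 by
      have := h (x - y) (by rw [map_sub, hxy, sub_self])
      exact sub_eq_zero.mp this
    intro z hz
    have h1 : ‖(P (ι z) : W)‖ ^ 2 = 0 := by
      rw [← hCre, hz, inner_zero_right, Complex.zero_re]
    have h2 : ((P (ι z)) : W) = 0 := by
      rw [pow_eq_zero_iff (by norm_num)] at h1
      exact norm_eq_zero.mp h1
    have h3 : ∀ a : S.domain, ⟪z, (a : H)⟫ = 0 := by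
      intro a
      have h4 : ⟪ι z, (Γ a : W)⟫ = 0 := by
        conv_lhs => rw [← hPfix _ (hGmem a)]
        rw [← inner_orthogonalProjection_left_eq_right G, h2, inner_zero_left]
      rw [hιinner_l, hΓ1] at h4
      exact h4
    exact hdense.eq_zero_of_inner_left (h := fun v hv => h3 ⟨v, hv⟩)
  -- the key relation C (x + S x) = x
  have hCS : ∀ x : S.domain, C ((x : H) + S x) = (x : H) := by
    intro x
    have hproj : ((P (ι ((x : H) + S x))) : W) = Γ x := by
      apply Submodule.eq_starProjection_of_mem_of_inner_eq_zero (hGmem x)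
      intro w hw
      have hsub : LinearMap.range Γ ≤ LinearMap.ker ((innerSL ℂ (ι ((x : H) + S x) - Γ x)) : W →ₗ[ℂ] ℂ) := by
        rintro _ ⟨a, rfl⟩
        simp only [LinearMap.mem_ker, ContinuousLinearMap.coe_coe, innerSL_apply_apply]
        have e1 : ⟪ι ((x : H)), (Γ a : W)⟫ = ⟪(x : H), (a : H)⟫ := by rw [hιinner_l, hΓ1]
        have e2 : ⟪ι (S x), (Γ a : W)⟫ = ⟪Λ x, Λ a⟫ := by rw [hιinner_l, hΓ1, hkey]
        have e3 : ⟪(Γ x : W), (Γ a : W)⟫ = ⟪(x : H), (a : H)⟫ + ⟪Λ x, Λ a⟫ := by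
          rw [hinner, hΓ1, hΓ2, hΓ1, hΓ2]
        rw [map_add, inner_sub_left, inner_add_left, e1, e2, e3]
        ring
      have hG_le : G ≤ LinearMap.ker ((innerSL ℂ (ι ((x : H) + S x) - Γ x)) : W →ₗ[ℂ] ℂ) :=
        Submodule.topologicalClosure_minimal _ hsub (ContinuousLinearMap.isClosed_ker _)
      exact hG_le hw
    rw [hCapp, hproj, hΓ1]

  -- square roots via continuous functional calculus
  set sC : H →L[ℂ] H := cfc (fun t : ℝ => Real.sqrt t) C with hsC_def
  set Dd : H →L[ℂ] H := cfc (fun t : ℝ => Real.sqrt (1 - t)) C with hDd_def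
  have hspec0 : ∀ t ∈ spectrum ℝ C, 0 ≤ t := fun t ht => spectrum_nonneg_of_nonneg hC0 ht
  have hspec1 := spec_le_one' C hC1
  have hsCsa : IsSelfAdjoint sC := IsSelfAdjoint.cfc
  have hDsa : IsSelfAdjoint Dd := IsSelfAdjoint.cfc
  have hswap : ∀ f g : ℝ → ℝ, ContinuousOn f (spectrum ℝ C) → ContinuousOn g (spectrum ℝ C) →
      cfc f C * cfc g C = cfc g C * cfc f C := by
    intro f g hf hg
    rw [← cfc_mul f g C hf hg, ← cfc_mul g f C hg hf]
    exact cfc_congr fun t _ => mul_comm _ _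
  have hCid : cfc (fun t : ℝ => t) C = C := cfc_id' ℝ C
  have hsC2 : ∀ u, sC (sC u) = C u := by
    intro u
    have h : sC * sC = C := by
      calc sC * sC = cfc (fun t : ℝ => Real.sqrt t * Real.sqrt t) C := (cfc_mul _ _ C).symm
        _ = cfc (fun t : ℝ => t) C := cfc_congr (fun t ht => Real.mul_self_sqrt (hspec0 t ht))
        _ = C := hCid
    rw [← ContinuousLinearMap.mul_apply, h]
  have hD2 : ∀ u, Dd (Dd u) = u - C u := by
    intro u
    have h : Dd * Dd = 1 - C := by
      calc Dd * Dd = cfc (fun t : ℝ => Real.sqrt (1-t) * Real.sqrt (1-t)) C :=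
            (cfc_mul _ _ C).symm
        _ = cfc (fun t : ℝ => (1:ℝ) - t) C := cfc_congr (fun t ht =>
            Real.mul_self_sqrt (by linarith [hspec1 t ht]))
        _ = 1 - C := by
            rw [cfc_sub (fun _ => (1:ℝ)) (fun t => t) C, cfc_const_one ℝ C, cfc_id' ℝ C]
    rw [← ContinuousLinearMap.mul_apply, h]
    simp [ContinuousLinearMap.sub_apply]
  have hcommu : ∀ u, sC (Dd u) = Dd (sC u) := by
    intro u
    have h := hswap (fun t : ℝ => Real.sqrt t) (fun t : ℝ => Real.sqrt (1-t))
      (by fun_prop) (by fun_prop)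
    rw [← hsC_def, ← hDd_def] at h
    rw [← ContinuousLinearMap.mul_apply, h, ContinuousLinearMap.mul_apply]
  have hCDu : ∀ u, C (Dd u) = Dd (C u) := by
    intro u
    have h := hswap (fun t : ℝ => t) (fun t : ℝ => Real.sqrt (1-t))
      (by fun_prop) (by fun_prop)
    rw [hCid, ← hDd_def] at h
    rw [← ContinuousLinearMap.mul_apply, h, ContinuousLinearMap.mul_apply]
  have hE0 : (0 : H →L[ℂ] H) ≤ sC * Dd := by
    have h : sC * Dd = cfc (fun t : ℝ => Real.sqrt t * Real.sqrt (1-t)) C := (cfc_mul _ _ C).symm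
    rw [h]
    exact cfc_nonneg (fun t _ => mul_nonneg (Real.sqrt_nonneg _) (Real.sqrt_nonneg _))
  have hsCsymm : ∀ x y : H, ⟪sC x, y⟫ = ⟪x, sC y⟫ :=
    fun x y => ContinuousLinearMap.isSelfAdjoint_iff_isSymmetric.mp hsCsa x y
  have hDsymm : ∀ x y : H, ⟪Dd x, y⟫ = ⟪x, Dd y⟫ :=
    fun x y => ContinuousLinearMap.isSelfAdjoint_iff_isSymmetric.mp hDsa x y
  have hsCinj : Function.Injective sC := by
    intro x y hxy
    apply hCinj
    rw [← hsC2 x, ← hsC2 y, hxy]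
  -- the unbounded operators B and sB
  set Cl : H →ₗ[ℂ] H := (C : H →ₗ[ℂ] H) with hCl_def
  set sCl : H →ₗ[ℂ] H := (sC : H →ₗ[ℂ] H) with hsCl_def
  have hClapp : ∀ u, Cl u = C u := fun _ => rfl
  have hsClapp : ∀ u, sCl u = sC u := fun _ => rfl
  set eqC : H ≃ₗ[ℂ] LinearMap.range Cl := LinearEquiv.ofInjective Cl hCinj with heqC_def
  set eqsC : H ≃ₗ[ℂ] LinearMap.range sCl := LinearEquiv.ofInjective sCl hsCinj with heqsC_def
  set B : H →ₗ.[ℂ] H :=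
    ⟨LinearMap.range Cl, (LinearMap.id - Cl).comp eqC.symm.toLinearMap⟩ with hB_def
  set sB : H →ₗ.[ℂ] H :=
    ⟨LinearMap.range sCl, Dd.toLinearMap.comp eqsC.symm.toLinearMap⟩ with hsB_def
  have hBapp : ∀ (x : B.domain) (u : H), Cl u = (x : H) → B x = u - C u := by
    intro x u hu
    have hx : x = eqC u := Subtype.ext (by rw [← hu]; rfl)
    show ((LinearMap.id - Cl : H →ₗ[ℂ] H)) (eqC.symm x) = u - C u
    rw [hx, LinearEquiv.symm_apply_apply, LinearMap.sub_apply, LinearMap.id_apply, hClapp]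
  have hsBapp : ∀ (x : sB.domain) (u : H), sCl u = (x : H) → sB x = Dd u := by
    intro x u hu
    have hx : x = eqsC u := Subtype.ext (by rw [← hu]; rfl)
    show Dd.toLinearMap (eqsC.symm x) = Dd u
    rw [hx, LinearEquiv.symm_apply_apply]
    rfl
  have hBdense : Dense ((B.domain : Submodule ℂ H) : Set H) :=
    dense_range_symm_inj C hCsymm hCinj
  have hsBdense : Dense ((sB.domain : Submodule ℂ H) : Set H) :=
    dense_range_symm_inj sC hsCsymm hsCinj
  -- B is self-adjoint
  have hBsa : IsSelfAdjoint B := by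
    rw [LinearPMap.isSelfAdjoint_def]
    have hFA := LinearPMap.adjoint_isFormalAdjoint (T := B) hBdense
    have hsub : ∀ y : B.adjoint.domain, ∃ u : H, Cl u = (y : H) ∧ B.adjoint y = u - C u := by
      intro y
      have hz : ∀ x : B.domain, ⟪B.adjoint y, (x : H)⟫ = ⟪(y : H), B x⟫ := fun x => hFA y x
      have hz' : ∀ u : H, ⟪B.adjoint y, C u⟫ = ⟪(y : H), u - C u⟫ := by
        intro u
        have hm : C u ∈ B.domain := ⟨u, rfl⟩
        have := hz ⟨C u, hm⟩
        rwa [hBapp ⟨C u, hm⟩ u rfl] at this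
      have hkey2 : C (B.adjoint y + (y : H)) = (y : H) := by
        have hall : ∀ u : H, ⟪C (B.adjoint y + (y : H)) - (y : H), u⟫ = 0 := by
          intro u
          rw [inner_sub_left, map_add, inner_add_left, hCsymm (B.adjoint y) u, hz' u,
            inner_sub_right, hCsymm (y : H) u]
          ring
        have h0 := hall (C (B.adjoint y + (y : H)) - (y : H))
        rw [inner_self_eq_zero] at h0
        exact sub_eq_zero.mp h0
      refine ⟨B.adjoint y + (y : H), by rw [hClapp, hkey2], ?_⟩
      rw [hkey2, add_sub_cancel_right]
    refine LinearPMap.ext ?_ ?_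
    · apply le_antisymm
      · intro y hy
        obtain ⟨u, hu, _⟩ := hsub ⟨y, hy⟩
        exact ⟨u, hu⟩
      · intro y hy
        obtain ⟨u, hu⟩ := hy
        apply LinearPMap.mem_adjoint_domain_of_exists
        refine ⟨u - C u, fun x => ?_⟩
        obtain ⟨v, hv⟩ := x.2
        rw [hBapp x v hv, ← hv, ← hu, hClapp, hClapp, inner_sub_left, inner_sub_right,
          ← hCsymm u v]
    · intro x hx hy
      obtain ⟨u, hu, hval⟩ := hsub ⟨x, hx⟩
      rw [hval, hBapp ⟨x, hy⟩ u hu]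
  -- sB is self-adjoint
  have hsBsa : IsSelfAdjoint sB := by
    rw [LinearPMap.isSelfAdjoint_def]
    have hFA := LinearPMap.adjoint_isFormalAdjoint (T := sB) hsBdense
    have hsub : ∀ y : sB.adjoint.domain, ∃ u : H, sCl u = (y : H) ∧ sB.adjoint y = Dd u := by
      intro y
      have hz : ∀ x : sB.domain, ⟪sB.adjoint y, (x : H)⟫ = ⟪(y : H), sB x⟫ := fun x => hFA y x
      have hz' : ∀ u : H, ⟪sB.adjoint y, sC u⟫ = ⟪(y : H), Dd u⟫ := by
        intro u
        have hm : sC u ∈ sB.domain := ⟨u, rfl⟩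
        have := hz ⟨sC u, hm⟩
        rwa [hsBapp ⟨sC u, hm⟩ u rfl] at this
      have hzz : sC (sB.adjoint y) = Dd (y : H) := by
        have hall : ∀ u : H, ⟪sC (sB.adjoint y) - Dd (y : H), u⟫ = 0 := by
          intro u
          rw [inner_sub_left, hsCsymm (sB.adjoint y) u, hz' u, hDsymm (y : H) u, sub_self]
        have h0 := hall (sC (sB.adjoint y) - Dd (y : H))
        rw [inner_self_eq_zero] at h0
        exact sub_eq_zero.mp h0
      have hu0 : sCl (sC (y : H) + Dd (sB.adjoint y)) = (y : H) := by
        rw [hsClapp, map_add, hsC2, hcommu, hzz, hD2]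
        abel
      refine ⟨sC (y : H) + Dd (sB.adjoint y), hu0, ?_⟩
      rw [map_add, ← hcommu, ← hzz, hsC2, hD2]
      abel
    refine LinearPMap.ext ?_ ?_
    · apply le_antisymm
      · intro y hy
        obtain ⟨u, hu, _⟩ := hsub ⟨y, hy⟩
        exact ⟨u, hu⟩
      · intro y hy
        obtain ⟨u, hu⟩ := hy
        apply LinearPMap.mem_adjoint_domain_of_exists
        refine ⟨Dd u, fun x => ?_⟩
        obtain ⟨v, hv⟩ := x.2
        rw [hsBapp x v hv, ← hv, ← hu, hsClapp, hsClapp]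
        calc ⟪Dd u, sC v⟫ = ⟪sC (Dd u), v⟫ := (hsCsymm _ _).symm
          _ = ⟪Dd (sC u), v⟫ := by rw [hcommu]
          _ = ⟪sC u, Dd v⟫ := hDsymm _ _
    · intro x hx hy
      obtain ⟨u, hu, hval⟩ := hsub ⟨x, hx⟩
      rw [hval, hsBapp ⟨x, hy⟩ u hu]
  -- B is nonnegative
  have hBnn : B.IsNonneg := by
    intro f
    obtain ⟨u, hu⟩ := f.2
    rw [hBapp f u hu, ← hu, hClapp]
    have e1 : u - C u = Dd (Dd u) := (hD2 u).symm
    have e2 : C u = sC (sC u) := (hsC2 u).symm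
    rw [e1, e2]
    have hchain : ⟪Dd (Dd u), sC (sC u)⟫ = ⟪sC (Dd u), sC (Dd u)⟫ := by
      calc ⟪Dd (Dd u), sC (sC u)⟫ = ⟪sC (Dd (Dd u)), sC u⟫ := (hsCsymm _ _).symm
        _ = ⟪Dd (sC (Dd u)), sC u⟫ := by rw [hcommu]
        _ = ⟪sC (Dd u), Dd (sC u)⟫ := hDsymm _ _
        _ = ⟪sC (Dd u), sC (Dd u)⟫ := by rw [hcommu]
    rw [hchain]
    have h5 := inner_self_eq_norm_sq (𝕜 := ℂ) (sC (Dd u))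
    simp only [RCLike.re_to_complex] at h5
    rw [h5]
    positivity
  -- sB is nonnegative
  have hsBnn : sB.IsNonneg := by
    intro f
    obtain ⟨u, hu⟩ := f.2
    rw [hsBapp f u hu, ← hu, hsClapp]
    have h2 : ⟪Dd u, sC u⟫ = ⟪sC (Dd u), u⟫ := (hsCsymm (Dd u) u).symm
    rw [h2]
    have h1 := ((ContinuousLinearMap.nonneg_iff_isPositive _).mp hE0).2 u
    simpa [ContinuousLinearMap.reApplyInnerSelf, ContinuousLinearMap.mul_apply] using h1
  -- S ≤ B
  have hSB : S ≤ B := by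
    constructor
    · intro v hv
      exact ⟨((⟨v, hv⟩ : S.domain) : H) + S ⟨v, hv⟩, by rw [hClapp]; exact hCS ⟨v, hv⟩⟩
    · intro x y hxy
      have h := hBapp y ((x : H) + S x) (by rw [hClapp, hCS x, hxy])
      rw [h, hCS x]
      abel
  -- sB is a square root of B
  have hsqrt : IsSqrtOf sB B := by
    constructor
    · intro x
      constructor
      · rintro ⟨u, hu⟩
        have hmem1 : x ∈ sB.domain := ⟨sC u, by rw [hsClapp, hsC2, ← hClapp, hu]⟩
        refine ⟨hmem1, ?_⟩
        have h6 : sB ⟨x, hmem1⟩ = Dd (sC u) := by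
          apply hsBapp
          rw [hsClapp, hsC2, ← hClapp, hu]
        rw [h6, ← hcommu]
        exact ⟨Dd u, rfl⟩
      · rintro ⟨⟨u, hu⟩, h2⟩
        obtain ⟨w, hw⟩ := h2
        have hDu : Dd u = sC w := by
          rw [hsBapp ⟨x, ⟨u, hu⟩⟩ u hu] at hw
          rw [← hw, hsClapp]
        have hx : x = sC u := by rw [← hu, hsClapp]
        have hDx : Dd x = C w := by rw [hx, ← hcommu, hDu, hsC2]
        have hDDx : x - C x = C (Dd w) := by rw [← hD2, hDx, hCDu]
        refine ⟨x + Dd w, ?_⟩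
        rw [hClapp, map_add]
        have h7 := sub_eq_iff_eq_add.mp hDDx
        rw [add_comm (C (Dd w)) (C x)] at h7
        exact h7.symm
    · intro x hx hx2
      obtain ⟨u, hu⟩ := x.2
      rw [hBapp x u hu]
      have h1 : sB ⟨(x : H), hx⟩ = Dd (sC u) := by
        apply hsBapp
        rw [hsClapp, hsC2, ← hClapp, hu]
      have h2 : sB ⟨sB ⟨(x : H), hx⟩, hx2⟩ = Dd (Dd u) := by
        refine hsBapp _ (Dd u) ?_
        show sCl (Dd u) = sB ⟨(x : H), hx⟩
        rw [hsClapp, h1, hcommu]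
      rw [h2, hD2]
  refine ⟨B, sB, hBsa, hBnn, hSB, hsBsa, hsBnn, hsqrt, ?_⟩
  -- the approximation property
  intro f hf
  obtain ⟨u, hu⟩ := f.2
  have hDu : Dd u = 0 := by rw [← hsBapp f u hu]; exact hf
  have hfval : (f : H) = sC u := by rw [← hu, hsClapp]
  have hCf : C (f : H) = (f : H) := by
    have h1 : Dd (f : H) = 0 := by rw [hfval, ← hcommu, hDu, map_zero]
    have h2 : Dd (Dd (f : H)) = 0 := by rw [h1, map_zero]
    rw [hD2] at h2
    exact (sub_eq_zero.mp h2).symm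
  have hnorm1 : ‖(P (ι (f : H)) : W)‖ ^ 2 = ‖(f : H)‖ ^ 2 := by
    have h8 := hCre (f : H)
    rw [hCf] at h8
    rw [← h8]
    have h9 := inner_self_eq_norm_sq (𝕜 := ℂ) (f : H)
    simp only [RCLike.re_to_complex] at h9
    rw [h9]
  have hfst : ((P (ι (f : H)) : W)).fst = (f : H) := by rw [← hCapp, hCf]
  have hsnd : ((P (ι (f : H)) : W)).snd = 0 := by
    have hdec := WithLp.prod_norm_sq_eq_of_L2 ((P (ι (f : H)) : W))
    rw [hnorm1, hfst] at hdec
    have h3 : ‖((P (ι (f : H)) : W)).snd‖ ^ 2 = 0 := by linarith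
    rw [pow_eq_zero_iff (by norm_num : (2:ℕ) ≠ 0)] at h3
    exact norm_eq_zero.mp h3
  have hfixed : ((P (ι (f : H)) : W)) = ι (f : H) := by
    apply (WithLp.equiv 2 (H × H)).injective; apply Prod.ext
    · exact hfst.trans (hι1 _).symm
    · exact hsnd.trans (hι2 _).symm
  have hmemG : ι (f : H) ∈ G := hfixed ▸ (P (ι (f : H))).2
  have hmemcl : ι (f : H) ∈ closure ((LinearMap.range Γ : Submodule ℂ W) : Set W) := by
    rw [← Submodule.topologicalClosure_coe]
    exact hmemG
  obtain ⟨w, hw1, hw2⟩ := mem_closure_iff_seq_limit.mp hmemcl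
  choose a ha using hw1
  have hcont1 : Continuous (fun v : W => v.fst) :=
    continuous_fst.comp (WithLp.prodContinuousLinearEquiv 2 ℂ H H).continuous
  have hcont2 : Continuous (fun v : W => v.snd) :=
    continuous_snd.comp (WithLp.prodContinuousLinearEquiv 2 ℂ H H).continuous
  refine ⟨a, ?_, ?_⟩
  · have h1 : Tendsto (fun n => (w n).fst) atTop (𝓝 ((ι (f : H)).fst)) :=
      ((hcont1.tendsto _).comp hw2)
    rw [hι1] at h1
    exact h1.congr (fun n => by rw [← ha n, hΓ1])
  · have h2 : Tendsto (fun n => (w n).snd) atTop (𝓝 ((ι (f : H)).snd)) :=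
      ((hcont2.tendsto _).comp hw2)
    rw [hι2] at h2
    have h3 : Tendsto (fun n => ‖(w n).snd‖ ^ 2) atTop (𝓝 0) := by
      have := (h2.norm).pow 2
      simpa using this
    refine h3.congr (fun n => ?_)
    rw [← ha n, hΓ2, hkey]
    have h9 := inner_self_eq_norm_sq (𝕜 := ℂ) (Λ (a n))
    simp only [RCLike.re_to_complex] at h9
    rw [h9]

end Core

/-- The Friedrichs extension `A_F` of the operator `S` associated with a semi-regular sequence
`{φ_n}` is positive if and only if the closure `S̄` of `S` is positive and the conditions
`⟨S̄ f_n, f_n⟩ → 0` and `f_n → g` imply `g = 0`. -/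
theorem friedrichs_positive_iff_closure
    (φ ψ : ℕ → H)
    (hbi : ∀ n m, ⟪ψ n, φ m⟫ = if n = m then (1 : ℂ) else 0)
    (hcomp : Dense ((Submodule.span ℂ (Set.range φ) : Submodule ℂ H) : Set H))
    (S : H →ₗ.[ℂ] H)
    (hdom : S.domain = Submodule.span ℂ (Set.range φ))
    (hS : ∀ n, ∃ h : φ n ∈ S.domain, S ⟨φ n, h⟩ = ψ n)
    (hclos : S.IsClosable)
    (AF sAF : H →ₗ.[ℂ] H) (hAF : IsFriedrichsExtOf AF sAF S) :
    AF.IsPositive ↔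
      (S.closure.IsPositive ∧
        ∀ (f : ℕ → S.closure.domain) (g : H),
          Tendsto (fun n => (⟪S.closure (f n), ((f n) : H)⟫).re) atTop (𝓝 0) →
          Tendsto (fun n => ((f n) : H)) atTop (𝓝 g) → g = 0) := by
  classical
  obtain ⟨hAFsa, hAFnn, hSAF, hsAFsa, hsAFnn, hsAFsq, hmax⟩ := hAF
  have hdenseS : Dense (S.domain : Set H) := by rw [hdom]; exact hcomp
  have hAFclosed : AF.IsClosed := isSelfAdjoint_isClosed hAFsa
  have hsAFclosed : sAF.IsClosed := isSelfAdjoint_isClosed hsAFsa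
  have hclosle : S.closure ≤ AF := by
    have h1 : S.closure ≤ AF.closure :=
      LinearPMap.IsClosable.closure_mono hAFclosed.isClosable hSAF
    rwa [closure_eq_self hAFclosed] at h1
  constructor
  · intro hpos
    constructor
    · intro f hf
      have hfm : (f : H) ∈ AF.domain := hclosle.1 f.2
      have heq : S.closure f = AF ⟨(f : H), hfm⟩ :=
        hclosle.2 (x := f) (y := ⟨(f : H), hfm⟩) rfl
      rw [heq]
      exact hpos ⟨(f : H), hfm⟩ hf
    · intro f g hform htend
      set y : ℕ → AF.domain := fun n => ⟨(f n : H), hclosle.1 (f n).2⟩ with hy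
      have hval : ∀ n, S.closure (f n) = AF (y n) := fun n => hclosle.2 rfl
      have hmem : ∀ n, ((f n : H)) ∈ sAF.domain :=
        fun n => ((hsAFsq.1 _).mp (y n).2).choose
      set z : ℕ → sAF.domain := fun n => ⟨(f n : H), hmem n⟩ with hz
      have hnorm : ∀ n, (⟪S.closure (f n), (f n : H)⟫).re = ‖sAF (z n)‖ ^ 2 := by
        intro n
        rw [hval n]
        exact re_inner_eq_norm_sqrt_sq hsAFsa hsAFsq (y n) (hmem n)
      have hsAFz : Tendsto (fun n => sAF (z n)) atTop (𝓝 0) := by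
        rw [tendsto_zero_iff_norm_tendsto_zero]
        have h2 : Tendsto (fun n => ‖sAF (z n)‖ ^ 2) atTop (𝓝 0) :=
          hform.congr (fun n => hnorm n)
        have h3 := h2.sqrt
        rw [Real.sqrt_zero] at h3
        exact h3.congr (fun n => Real.sqrt_sq (norm_nonneg _))
      have hgraph : (g, (0 : H)) ∈ (sAF.graph : Set (H × H)) := by
        have hseq : ∀ n, ((z n : H), sAF (z n)) ∈ (sAF.graph : Set (H × H)) := by
          intro n
          rw [SetLike.mem_coe, LinearPMap.mem_graph_iff]
          exact ⟨z n, rfl, rfl⟩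
        have hlim : Tendsto (fun n => ((z n : H), sAF (z n))) atTop (𝓝 (g, 0)) :=
          Tendsto.prodMk_nhds htend hsAFz
        exact hsAFclosed.mem_of_tendsto hlim (Filter.Eventually.of_forall hseq)
      rw [SetLike.mem_coe, LinearPMap.mem_graph_iff] at hgraph
      obtain ⟨yg, hyg1, hyg2⟩ := hgraph
      have hyg1' : (yg : H) = g := hyg1
      have hyg2' : sAF yg = 0 := hyg2
      by_contra hg0
      have hx : g ∈ sAF.domain := by rw [← hyg1']; exact yg.2
      have hsg : sAF ⟨g, hx⟩ = 0 := by
        have h11 : (⟨g, hx⟩ : sAF.domain) = yg := Subtype.ext hyg1'.symm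
        rw [congrArg (fun t => sAF t) h11]
        exact hyg2'
      have hx2 : sAF ⟨g, hx⟩ ∈ sAF.domain := by rw [hsg]; exact zero_mem _
      have hgm : g ∈ AF.domain := (hsAFsq.1 g).mpr ⟨hx, hx2⟩
      have hAFg : AF ⟨g, hgm⟩ = 0 := by
        rw [hsAFsq.2 ⟨g, hgm⟩ hx hx2]
        have h8 : (⟨sAF ⟨g, hx⟩, hx2⟩ : sAF.domain) = 0 := Subtype.ext hsg
        rw [h8]
        exact LinearPMap.map_zero _
      have h9 := hpos ⟨g, hgm⟩ (by simpa using hg0)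
      rw [hAFg] at h9
      simp at h9
  · rintro ⟨hclpos, hlim⟩
    intro f hf0
    have hnn := hAFnn f
    rcases eq_or_lt_of_le hnn with heq | hlt
    · exfalso
      obtain ⟨Λ, hkeyΛ⟩ := exists_Lambda φ ψ hbi S hdom hS
      obtain ⟨B, sB, hBsa, hBnn, hSB, hsBsa, hsBnn, hsqrt, happrox⟩ :=
        exists_good_ext S hdenseS Λ hkeyΛ
      have hform := hmax B sB hBsa hBnn hSB hsBsa hsBnn hsqrt
      have hfx : (f : H) ∈ sAF.domain := ((hsAFsq.1 _).mp f.2).choose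
      have hnormf : ‖sAF ⟨(f : H), hfx⟩‖ ^ 2 = 0 := by
        rw [← re_inner_eq_norm_sqrt_sq hsAFsa hsAFsq f hfx, ← heq]
      have hfB : (f : H) ∈ sB.domain := hform.1 hfx
      have hsBf : sB ⟨(f : H), hfB⟩ = 0 := by
        have h10 := hform.2 ⟨(f : H), hfx⟩ hfB
        have h4 : ‖sAF ⟨(f : H), hfx⟩‖ = 0 := by
          nlinarith [norm_nonneg (sAF ⟨(f : H), hfx⟩)]
        rw [h4] at h10
        exact norm_eq_zero.mp (le_antisymm h10 (norm_nonneg _))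
      obtain ⟨a, ha1, ha2⟩ := happrox ⟨(f : H), hfB⟩ hsBf
      set fc : ℕ → S.closure.domain := fun n => ⟨(a n : H), (S.le_closure.1) (a n).2⟩ with hfc
      have hvals : ∀ n, S.closure (fc n) = S (a n) := fun n => (S.le_closure.2 rfl).symm
      have h5 : Tendsto (fun n => (⟪S.closure (fc n), ((fc n) : H)⟫).re) atTop (𝓝 0) :=
        ha2.congr (fun n => by rw [← hvals n])
      exact hf0 (hlim fc (f : H) h5 ha1)
    · exact hlt
end
end

section
/- Every regular sequence in a Hilbert space is a generalized Riesz system. That is, if {φ_n} is minimal and complete and its biorthogonal sequence {ψ_n} is also complete, then there exists a self-adjoint operator Q and an orthonormal basis {e_n} with e_n ∈ D(e^{Q/2}) ∩ D(e^{-Q/2}) and φ_n = e^{Q/2}e_n. -/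
open scoped ComplexInnerProductSpace
open Filter Topology

noncomputable section

variable {H : Type*} [NormedAddCommGroup H] [InnerProductSpace ℂ H] [CompleteSpace H]

section RegularGRSAux
set_option linter.unusedSectionVars false

namespace RegularGRS


variable {H : Type*} [NormedAddCommGroup H] [InnerProductSpace ℂ H] [CompleteSpace H]

/-- The partial operator `Y ∘ X⁻¹` with domain `range X`. -/
def opInv (X Y : H →L[ℂ] H) (hX : Function.Injective X) : H →ₗ.[ℂ] H :=
  ⟨LinearMap.range (X : H →ₗ[ℂ] H),
   (Y : H →ₗ[ℂ] H) ∘ₗ ((LinearEquiv.ofInjective (X : H →ₗ[ℂ] H) hX).symm :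
      LinearMap.range (X : H →ₗ[ℂ] H) →ₗ[ℂ] H)⟩

lemma mem_opInv_domain {X Y : H →L[ℂ] H} {hX : Function.Injective X} (x : H) :
    X x ∈ (opInv X Y hX).domain := ⟨x, rfl⟩

lemma exists_of_mem_opInv_domain {X Y : H →L[ℂ] H} {hX : Function.Injective X} {z : H}
    (h : z ∈ (opInv X Y hX).domain) : ∃ x, X x = z := h

lemma opInv_apply (X Y : H →L[ℂ] H) (hX : Function.Injective X) (x : H)
    (h : X x ∈ (opInv X Y hX).domain) : (opInv X Y hX) ⟨X x, h⟩ = Y x := by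
  have h1 : ((LinearEquiv.ofInjective (X : H →ₗ[ℂ] H) hX).symm
      (⟨X x, h⟩ : LinearMap.range (X : H →ₗ[ℂ] H))) = x := by
    apply hX
    have := LinearEquiv.ofInjective_symm_apply (X : H →ₗ[ℂ] H) (h := hX)
      (⟨X x, h⟩ : LinearMap.range (X : H →ₗ[ℂ] H))
    rw [ContinuousLinearMap.coe_coe] at this
    exact this
  show (Y : H →ₗ[ℂ] H) (((LinearEquiv.ofInjective (X : H →ₗ[ℂ] H) hX).symm)
      (⟨X x, h⟩ : LinearMap.range (X : H →ₗ[ℂ] H))) = Y x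
  rw [h1]; rfl

lemma opInv_apply' (X Y : H →L[ℂ] H) (hX : Function.Injective X) (y : (opInv X Y hX).domain)
    (x : H) (hxy : X x = (y : H)) : (opInv X Y hX) y = Y x := by
  have : y = ⟨X x, hxy ▸ y.2⟩ := Subtype.ext hxy.symm
  rw [this, opInv_apply]

/-- Density of the range of an injective symmetric bounded operator. -/
lemma dense_range_of_symm_inj {X : H →L[ℂ] H} (hXs : (X : H →ₗ[ℂ] H).IsSymmetric)
    (hX : Function.Injective X) :
    Dense ((LinearMap.range (X : H →ₗ[ℂ] H) : Submodule ℂ H) : Set H) := by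
  rw [Submodule.dense_iff_topologicalClosure_eq_top, Submodule.topologicalClosure_eq_top_iff]
  rw [Submodule.eq_bot_iff]
  intro z hz
  have hXz : ∀ y : H, ⟪y, X z⟫ = 0 := by
    intro y
    have h0 := (Submodule.mem_orthogonal _ z).mp hz (X y) ⟨y, rfl⟩
    have h1 := hXs y z
    simp only [ContinuousLinearMap.coe_coe] at h0 h1
    rw [← h1]; exact h0
  have : X z = 0 := by
    have := hXz (X z)
    rwa [inner_self_eq_zero] at this
  exact hX (by simpa using this)

theorem opInv_isSelfAdjoint (X Y : H →L[ℂ] H)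
    (hXs : (X : H →ₗ[ℂ] H).IsSymmetric) (hYs : (Y : H →ₗ[ℂ] H).IsSymmetric)
    (hcomm : ∀ z, X (Y z) = Y (X z))
    (hX : Function.Injective X)
    (hsum : ∀ z, Y (Y z) + X (X z) = z) :
    IsSelfAdjoint (opInv X Y hX) := by
  have hXs' : ∀ a b : H, ⟪X a, b⟫ = ⟪a, X b⟫ := by
    intro a b; have := hXs a b; simpa using this
  have hYs' : ∀ a b : H, ⟪Y a, b⟫ = ⟪a, Y b⟫ := by
    intro a b; have := hYs a b; simpa using this
  set P := opInv X Y hX with hP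
  have hdense : Dense (P.domain : Set H) := dense_range_of_symm_inj hXs hX
  -- formal self-adjointness (symmetry)
  have hsymm : P.IsFormalAdjoint P := by
    intro p q
    obtain ⟨x, hx⟩ := exists_of_mem_opInv_domain p.2
    obtain ⟨y, hy⟩ := exists_of_mem_opInv_domain q.2
    rw [opInv_apply' X Y hX p x hx, opInv_apply' X Y hX q y hy]
    calc ⟪Y x, (q : H)⟫ = ⟪Y x, X y⟫ := by rw [hy]
      _ = ⟪X (Y x), y⟫ := (hXs' (Y x) y).symm
      _ = ⟪Y (X x), y⟫ := by rw [hcomm]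
      _ = ⟪X x, Y y⟫ := hYs' (X x) y
      _ = ⟪(p : H), Y y⟫ := by rw [hx]
  have hle : P ≤ P.adjoint := hsymm.le_adjoint hdense
  -- surjectivity identity
  have solve : ∀ c : ℂ, c * c = -1 →
      ∀ h : H, Y (Y h - c • X h) + c • X (Y h - c • X h) = h := by
    intro c hc h
    have e1 : X (Y h - c • X h) = Y (X h) - c • X (X h) := by
      rw [map_sub, map_smul, hcomm]
    have e2 : Y (Y h - c • X h) = Y (Y h) - c • Y (X h) := by
      rw [map_sub, map_smul]
    rw [e1, e2, smul_sub, smul_smul, hc, neg_one_smul, sub_neg_eq_add]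
    have : Y (Y h) - c • Y (X h) + (c • Y (X h) + X (X h))
        = Y (Y h) + X (X h) := by abel
    rw [this, hsum]
  -- the reverse inclusion
  have Papp : ∀ (x : H) (h : X x ∈ P.domain), P ⟨X x, h⟩ = Y x :=
    fun x h => opInv_apply X Y hX x h
  have hIfa := LinearPMap.adjoint_isFormalAdjoint hdense
  have hmem : ∀ u : P.adjoint.domain, ∃ x : H, (u : H) = X x ∧
      Y x + Complex.I • X x = P.adjoint u + Complex.I • (u : H) := by
    intro u
    set g := P.adjoint u with hg
    set h := g + Complex.I • (u : H) with hh
    set x := Y h - Complex.I • X h with hxdef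
    have hx : Y x + Complex.I • X x = h := solve Complex.I (by simp [Complex.I_mul_I]) h
    refine ⟨x, ?_, by rw [hx]⟩
    have horth : ∀ z : H, ⟪Y z - Complex.I • X z, (u : H) - X x⟫ = 0 := by
      intro z
      have hYzu : ⟪g, X z⟫ = ⟪(u : H), Y z⟫ := by
        have h0 := hIfa u ⟨X z, mem_opInv_domain z⟩
        rwa [Papp z (mem_opInv_domain z)] at h0
      have h1 : ⟪Y z, (u : H)⟫ = ⟪X z, g⟫ := by
        rw [← inner_conj_symm, ← hYzu, inner_conj_symm]
      have h2 : ⟪Y z, X x⟫ = ⟪X z, Y x⟫ := by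
        calc ⟪Y z, X x⟫ = ⟪X (Y z), x⟫ := (hXs' _ _).symm
          _ = ⟪Y (X z), x⟫ := by rw [hcomm]
          _ = ⟪X z, Y x⟫ := hYs' _ _
      have expand : ⟪Y z - Complex.I • X z, (u : H) - X x⟫
          = ⟪X z, (g + Complex.I • (u : H)) - (Y x + Complex.I • X x)⟫ := by
        simp only [inner_sub_left, inner_sub_right, inner_add_right, inner_smul_left,
          inner_smul_right, h1, h2, Complex.star_def, Complex.conj_I]
        ring
      rw [expand, hx, ← hh, sub_self, inner_zero_right]
    set d := (u : H) - X x with hd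
    have hz0 : Y (Y d + Complex.I • X d) - Complex.I • X (Y d + Complex.I • X d) = d := by
      have hs := solve (-Complex.I) (by simp [Complex.I_mul_I]) d
      rw [neg_smul, sub_neg_eq_add, neg_smul] at hs
      rw [sub_eq_add_neg]
      exact hs
    have : ⟪d, d⟫ = 0 := by
      have h0 := horth (Y d + Complex.I • X d)
      rwa [hz0] at h0
    have hd0 : d = 0 := inner_self_eq_zero.mp this
    have : (u : H) = X x := by
      have := sub_eq_zero.mp hd0
      exact this
    exact this
  have hadj_le : P.adjoint ≤ P := by
    constructor
    · intro u hu
      obtain ⟨x, hux, -⟩ := hmem ⟨u, hu⟩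
      have : u = X x := hux
      rw [this]
      exact mem_opInv_domain x
    · intro uu ww huw
      exact (hle.2 huw.symm).symm
  exact LinearPMap.isSelfAdjoint_def.mpr (le_antisymm hadj_le hle)




/-- If the span of the range of `S` is dense and `w` is orthogonal to every `S n`, then `w = 0`. -/
lemma orthog_dense_zero {S : ℕ → H}
    (hS : Dense ((Submodule.span ℂ (Set.range S) : Submodule ℂ H) : Set H))
    {w : H} (hw : ∀ n, ⟪S n, w⟫ = 0) : w = 0 := by
  have horth : w ∈ (Submodule.span ℂ (Set.range S))ᗮ := by
    rw [Submodule.mem_orthogonal]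
    intro y hy
    induction hy using Submodule.span_induction with
    | mem x hx => obtain ⟨n, rfl⟩ := hx; exact hw n
    | zero => simp
    | add a b _ _ ha hb => rw [inner_add_left, ha, hb, add_zero]
    | smul c a _ ha => rw [inner_smul_left, ha, mul_zero]
  have hbot : (Submodule.span ℂ (Set.range S))ᗮ = ⊥ := by
    rw [← Submodule.topologicalClosure_eq_top_iff]
    exact Submodule.dense_iff_topologicalClosure_eq_top.mp hS
  simpa [hbot] using horth

section Construction

variable (φ ψ u : ℕ → H)

/-- First projection on the `L²` product. -/
def Pr1 : WithLp 2 (H × H) →L[ℂ] H :=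
  (ContinuousLinearMap.fst ℂ H H).comp
    (WithLp.prodContinuousLinearEquiv 2 ℂ H H).toContinuousLinearMap

/-- Second projection on the `L²` product. -/
def Pr2 : WithLp 2 (H × H) →L[ℂ] H :=
  (ContinuousLinearMap.snd ℂ H H).comp
    (WithLp.prodContinuousLinearEquiv 2 ℂ H H).toContinuousLinearMap

@[simp] lemma Pr1_apply (x : WithLp 2 (H × H)) : Pr1 x = x.fst := rfl
@[simp] lemma Pr2_apply (x : WithLp 2 (H × H)) : Pr2 x = x.snd := rfl

lemma prod_norm_fst_le (x : WithLp 2 (H × H)) : ‖x.fst‖ ≤ ‖x‖ := by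
  have h1 : ‖x‖ ^ 2 = RCLike.re (⟪x, x⟫) := norm_sq_eq_re_inner (𝕜 := ℂ) x
  rw [WithLp.prod_inner_apply, map_add] at h1
  have h2 : RCLike.re (⟪x.ofLp.1, x.ofLp.1⟫) = ‖x.ofLp.1‖ ^ 2 := (norm_sq_eq_re_inner (𝕜 := ℂ) x.ofLp.1).symm
  have h3 : RCLike.re (⟪x.ofLp.2, x.ofLp.2⟫) = ‖x.ofLp.2‖ ^ 2 := (norm_sq_eq_re_inner (𝕜 := ℂ) x.ofLp.2).symm
  show ‖x.ofLp.1‖ ≤ ‖x‖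
  nlinarith [norm_nonneg x, norm_nonneg x.ofLp.1, norm_nonneg x.ofLp.2]

/-- The generators `(φ n, u n)` of the graph subspace. -/
def gvec (n : ℕ) : WithLp 2 (H × H) := (WithLp.equiv 2 (H × H)).symm (φ n, u n)

@[simp] lemma gvec_fst (n : ℕ) : (gvec φ u n).fst = φ n := rfl
@[simp] lemma gvec_snd (n : ℕ) : (gvec φ u n).snd = u n := rfl

/-- The closure of the graph subspace spanned by the `(φ n, u n)`. -/
def Wsub : Submodule ℂ (WithLp 2 (H × H)) :=
  (Submodule.span ℂ (Set.range (gvec φ u))).topologicalClosure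

instance : CompleteSpace (Wsub φ u) :=
  (Submodule.isClosed_topologicalClosure _).completeSpace_coe

lemma gvec_mem (n : ℕ) : gvec φ u n ∈ Wsub φ u :=
  Submodule.le_topologicalClosure _ (Submodule.subset_span ⟨n, rfl⟩)

/-- On `Wsub`, the second component is determined by the first:
`⟪u n, p.2⟫ = ⟪ψ n, p.1⟫`. -/
lemma Wsub_snd (hbi : ∀ n m, ⟪ψ n, φ m⟫ = if n = m then (1 : ℂ) else 0)
    (hu : Orthonormal ℂ u) (p : Wsub φ u) (n : ℕ) :
    ⟪u n, (p : WithLp 2 (H × H)).snd⟫ = ⟪ψ n, (p : WithLp 2 (H × H)).fst⟫ := by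
  set Φ : WithLp 2 (H × H) →L[ℂ] ℂ :=
    (innerSL ℂ (u n)).comp (Pr2 (H := H)) - (innerSL ℂ (ψ n)).comp (Pr1 (H := H)) with hΦ
  have hker : Wsub φ u ≤ LinearMap.ker (Φ : WithLp 2 (H × H) →ₗ[ℂ] ℂ) := by
    apply Submodule.topologicalClosure_minimal
    · rw [Submodule.span_le]
      rintro x ⟨m, rfl⟩
      have h1 : Φ (gvec φ u m) = ⟪u n, u m⟫ - ⟪ψ n, φ m⟫ := rfl
      have h2 : ⟪u n, u m⟫ = if n = m then (1 : ℂ) else 0 := (orthonormal_iff_ite.mp hu) n m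
      simp only [SetLike.mem_coe, LinearMap.mem_ker, ContinuousLinearMap.coe_coe, h1, h2, hbi, sub_self]
    · exact ContinuousLinearMap.isClosed_ker Φ
  have := hker p.2
  rw [LinearMap.mem_ker, ContinuousLinearMap.coe_coe] at this
  have h1 : Φ (p : WithLp 2 (H × H)) = ⟪u n, (p : WithLp 2 (H × H)).snd⟫
      - ⟪ψ n, (p : WithLp 2 (H × H)).fst⟫ := rfl
  rw [h1] at this
  exact sub_eq_zero.mp this

/-- The Riesz representation functional. -/
def Lfun (w : H) : Wsub φ u →L[ℂ] ℂ :=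
  (innerSL ℂ w).comp ((Pr1 (H := H)).comp (Wsub φ u).subtypeL)

@[simp] lemma Lfun_apply (w : H) (p : Wsub φ u) :
    Lfun φ u w p = ⟪w, (p : WithLp 2 (H × H)).fst⟫ := rfl

/-- The Riesz vector `Θ w ∈ W`. -/
def theta (w : H) : Wsub φ u := (InnerProductSpace.toDual ℂ (Wsub φ u)).symm (Lfun φ u w)

lemma theta_spec (w : H) (p : Wsub φ u) :
    ⟪theta φ u w, p⟫ = ⟪w, (p : WithLp 2 (H × H)).fst⟫ :=
  InnerProductSpace.toDual_symm_apply

lemma theta_norm_le (w : H) : ‖theta φ u w‖ ≤ ‖w‖ := by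
  have h1 : ‖theta φ u w‖ = ‖Lfun φ u w‖ :=
    LinearIsometryEquiv.norm_map (InnerProductSpace.toDual ℂ (Wsub φ u)).symm _
  rw [h1]
  apply ContinuousLinearMap.opNorm_le_bound _ (norm_nonneg w)
  intro p
  rw [Lfun_apply]
  calc ‖⟪w, (p : WithLp 2 (H × H)).fst⟫‖ ≤ ‖w‖ * ‖(p : WithLp 2 (H × H)).fst‖ :=
        norm_inner_le_norm _ _
    _ ≤ ‖w‖ * ‖p‖ := by
        have := prod_norm_fst_le ((p : WithLp 2 (H × H)))
        have hp : ‖(p : WithLp 2 (H × H))‖ = ‖p‖ := rfl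
        nlinarith [norm_nonneg w]

lemma theta_add (w w' : H) : theta φ u (w + w') = theta φ u w + theta φ u w' := by
  apply ext_inner_right ℂ
  intro p
  rw [inner_add_left, theta_spec, theta_spec, theta_spec, inner_add_left]

lemma theta_smul (a : ℂ) (w : H) : theta φ u (a • w) = a • theta φ u w := by
  apply ext_inner_right ℂ
  intro p
  rw [inner_smul_left (𝕜 := ℂ) (E := Wsub φ u), theta_spec, theta_spec, inner_smul_left]

/-- The linear map `Θ`. -/
def thetaL : H →ₗ[ℂ] Wsub φ u where
  toFun := theta φ u
  map_add' := theta_add φ u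
  map_smul' := theta_smul φ u

/-- The bounded operator `C = (1 + T*T)⁻¹` via Riesz representation. -/
def Cop : H →L[ℂ] H :=
  LinearMap.mkContinuous
    ((((Pr1 (H := H)) : WithLp 2 (H × H) →ₗ[ℂ] H).comp (Wsub φ u).subtype).comp (thetaL φ u))
    1 (fun w => by
      simp only [LinearMap.coe_comp, Function.comp_apply, one_mul]
      calc ‖(Pr1 (H := H) : WithLp 2 (H × H) →ₗ[ℂ] H) ((Wsub φ u).subtype (thetaL φ u w))‖
          = ‖((theta φ u w : Wsub φ u) : WithLp 2 (H × H)).fst‖ := rfl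
        _ ≤ ‖((theta φ u w : Wsub φ u) : WithLp 2 (H × H))‖ := prod_norm_fst_le _
        _ = ‖theta φ u w‖ := rfl
        _ ≤ ‖w‖ := theta_norm_le φ u w)

lemma Cop_apply (w : H) :
    Cop φ u w = ((theta φ u w : Wsub φ u) : WithLp 2 (H × H)).fst := rfl

lemma theta_inner_theta (v w : H) : ⟪theta φ u v, theta φ u w⟫ = ⟪v, Cop φ u w⟫ :=
  theta_spec φ u v (theta φ u w)

lemma Cop_symm (v w : H) : ⟪Cop φ u v, w⟫ = ⟪v, Cop φ u w⟫ := by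
  rw [← inner_conj_symm, ← theta_inner_theta, ← inner_conj_symm (theta φ u w),
    theta_inner_theta, inner_conj_symm, inner_conj_symm]

lemma Cop_isSymmetric : ((Cop φ u : H →L[ℂ] H) : H →ₗ[ℂ] H).IsSymmetric := by
  intro v w
  exact Cop_symm φ u v w

lemma inner_Cop_self (w : H) : ⟪w, Cop φ u w⟫ = (‖theta φ u w‖ : ℂ) ^ 2 := by
  rw [← theta_inner_theta]
  rw [inner_self_eq_norm_sq_to_K (𝕜 := ℂ) (E := Wsub φ u)]
  norm_cast

lemma re_inner_Cop_self (w : H) : RCLike.re ⟪w, Cop φ u w⟫ = ‖theta φ u w‖ ^ 2 := by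
  rw [← theta_inner_theta]
  exact (norm_sq_eq_re_inner (𝕜 := ℂ) (E := Wsub φ u) _).symm

end Construction

section Construction2

variable (φ ψ u : ℕ → H)

lemma Cop_inner_nonneg (w : H) : 0 ≤ RCLike.re ⟪Cop φ u w, w⟫ := by
  rw [← inner_conj_symm, RCLike.conj_re, re_inner_Cop_self]
  positivity

lemma Cop_inner_le_one (w : H) : RCLike.re ⟪Cop φ u w, w⟫ ≤ ‖w‖ ^ 2 := by
  rw [← inner_conj_symm, RCLike.conj_re, re_inner_Cop_self]
  have h := theta_norm_le φ u w
  nlinarith [norm_nonneg (theta φ u w), norm_nonneg w]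

/-- `C` is injective (uses completeness of `φ`). -/
lemma Cop_inj
    (hcompφ : Dense ((Submodule.span ℂ (Set.range φ) : Submodule ℂ H) : Set H))
    (w : H) (hw : Cop φ u w = 0) : w = 0 := by
  have hθ : theta φ u w = 0 := by
    have h1 : ‖theta φ u w‖ ^ 2 = 0 := by
      rw [← re_inner_Cop_self, hw, inner_zero_right, map_zero]
    rw [pow_eq_zero_iff (by norm_num)] at h1
    exact norm_eq_zero.mp h1
  apply orthog_dense_zero hcompφ
  intro n
  have h2 := theta_spec φ u w ⟨gvec φ u n, gvec_mem φ u n⟩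
  rw [hθ, inner_zero_left] at h2
  have h2' : (0 : ℂ) = ⟪w, φ n⟫ := h2
  rw [← inner_conj_symm, ← h2', map_zero]

/-- `1 - C` is injective (uses completeness of `ψ`). -/
lemma Cop_one_inj
    (hbi : ∀ n m, ⟪ψ n, φ m⟫ = if n = m then (1 : ℂ) else 0)
    (hu : Orthonormal ℂ u)
    (hucomp : Dense ((Submodule.span ℂ (Set.range u) : Submodule ℂ H) : Set H))
    (hcompψ : Dense ((Submodule.span ℂ (Set.range ψ) : Submodule ℂ H) : Set H))
    (w : H) (hw : Cop φ u w = w) : w = 0 := by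
  -- second component of Θ w vanishes
  have hsnd : ((theta φ u w : Wsub φ u) : WithLp 2 (H × H)).snd = 0 := by
    apply orthog_dense_zero hucomp
    intro n
    have h2 := theta_spec φ u w ⟨gvec φ u n, gvec_mem φ u n⟩
    have h3 : ⟪theta φ u w, (⟨gvec φ u n, gvec_mem φ u n⟩ : Wsub φ u)⟫
        = ⟪((theta φ u w : Wsub φ u) : WithLp 2 (H × H)).fst, φ n⟫
          + ⟪((theta φ u w : Wsub φ u) : WithLp 2 (H × H)).snd, u n⟫ := by
      rw [Submodule.coe_inner, WithLp.prod_inner_apply]; rfl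
    rw [h3] at h2
    have h4 : ((theta φ u w : Wsub φ u) : WithLp 2 (H × H)).fst = w := by
      rw [← Cop_apply, hw]
    rw [h4] at h2
    -- h2 : ⟪w, φ n⟫ + ⟪snd, u n⟫ = ⟪w, φ n⟫
    have := add_right_cancel (a := ⟪((theta φ u w : Wsub φ u) : WithLp 2 (H × H)).snd, u n⟫)
      (b := ⟪w, φ n⟫) (c := 0)
    rw [add_comm] at h2
    have h5 : ⟪((theta φ u w : Wsub φ u) : WithLp 2 (H × H)).snd, u n⟫ = 0 := by
      have := congrArg (· - ⟪w, φ n⟫) h2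
      simpa using this
    rw [← inner_conj_symm, h5, map_zero]
  -- now (w, 0) ∈ W, use the graph property
  apply orthog_dense_zero hcompψ
  intro n
  have h6 := Wsub_snd φ ψ u hbi hu (theta φ u w) n
  rw [hsnd, inner_zero_right] at h6
  have h4 : ((theta φ u w : Wsub φ u) : WithLp 2 (H × H)).fst = w := by
    rw [← Cop_apply, hw]
  rw [h4] at h6
  exact h6.symm

/-- `Θ (φ n + ψ n)` is the `n`-th generator; in particular `C (φ n + ψ n) = φ n`. -/
lemma theta_vn (hbi : ∀ n m, ⟪ψ n, φ m⟫ = if n = m then (1 : ℂ) else 0)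
    (hu : Orthonormal ℂ u) (n : ℕ) :
    theta φ u (φ n + ψ n) = ⟨gvec φ u n, gvec_mem φ u n⟩ := by
  have key : ∀ p : Wsub φ u, ⟪theta φ u (φ n + ψ n) - ⟨gvec φ u n, gvec_mem φ u n⟩, p⟫ = 0 := by
    intro p
    rw [inner_sub_left, theta_spec]
    have h1 : ⟪(⟨gvec φ u n, gvec_mem φ u n⟩ : Wsub φ u), p⟫
        = ⟪φ n, (p : WithLp 2 (H × H)).fst⟫ + ⟪u n, (p : WithLp 2 (H × H)).snd⟫ := by
      rw [Submodule.coe_inner, WithLp.prod_inner_apply]; rfl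
    rw [h1, Wsub_snd φ ψ u hbi hu p n, inner_add_left]
    ring
  have h0 := key (theta φ u (φ n + ψ n) - ⟨gvec φ u n, gvec_mem φ u n⟩)
  rw [inner_self_eq_zero (𝕜 := ℂ) (E := Wsub φ u)] at h0
  exact sub_eq_zero.mp h0

lemma Cop_vn (hbi : ∀ n m, ⟪ψ n, φ m⟫ = if n = m then (1 : ℂ) else 0)
    (hu : Orthonormal ℂ u) (n : ℕ) : Cop φ u (φ n + ψ n) = φ n := by
  rw [Cop_apply, theta_vn φ ψ u hbi hu n]
  rfl

end Construction2


section MainLemma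

variable (φ ψ u : ℕ → H)

/-- The key density lemma: if `G² = C`, `G` symmetric and injective, then any vector of the
form `G y` orthogonal to all `φ n + ψ n` vanishes. -/
lemma ranG_orthog_vn
    (hbi : ∀ n m, ⟪ψ n, φ m⟫ = if n = m then (1 : ℂ) else 0)
    (hu : Orthonormal ℂ u)
    (G : H →L[ℂ] H)
    (hGsym : ∀ a b : H, ⟪G a, b⟫ = ⟪a, G b⟫)
    (hGsq : ∀ x, G (G x) = Cop φ u x)
    (hGinj : Function.Injective G)
    (y : H) (hy : ∀ n, ⟪φ n + ψ n, G y⟫ = 0) : G y = 0 := by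
  have hGs : ((G : H →L[ℂ] H) : H →ₗ[ℂ] H).IsSymmetric := fun a b => hGsym a b
  have hdense : Dense ((LinearMap.range ((G : H →L[ℂ] H) : H →ₗ[ℂ] H) : Submodule ℂ H) : Set H) :=
    dense_range_of_symm_inj hGs hGinj
  -- norm identity
  have hnorm : ∀ x, ‖theta φ u x‖ = ‖G x‖ := by
    intro x
    have h1 : ‖theta φ u x‖ ^ 2 = ‖G x‖ ^ 2 := by
      rw [← re_inner_Cop_self, ← hGsq, ← hGsym, norm_sq_eq_re_inner (𝕜 := ℂ)]
    have := congrArg Real.sqrt h1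
    simpa [Real.sqrt_sq, norm_nonneg] using this
  -- the isometry V₀ on range G
  set Gl := ((G : H →L[ℂ] H) : H →ₗ[ℂ] H) with hGl
  have hGinj' : Function.Injective Gl := hGinj
  set V0 : (LinearMap.range Gl) →ₗ[ℂ] Wsub φ u :=
    (thetaL φ u).comp (LinearEquiv.ofInjective Gl hGinj').symm.toLinearMap with hV0
  have hV0_apply : ∀ (x : H) (h : Gl x ∈ LinearMap.range Gl),
      V0 ⟨Gl x, h⟩ = theta φ u x := by
    intro x h
    have h1 : ((LinearEquiv.ofInjective Gl hGinj').symm (⟨Gl x, h⟩ : LinearMap.range Gl)) = x := by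
      apply hGinj'
      have := LinearEquiv.ofInjective_symm_apply Gl (h := hGinj')
        (⟨Gl x, h⟩ : LinearMap.range Gl)
      simpa using this
    show theta φ u (((LinearEquiv.ofInjective Gl hGinj').symm)
        (⟨Gl x, h⟩ : LinearMap.range Gl)) = theta φ u x
    rw [h1]
  have hV0_bound : ∀ q : LinearMap.range Gl, ‖V0 q‖ ≤ 1 * ‖q‖ := by
    intro q
    obtain ⟨x, hx⟩ := q.2
    have hq : q = ⟨Gl x, hx ▸ q.2⟩ := Subtype.ext hx.symm
    rw [hq, hV0_apply, one_mul]
    have : ‖(⟨Gl x, hx ▸ q.2⟩ : LinearMap.range Gl)‖ = ‖G x‖ := rfl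
    rw [this, hnorm]
  set V0c := V0.mkContinuous 1 hV0_bound with hV0c
  set V := V0c.extend (Submodule.subtypeL (LinearMap.range Gl)) with hV
  have hVG : ∀ x, V (G x) = theta φ u x := by
    intro x
    have h0 := ContinuousLinearMap.extend_eq V0c (e := Submodule.subtypeL (LinearMap.range Gl))
      hdense.denseRange_val isUniformEmbedding_subtype_val.isUniformInducing
      (⟨Gl x, ⟨x, rfl⟩⟩ : LinearMap.range Gl)
    have h1 : (Submodule.subtypeL (LinearMap.range Gl)) (⟨Gl x, ⟨x, rfl⟩⟩ : LinearMap.range Gl)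
        = G x := rfl
    rw [h1] at h0
    rw [← hV] at h0
    rw [h0]
    have h2 : V0c (⟨Gl x, ⟨x, rfl⟩⟩ : LinearMap.range Gl)
        = V0 (⟨Gl x, ⟨x, rfl⟩⟩ : LinearMap.range Gl) := rfl
    rw [h2]; exact hV0_apply x _
  -- first component of V z is G z
  have hPr1V : ∀ z, ((V z : Wsub φ u) : WithLp 2 (H × H)).fst = G z := by
    have hfun : (fun z => ((V z : Wsub φ u) : WithLp 2 (H × H)).fst) = fun z => G z := by
      apply Continuous.ext_on hdense
      · exact (Pr1 (H := H)).continuous.comp (continuous_subtype_val.comp V.continuous)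
      · exact G.continuous
      · rintro w ⟨x, rfl⟩
        show ((V (G x) : Wsub φ u) : WithLp 2 (H × H)).fst = G (G x)
        rw [hVG, ← Cop_apply, hGsq]
    intro z
    exact congrFun hfun z
  -- conclude
  set ξ := V y with hξ
  have hgenorth : ∀ n, ⟪(ξ : WithLp 2 (H × H)), gvec φ u n⟫ = 0 := by
    intro n
    have h1 : ⟪(⟨gvec φ u n, gvec_mem φ u n⟩ : Wsub φ u), ξ⟫
        = ⟪φ n, (ξ : WithLp 2 (H × H)).fst⟫ + ⟪u n, (ξ : WithLp 2 (H × H)).snd⟫ := by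
      rw [Submodule.coe_inner, WithLp.prod_inner_apply]; rfl
    rw [Wsub_snd φ ψ u hbi hu ξ n, hPr1V y, ← inner_add_left, hy n] at h1
    rw [← inner_conj_symm]
    have h2 : ⟪(⟨gvec φ u n, gvec_mem φ u n⟩ : Wsub φ u), ξ⟫
        = ⟪gvec φ u n, (ξ : WithLp 2 (H × H))⟫ := rfl
    rw [h2] at h1
    rw [h1, map_zero]
  have hker : (Wsub φ u : Set (WithLp 2 (H × H))) ⊆
      (LinearMap.ker (innerSL ℂ ((ξ : Wsub φ u) : WithLp 2 (H × H)) : WithLp 2 (H × H) →ₗ[ℂ] ℂ) : Set (WithLp 2 (H × H))) := by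
    apply Submodule.topologicalClosure_minimal
    · rw [Submodule.span_le]
      rintro x ⟨m, rfl⟩
      simp only [SetLike.mem_coe, LinearMap.mem_ker]
      exact hgenorth m
    · exact ContinuousLinearMap.isClosed_ker _
  have hξ0 : ((ξ : Wsub φ u) : WithLp 2 (H × H)) = 0 := by
    have hm := hker (ξ : Wsub φ u).2
    simp only [SetLike.mem_coe, LinearMap.mem_ker] at hm
    have : ⟪((ξ : Wsub φ u) : WithLp 2 (H × H)), ((ξ : Wsub φ u) : WithLp 2 (H × H))⟫ = 0 := hm
    exact inner_self_eq_zero.mp this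
  rw [← hPr1V y, ← hξ, hξ0]
  rfl

end MainLemma




section CFCPack

variable (C : H →L[ℂ] H)

/-- `√C`. -/
def sqG : H →L[ℂ] H := cfc (fun t : ℝ => Real.sqrt t) C
/-- `√(1-C)`. -/
def sqR : H →L[ℂ] H := cfc (fun t : ℝ => Real.sqrt (1 - t)) C
/-- `(C(1-C))^(1/4)`. -/
def sqS : H →L[ℂ] H :=
  cfc (fun t : ℝ => Real.sqrt (Real.sqrt t * Real.sqrt (1 - t))) C

variable {C}
variable (hsa : IsSelfAdjoint C)
    (h0 : ∀ w, 0 ≤ RCLike.re ⟪C w, w⟫) (h1 : ∀ w, RCLike.re ⟪C w, w⟫ ≤ ‖w‖ ^ 2)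

include hsa h0 in
lemma C_nonneg_op : 0 ≤ C := by
  rw [ContinuousLinearMap.nonneg_iff_isPositive]
  exact ⟨ContinuousLinearMap.isSelfAdjoint_iff_isSymmetric.mp hsa, fun x => h0 x⟩

include hsa h0 h1 in
lemma one_sub_C_nonneg_op : 0 ≤ 1 - C := by
  rw [ContinuousLinearMap.nonneg_iff_isPositive]
  constructor
  · exact ContinuousLinearMap.isSelfAdjoint_iff_isSymmetric.mp ((IsSelfAdjoint.one (H →L[ℂ] H)).sub hsa)
  · intro x
    have : (1 - C) x = x - C x := rfl
    show 0 ≤ RCLike.re ⟪(1 - C) x, x⟫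
    rw [this, inner_sub_left, map_sub]
    have hx : RCLike.re ⟪x, x⟫ = ‖x‖ ^ 2 := (norm_sq_eq_re_inner (𝕜 := ℂ) x).symm
    rw [hx]
    have := h1 x
    linarith

include hsa h0 in
lemma spec_nonneg : ∀ t ∈ spectrum ℝ C, 0 ≤ t :=
  fun _ ht => spectrum_nonneg_of_nonneg (C_nonneg_op hsa h0) ht

include hsa h0 h1 in
lemma spec_le_one : ∀ t ∈ spectrum ℝ C, t ≤ 1 := by
  intro t ht
  have hmem : 1 - t ∈ spectrum ℝ (1 - C) := by
    have hcfc : cfc (fun s : ℝ => 1 - s) C = 1 - C := by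
      have : cfc (fun s : ℝ => 1 - s) C
          = cfc (fun _ : ℝ => (1:ℝ)) C - cfc (fun s : ℝ => s) C := by
        exact cfc_sub _ _ C
      rw [this, cfc_const 1 C, cfc_id' ℝ C, map_one]
    rw [← hcfc, cfc_map_spectrum (fun s : ℝ => 1 - s) C hsa (by fun_prop)]
    exact ⟨t, ht, rfl⟩
  have := spectrum_nonneg_of_nonneg (one_sub_C_nonneg_op hsa h0 h1) hmem
  linarith

include hsa h0 in
lemma sqG_mul_self : sqG C * sqG C = C := by
  rw [sqG, ← cfc_mul _ _ C]
  have : Set.EqOn (fun x : ℝ => Real.sqrt x * Real.sqrt x) id (spectrum ℝ C) := by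
    intro t ht
    exact Real.mul_self_sqrt (spec_nonneg hsa h0 t ht)
  rw [cfc_congr this, cfc_id ℝ C]

include hsa h0 h1 in
lemma sqR_mul_self : sqR C * sqR C = 1 - C := by
  rw [sqR, ← cfc_mul _ _ C]
  have heq : Set.EqOn (fun x : ℝ => Real.sqrt (1 - x) * Real.sqrt (1 - x))
      (fun x : ℝ => 1 - x) (spectrum ℝ C) := by
    intro t ht
    exact Real.mul_self_sqrt (by linarith [spec_le_one hsa h0 h1 t ht])
  rw [cfc_congr heq]
  have : cfc (fun s : ℝ => 1 - s) C
      = cfc (fun _ : ℝ => (1:ℝ)) C - cfc (fun s : ℝ => s) C := cfc_sub _ _ C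
  rw [this, cfc_const 1 C, cfc_id' ℝ C, map_one]

include hsa in
lemma sqG_comm_sqR : sqG C * sqR C = sqR C * sqG C := by
  rw [sqG, sqR, ← cfc_mul _ _ C, ← cfc_mul _ _ C]
  apply cfc_congr
  intro t _
  exact mul_comm _ _

include hsa in
lemma sqS_mul_self : sqS C * sqS C = sqG C * sqR C := by
  rw [sqS, sqG, sqR, ← cfc_mul _ _ C, ← cfc_mul _ _ C]
  apply cfc_congr
  intro t _
  exact Real.mul_self_sqrt (by positivity)

lemma sqG_isSelfAdjoint : IsSelfAdjoint (sqG C) := cfc_predicate _ C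
lemma sqR_isSelfAdjoint : IsSelfAdjoint (sqR C) := cfc_predicate _ C
lemma sqS_isSelfAdjoint : IsSelfAdjoint (sqS C) := cfc_predicate _ C

lemma sqG_symm : ∀ a b : H, ⟪sqG C a, b⟫ = ⟪a, sqG C b⟫ := fun a b =>
  ContinuousLinearMap.isSelfAdjoint_iff_isSymmetric.mp (sqG_isSelfAdjoint (C := C)) a b
lemma sqR_symm : ∀ a b : H, ⟪sqR C a, b⟫ = ⟪a, sqR C b⟫ := fun a b =>
  ContinuousLinearMap.isSelfAdjoint_iff_isSymmetric.mp (sqR_isSelfAdjoint (C := C)) a b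
lemma sqS_symm : ∀ a b : H, ⟪sqS C a, b⟫ = ⟪a, sqS C b⟫ := fun a b =>
  ContinuousLinearMap.isSelfAdjoint_iff_isSymmetric.mp (sqS_isSelfAdjoint (C := C)) a b

end CFCPack

section Final

variable (φ ψ : ℕ → H)

theorem main
    (hbi : ∀ n m, ⟪ψ n, φ m⟫ = if n = m then (1 : ℂ) else 0)
    (hcompφ : Dense ((Submodule.span ℂ (Set.range φ) : Submodule ℂ H) : Set H))
    (hcompψ : Dense ((Submodule.span ℂ (Set.range ψ) : Submodule ℂ H) : Set H)) :
    ∃ (E F : H →ₗ.[ℂ] H) (e : ℕ → H),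
    IsSelfAdjoint E ∧ IsSelfAdjoint F ∧
    (∀ f : E.domain, (f : H) ≠ 0 → 0 < (RCLike.re ⟪E f, (f : H)⟫)) ∧
    (∀ f : F.domain, (f : H) ≠ 0 → 0 < (RCLike.re ⟪F f, (f : H)⟫)) ∧
    (∀ x : E.domain, ∃ h : E x ∈ F.domain, F ⟨E x, h⟩ = (x : H)) ∧
    (∀ y : F.domain, ∃ h : F y ∈ E.domain, E ⟨F y, h⟩ = (y : H)) ∧
    (Orthonormal ℂ e ∧
      Dense ((Submodule.span ℂ (Set.range e) : Submodule ℂ H) : Set H)) ∧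
    ∀ n, ∃ (h1 : e n ∈ E.domain) (_ : e n ∈ F.domain), φ n = E ⟨e n, h1⟩ := by
  -- linear independence of φ
  have hind : LinearIndependent ℂ φ := by
    rw [linearIndependent_iff']
    intro s g hsum i hi
    have h0 := congrArg (fun x => ⟪ψ i, x⟫) hsum
    simp only [inner_sum, inner_smul_right, inner_zero_right, hbi, mul_ite, mul_one,
      mul_zero, Finset.sum_ite_eq, hi, if_true] at h0
    exact h0
  -- the Gram-Schmidt orthonormal basis
  set u : ℕ → H := InnerProductSpace.gramSchmidtNormed ℂ φ with hudef
  have hu : Orthonormal ℂ u := InnerProductSpace.gramSchmidtNormed_orthonormal hind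
  have huspan : Submodule.span ℂ (Set.range u) = Submodule.span ℂ (Set.range φ) := by
    have h1 := InnerProductSpace.span_gramSchmidtNormed (𝕜 := ℂ) φ Set.univ
    rw [Set.image_univ, Set.image_univ] at h1
    rw [hudef, h1, InnerProductSpace.span_gramSchmidt]
  have hucomp : Dense ((Submodule.span ℂ (Set.range u) : Submodule ℂ H) : Set H) := by
    rw [huspan]; exact hcompφ
  -- the operator C and its square roots
  set C : H →L[ℂ] H := Cop φ u with hCdef
  have hCsa : IsSelfAdjoint C :=
    ContinuousLinearMap.isSelfAdjoint_iff_isSymmetric.mpr (Cop_isSymmetric φ u)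
  have h0 : ∀ w, 0 ≤ RCLike.re ⟪C w, w⟫ := Cop_inner_nonneg φ u
  have h1 : ∀ w, RCLike.re ⟪C w, w⟫ ≤ ‖w‖ ^ 2 := Cop_inner_le_one φ u
  set G : H →L[ℂ] H := sqG C with hGdef
  set R : H →L[ℂ] H := sqR C with hRdef
  set s0 : H →L[ℂ] H := sqS C with hs0def
  have hG2 : ∀ x, G (G x) = C x := fun x => by
    rw [← ContinuousLinearMap.mul_apply, sqG_mul_self hCsa h0]
  have hR2 : ∀ x, R (R x) = x - C x := fun x => by
    rw [← ContinuousLinearMap.mul_apply, sqR_mul_self hCsa h0 h1]; rfl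
  have hGRcomm : ∀ x, G (R x) = R (G x) := fun x => by
    rw [← ContinuousLinearMap.mul_apply, ← ContinuousLinearMap.mul_apply, sqG_comm_sqR hCsa]
  have hs2 : ∀ x, s0 (s0 x) = G (R x) := fun x => by
    rw [← ContinuousLinearMap.mul_apply, ← ContinuousLinearMap.mul_apply, sqS_mul_self hCsa]
  have hGsym := sqG_symm (C := C)
  have hRsym := sqR_symm (C := C)
  have hs0sym := sqS_symm (C := C)
  -- injectivity
  have hGker : ∀ x, G x = 0 → x = 0 := by
    intro x hx
    apply Cop_inj φ u hcompφ
    rw [← hCdef, ← hG2, hx, map_zero]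
  have hGinj : Function.Injective G := by
    intro a b hab
    have : G (a - b) = 0 := by rw [map_sub, hab, sub_self]
    have := hGker _ this
    exact sub_eq_zero.mp this
  have hRker : ∀ x, R x = 0 → x = 0 := by
    intro x hx
    apply Cop_one_inj φ ψ u hbi hu hucomp hcompψ
    have h2 : x - C x = 0 := by rw [← hR2, hx, map_zero]
    exact (sub_eq_zero.mp h2).symm
  have hRinj : Function.Injective R := by
    intro a b hab
    have : R (a - b) = 0 := by rw [map_sub, hab, sub_self]
    have := hRker _ this
    exact sub_eq_zero.mp this
  -- the operators E = G ∘ R⁻¹ and F = R ∘ G⁻¹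
  refine ⟨opInv R G hRinj, opInv G R hGinj, fun n => R (G (φ n + ψ n)), ?_, ?_, ?_, ?_, ?_, ?_,
    ⟨?_, ?_⟩, ?_⟩
  · -- E self-adjoint
    exact opInv_isSelfAdjoint R G (fun a b => hRsym a b) (fun a b => hGsym a b)
      (fun z => (hGRcomm z).symm) hRinj
      (fun z => by rw [hG2, hR2]; abel)
  · -- F self-adjoint
    exact opInv_isSelfAdjoint G R (fun a b => hGsym a b) (fun a b => hRsym a b)
      (fun z => hGRcomm z) hGinj
      (fun z => by rw [hG2, hR2]; abel)
  · -- E positive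
    intro f hf
    obtain ⟨x, hx⟩ := exists_of_mem_opInv_domain f.2
    rw [opInv_apply' R G hRinj f x hx, ← hx]
    have key : ⟪G x, R x⟫ = ⟪s0 x, s0 x⟫ := by
      calc ⟪G x, R x⟫ = ⟪x, G (R x)⟫ := hGsym x (R x)
        _ = ⟪x, s0 (s0 x)⟫ := by rw [hs2]
        _ = ⟪s0 x, s0 x⟫ := (hs0sym x (s0 x)).symm
    rw [key]
    have hs0x : s0 x ≠ 0 := by
      intro hz
      have : G (R x) = 0 := by rw [← hs2, hz, map_zero]
      rw [hGRcomm] at this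
      have : G x = 0 := hRker _ this
      have : C x = 0 := by rw [← hG2, this, map_zero]
      have : x = 0 := Cop_inj φ u hcompφ x (by rw [← hCdef]; exact this)
      apply hf
      rw [← hx, this, map_zero]
    have := inner_self_eq_norm_sq_to_K (𝕜 := ℂ) (s0 x)
    rw [this]
    rw [← RCLike.ofReal_pow, RCLike.ofReal_re]
    have : ‖s0 x‖ ≠ 0 := norm_ne_zero_iff.mpr hs0x
    positivity
  · -- F positive
    intro f hf
    obtain ⟨x, hx⟩ := exists_of_mem_opInv_domain f.2
    rw [opInv_apply' G R hGinj f x hx, ← hx]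
    have key : ⟪R x, G x⟫ = ⟪s0 x, s0 x⟫ := by
      calc ⟪R x, G x⟫ = ⟪x, R (G x)⟫ := hRsym x (G x)
        _ = ⟪x, s0 (s0 x)⟫ := by rw [hs2, hGRcomm]
        _ = ⟪s0 x, s0 x⟫ := (hs0sym x (s0 x)).symm
    rw [key]
    have hs0x : s0 x ≠ 0 := by
      intro hz
      have : G (R x) = 0 := by rw [← hs2, hz, map_zero]
      have : R x = 0 := hGker _ this
      have : x = 0 := hRker _ this
      apply hf
      rw [← hx, this, map_zero]
    have := inner_self_eq_norm_sq_to_K (𝕜 := ℂ) (s0 x)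
    rw [this, ← RCLike.ofReal_pow, RCLike.ofReal_re]
    have : ‖s0 x‖ ≠ 0 := norm_ne_zero_iff.mpr hs0x
    positivity
  · -- F ∘ E = id
    intro x
    obtain ⟨y, hy⟩ := exists_of_mem_opInv_domain x.2
    have hEx : (opInv R G hRinj) x = G y := opInv_apply' R G hRinj x y hy
    have hmem : (opInv R G hRinj) x ∈ (opInv G R hGinj).domain := by
      rw [hEx]; exact ⟨y, rfl⟩
    refine ⟨hmem, ?_⟩
    have := opInv_apply' G R hGinj ⟨(opInv R G hRinj) x, hmem⟩ y hEx.symm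
    rw [this, hy]
  · -- E ∘ F = id
    intro x
    obtain ⟨y, hy⟩ := exists_of_mem_opInv_domain x.2
    have hFx : (opInv G R hGinj) x = R y := opInv_apply' G R hGinj x y hy
    have hmem : (opInv G R hGinj) x ∈ (opInv R G hRinj).domain := by
      rw [hFx]; exact ⟨y, rfl⟩
    refine ⟨hmem, ?_⟩
    have := opInv_apply' R G hRinj ⟨(opInv G R hGinj) x, hmem⟩ y hFx.symm
    rw [this, hy]
  · -- orthonormality of e
    rw [orthonormal_iff_ite]
    intro n m
    have hCG : ∀ x, C (G x) = G (C x) := by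
      intro x
      rw [← hG2, ← hG2, hG2]
    have hCvm : C (φ m + ψ m) = φ m := Cop_vn φ ψ u hbi hu m
    have hCvn : C (φ n + ψ n) = φ n := Cop_vn φ ψ u hbi hu n
    have hRRG : R (R (G (φ m + ψ m))) = G (ψ m) := by
      rw [hR2 (G (φ m + ψ m)), hCG (φ m + ψ m), hCvm, ← map_sub]
      congr 1
      abel
    calc ⟪R (G (φ n + ψ n)), R (G (φ m + ψ m))⟫
        = ⟪G (φ n + ψ n), R (R (G (φ m + ψ m)))⟫ := hRsym _ _
      _ = ⟪G (φ n + ψ n), G (ψ m)⟫ := by rw [hRRG]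
      _ = ⟪G (G (φ n + ψ n)), ψ m⟫ := (hGsym _ _).symm
      _ = ⟪C (φ n + ψ n), ψ m⟫ := by rw [hG2]
      _ = ⟪φ n, ψ m⟫ := by rw [hCvn]
      _ = if n = m then 1 else 0 := by
          rw [← inner_conj_symm, hbi m n]
          by_cases h : n = m
          · simp [h]
          · have h2 : ¬ (m = n) := fun hc => h hc.symm
            simp [h, h2]
  · -- density of the span of e
    have hzero : ∀ z, (∀ k, ⟪R (G (φ k + ψ k)), z⟫ = 0) → z = 0 := by
      intro z hz
      have h3 : ∀ k, ⟪φ k + ψ k, G (R z)⟫ = 0 := by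
        intro k
        calc ⟪φ k + ψ k, G (R z)⟫ = ⟪G (φ k + ψ k), R z⟫ := (hGsym _ _).symm
          _ = ⟪R (G (φ k + ψ k)), z⟫ := (hRsym _ _).symm
          _ = 0 := hz k
      have h4 : G (R z) = 0 :=
        ranG_orthog_vn φ ψ u hbi hu G (fun a b => hGsym a b) hG2 hGinj (R z) h3
      exact hRker z (hGker (R z) h4)
    rw [Submodule.dense_iff_topologicalClosure_eq_top,
      Submodule.topologicalClosure_eq_top_iff, Submodule.eq_bot_iff]
    intro z hz
    apply hzero
    intro k
    exact (Submodule.mem_orthogonal _ z).mp hz _ (Submodule.subset_span ⟨k, rfl⟩)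
  · -- φ n = E e n
    intro n
    have h1 : R (G (φ n + ψ n)) ∈ (opInv R G hRinj).domain := ⟨G (φ n + ψ n), rfl⟩
    have h2 : R (G (φ n + ψ n)) ∈ (opInv G R hGinj).domain := by
      refine ⟨R (φ n + ψ n), ?_⟩
      exact hGRcomm (φ n + ψ n)
    refine ⟨h1, h2, ?_⟩
    have h3 := opInv_apply' R G hRinj ⟨R (G (φ n + ψ n)), h1⟩ (G (φ n + ψ n)) rfl
    rw [h3, hG2, Cop_vn φ ψ u hbi hu n]

end Final

end RegularGRS

end RegularGRSAux

/-- Every regular sequence is a generalized Riesz system: if `{φ_n}` is minimal and complete and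
its biorthogonal sequence `{ψ_n}` is also complete, then `{φ_n}` is a GRS. -/
theorem regular_is_GRS
    (φ ψ : ℕ → H)
    (hbi : ∀ n m, ⟪ψ n, φ m⟫ = if n = m then (1 : ℂ) else 0)
    (hcompφ : Dense ((Submodule.span ℂ (Set.range φ) : Submodule ℂ H) : Set H))
    (hcompψ : Dense ((Submodule.span ℂ (Set.range ψ) : Submodule ℂ H) : Set H)) :
    IsGRS φ := by
  obtain ⟨E, F, e, h1, h2, h3, h4, h5, h6, h7, h8⟩ := RegularGRS.main φ ψ hbi hcompφ hcompψ
  exact ⟨E, F, e, h1, h2, (fun f hf => h3 f hf), (fun f hf => h4 f hf), h5, h6, h7, h8⟩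
end
end

section
/- A sequence {φ_n} in a Hilbert space H is a Riesz basis with bounds 0 < a ≤ b (i.e., a‖f‖² ≤ Σ_n |⟨f, φ_n⟩|² ≤ b‖f‖² for all f ∈ H, together with minimality and completeness) if and only if there exist a bounded self-adjoint operator Q with spectrum σ(Q) ⊆ [ln a, ln b] and an orthonormal basis {e_n} of H such that φ_n = e^{Q/2}e_n. -/
open scoped ComplexInnerProductSpace

noncomputable section

variable {H : Type*} [NormedAddCommGroup H] [InnerProductSpace ℂ H] [CompleteSpace H]

namespace RieszBasisAux

open scoped ENNReal NNReal

lemma sym {T : H →L[ℂ] H} (hT : IsSelfAdjoint T) (x y : H) : ⟪T x, y⟫ = ⟪x, T y⟫ :=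
  hT.isSymmetric x y

omit [CompleteSpace H] in
lemma dense_image_equiv (P : H ≃L[ℂ] H) {s : Set H} (hs : Dense s) : Dense (⇑P '' s) := by
  have h := P.toHomeomorph.image_closure s
  rw [hs.closure_eq] at h
  rw [dense_iff_closure_eq]
  rw [show ⇑P.toHomeomorph = ⇑P from rfl] at h
  rw [← h]
  exact Set.eq_univ_of_forall fun x => ⟨P.symm x, trivial, by simp⟩

omit [CompleteSpace H] in
lemma dense_span_image (P : H ≃L[ℂ] H) {v : ℕ → H}
    (hv : Dense ((Submodule.span ℂ (Set.range v) : Submodule ℂ H) : Set H)) :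
    Dense ((Submodule.span ℂ (Set.range (fun n => P (v n))) : Submodule ℂ H) : Set H) := by
  have hr : Set.range (fun n => P (v n)) = ⇑P '' Set.range v := by
    rw [← Set.range_comp]; rfl
  rw [hr, show ⇑P '' Set.range v = ⇑(P : H →ₗ[ℂ] H) '' Set.range v from rfl, Submodule.span_image]
  have := dense_image_equiv P hv
  simpa using this

lemma parseval {e : ℕ → H} (he : IsONB e) (x : H) :
    HasSum (fun n => ‖⟪x, e n⟫‖ ^ 2) (‖x‖ ^ 2) := by
  have hsp : ⊤ ≤ (Submodule.span ℂ (Set.range e)).topologicalClosure := by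
    rw [top_le_iff, ← Submodule.dense_iff_topologicalClosure_eq_top]
    exact he.2
  let b : HilbertBasis ℕ ℂ H := HilbertBasis.mk he.1 hsp
  have hb : ⇑b = e := HilbertBasis.coe_mk _ _
  have h := b.hasSum_inner_mul_inner x x
  rw [hb] at h
  have h2 : ∀ n, ⟪x, e n⟫ * ⟪e n, x⟫ = ((‖⟪x, e n⟫‖ ^ 2 : ℝ) : ℂ) := by
    intro n
    rw [← inner_conj_symm x (e n), Complex.conj_mul']
    norm_cast
    rw [RCLike.norm_conj]
  simp_rw [h2] at h
  have h3 := (Complex.reCLM.hasSum h)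
  have hre : Complex.reCLM (inner ℂ x x : ℂ) = ‖x‖ ^ 2 := inner_self_eq_norm_sq (𝕜 := ℂ) x
  rw [hre] at h3
  convert h3 using 1
  funext n
  simp only [Complex.reCLM_apply, Complex.ofReal_re]

lemma inner_le_of_le_op {T S : H →L[ℂ] H} (h : T ≤ S) (f : H) :
    Complex.reCLM ⟪f, T f⟫ ≤ Complex.reCLM ⟪f, S f⟫ := by
  rw [ContinuousLinearMap.le_def] at h
  have := h.inner_nonneg_right f
  simp only [ContinuousLinearMap.sub_apply, inner_sub_right, map_sub] at this
  replace this : (0:ℝ) ≤ (⟪f, S f⟫).re - (⟪f, T f⟫).re := by simpa using (Complex.le_def.mp this).1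
  change (⟪f, T f⟫).re ≤ (⟪f, S f⟫).re
  linarith

lemma inner_algebraMap (r : ℝ) (f : H) :
    Complex.reCLM ⟪f, (algebraMap ℝ (H →L[ℂ] H) r) f⟫ = r * ‖f‖ ^ 2 := by
  rw [Algebra.algebraMap_eq_smul_one]
  simp only [ContinuousLinearMap.smul_apply, ContinuousLinearMap.one_apply]
  have : (r • f) = (r : ℂ) • f := by simp
  rw [this, inner_smul_right]
  have h2 : Complex.reCLM ((r:ℂ) * ⟪f, f⟫) = r * Complex.reCLM (⟪f, f⟫ : ℂ) := by
    simp [Complex.mul_re]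
  have h3 : Complex.reCLM (⟪f, f⟫ : ℂ) = ‖f‖ ^ 2 := inner_self_eq_norm_sq (𝕜 := ℂ) f
  rw [h2, h3]

lemma op_le_of_inner {S : H →L[ℂ] H} (hS : IsSelfAdjoint S) {a : ℝ}
    (h : ∀ f : H, a * ‖f‖ ^ 2 ≤ Complex.reCLM ⟪f, S f⟫) :
    algebraMap ℝ (H →L[ℂ] H) a ≤ S := by
  rw [ContinuousLinearMap.le_def]
  have halg : IsSelfAdjoint (algebraMap ℝ (H →L[ℂ] H) a) :=
    IsSelfAdjoint.algebraMap _ (IsSelfAdjoint.all a)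
  refine ⟨(hS.sub halg).isSymmetric, fun x => ?_⟩
  have hx := h x
  have h2 := inner_algebraMap (H := H) a x
  show (0:ℝ) ≤ Complex.re ⟪(S - algebraMap ℝ (H →L[ℂ] H) a) x, x⟫
  rw [ContinuousLinearMap.sub_apply, inner_sub_left, Complex.sub_re]
  have e1 : Complex.re ⟪S x, x⟫ = Complex.re ⟪x, S x⟫ := inner_re_symm (𝕜 := ℂ) (S x) x
  have e2 : Complex.re ⟪(algebraMap ℝ (H →L[ℂ] H) a) x, x⟫
      = Complex.re ⟪x, (algebraMap ℝ (H →L[ℂ] H) a) x⟫ :=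
    inner_re_symm (𝕜 := ℂ) _ x
  have hx' : a * ‖x‖ ^ 2 ≤ Complex.re ⟪x, S x⟫ := hx
  have h2' : Complex.re ⟪x, (algebraMap ℝ (H →L[ℂ] H) a) x⟫ = a * ‖x‖ ^ 2 := h2
  rw [e1, e2, h2']
  linarith

lemma op_le_of_inner' {S : H →L[ℂ] H} (hS : IsSelfAdjoint S) {b : ℝ}
    (h : ∀ f : H, Complex.reCLM ⟪f, S f⟫ ≤ b * ‖f‖ ^ 2) :
    S ≤ algebraMap ℝ (H →L[ℂ] H) b := by
  rw [ContinuousLinearMap.le_def]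
  have halg : IsSelfAdjoint (algebraMap ℝ (H →L[ℂ] H) b) :=
    IsSelfAdjoint.algebraMap _ (IsSelfAdjoint.all b)
  refine ⟨(halg.sub hS).isSymmetric, fun x => ?_⟩
  have hx := h x
  have h2 := inner_algebraMap (H := H) b x
  show (0:ℝ) ≤ Complex.re ⟪(algebraMap ℝ (H →L[ℂ] H) b - S) x, x⟫
  rw [ContinuousLinearMap.sub_apply, inner_sub_left, Complex.sub_re]
  have e1 : Complex.re ⟪S x, x⟫ = Complex.re ⟪x, S x⟫ := inner_re_symm (𝕜 := ℂ) (S x) x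
  have e2 : Complex.re ⟪(algebraMap ℝ (H →L[ℂ] H) b) x, x⟫
      = Complex.re ⟪x, (algebraMap ℝ (H →L[ℂ] H) b) x⟫ :=
    inner_re_symm (𝕜 := ℂ) _ x
  have hx' : Complex.re ⟪x, S x⟫ ≤ b * ‖x‖ ^ 2 := hx
  have h2' : Complex.re ⟪x, (algebraMap ℝ (H →L[ℂ] H) b) x⟫ = b * ‖x‖ ^ 2 := h2
  rw [e1, e2, h2']
  linarith

omit [CompleteSpace H] in
lemma mem2 (φ : ℕ → H) (hsum : ∀ f : H, Summable fun n => ‖⟪f, φ n⟫‖ ^ 2) (f : H) :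
    Memℓp (fun n => (⟪φ n, f⟫ : ℂ)) 2 := by
  apply memℓp_gen
  have h2 : (2 : ℝ≥0∞).toReal = (2 : ℝ) := by norm_num
  rw [h2]
  apply Summable.congr (hsum f)
  intro n
  rw [← Real.rpow_natCast ‖⟪f, φ n⟫‖ 2, norm_inner_symm]
  norm_num

def CL (φ : ℕ → H) (hsum : ∀ f : H, Summable fun n => ‖⟪f, φ n⟫‖ ^ 2) (b : ℝ) (hb : 0 ≤ b)
    (hbd : ∀ f : H, ∑' n, ‖⟪f, φ n⟫‖ ^ 2 ≤ b * ‖f‖ ^ 2) :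
    H →L[ℂ] lp (fun _ : ℕ => ℂ) 2 :=
  LinearMap.mkContinuous
    { toFun := fun f => ⟨fun n => ⟪φ n, f⟫, mem2 φ hsum f⟩
      map_add' := fun f g => by
        apply Subtype.ext
        funext n
        simp [inner_add_right]
        rfl
      map_smul' := fun c f => by
        apply Subtype.ext
        funext n
        simp [inner_smul_right] }
    (Real.sqrt b)
    (by
      intro f
      set g : lp (fun _ : ℕ => ℂ) 2 := ⟨fun n => ⟪φ n, f⟫, mem2 φ hsum f⟩ with hg
      show ‖g‖ ≤ Real.sqrt b * ‖f‖
      have h := lp.norm_rpow_eq_tsum (p := 2) (by norm_num) g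
      rw [show (2 : ℝ≥0∞).toReal = (2 : ℝ) by norm_num] at h
      have hsq : ‖g‖ ^ 2 = ∑' n, ‖⟪f, φ n⟫‖ ^ 2 := by
        rw [← Real.rpow_natCast ‖g‖ 2]
        push_cast
        rw [h]
        congr 1
        funext n
        rw [show ((g : ∀ _ : ℕ, ℂ) n) = ⟪φ n, f⟫ from rfl]
        rw [← Real.rpow_natCast ‖⟪f, φ n⟫‖ 2, norm_inner_symm]
        norm_num
      have hle : ‖g‖ ^ 2 ≤ (Real.sqrt b * ‖f‖) ^ 2 := by
        rw [hsq, mul_pow, Real.sq_sqrt hb]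
        exact hbd f
      calc ‖g‖ = Real.sqrt (‖g‖ ^ 2) := (Real.sqrt_sq (norm_nonneg g)).symm
        _ ≤ Real.sqrt ((Real.sqrt b * ‖f‖) ^ 2) := Real.sqrt_le_sqrt hle
        _ = Real.sqrt b * ‖f‖ := Real.sqrt_sq (by positivity))

lemma CL_apply (φ : ℕ → H) (hsum) (b : ℝ) (hb) (hbd) (f : H) (n : ℕ) :
    (CL φ hsum b hb hbd f : ∀ _ : ℕ, ℂ) n = ⟪φ n, f⟫ := rfl

lemma CL_norm_sq (φ : ℕ → H) (hsum) (b : ℝ) (hb) (hbd) (f : H) :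
    ‖CL φ hsum b hb hbd f‖ ^ 2 = ∑' n, ‖⟪f, φ n⟫‖ ^ 2 := by
  have h := lp.norm_rpow_eq_tsum (p := 2) (by norm_num) (CL φ hsum b hb hbd f)
  have h2 : (2 : ℝ≥0∞).toReal = (2 : ℝ) := by norm_num
  rw [h2] at h
  rw [← Real.rpow_natCast ‖CL φ hsum b hb hbd f‖ 2]
  push_cast
  rw [h]
  congr 1
  funext n
  rw [CL_apply]
  rw [← Real.rpow_natCast ‖⟪f, φ n⟫‖ 2, norm_inner_symm]
  norm_num

end RieszBasisAux

set_option maxHeartbeats 1000000 in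
open RieszBasisAux in
/-- A sequence `{φ_n}` is a Riesz basis with bounds `0 < a ≤ b` (minimal, complete, and
`a‖f‖² ≤ Σ_n |⟨f, φ_n⟩|² ≤ b‖f‖²` for all `f`) if and only if there exist a bounded
self-adjoint operator `Q` with `σ(Q) ⊆ [ln a, ln b]` and an orthonormal basis `{e_n}` such that
`φ_n = e^{Q/2} e_n`. -/
theorem riesz_basis_iff_bounded_Q
    (φ : ℕ → H) (a b : ℝ) (ha : 0 < a) (hab : a ≤ b) :
    ((∃ ψ : ℕ → H, ∀ n m, ⟪ψ n, φ m⟫ = if n = m then (1 : ℂ) else 0) ∧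
      Dense ((Submodule.span ℂ (Set.range φ) : Submodule ℂ H) : Set H) ∧
      (∀ f : H, Summable fun n => ‖⟪f, φ n⟫‖ ^ 2) ∧
      (∀ f : H, a * ‖f‖ ^ 2 ≤ ∑' n, ‖⟪f, φ n⟫‖ ^ 2 ∧ ∑' n, ‖⟪f, φ n⟫‖ ^ 2 ≤ b * ‖f‖ ^ 2))
    ↔
    (∃ (Q : H →L[ℂ] H) (e : ℕ → H), IsSelfAdjoint Q ∧
      spectrum ℝ Q ⊆ Set.Icc (Real.log a) (Real.log b) ∧ IsONB e ∧
      ∀ n, φ n = cfc (fun x : ℝ => Real.exp (x / 2)) Q (e n)) := by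
  constructor
  · rintro ⟨⟨ψ, hψ⟩, hdense, hsum, hbounds⟩
    set C : H →L[ℂ] lp (fun _ : ℕ => ℂ) 2 :=
      CL φ hsum b (le_trans ha.le hab) (fun f => (hbounds f).2) with hC
    set S : H →L[ℂ] H := ContinuousLinearMap.adjoint C ∘L C with hSdef
    have hS : IsSelfAdjoint S := by
      have := (IsSelfAdjoint.one
        (R := lp (fun _ : ℕ => ℂ) 2 →L[ℂ] lp (fun _ : ℕ => ℂ) 2)).adjoint_conj C
      simpa [ContinuousLinearMap.one_def] using this
    have hinner : ∀ f : H, Complex.reCLM ⟪f, S f⟫ = ∑' n, ‖⟪f, φ n⟫‖ ^ 2 := by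
      intro f
      rw [show S f = (ContinuousLinearMap.adjoint C) (C f) from rfl,
        ContinuousLinearMap.adjoint_inner_right]
      rw [show Complex.reCLM ⟪C f, C f⟫ = ‖C f‖ ^ 2 from inner_self_eq_norm_sq (𝕜 := ℂ) (C f)]
      exact CL_norm_sq φ hsum b _ _ f
    have h1 : algebraMap ℝ (H →L[ℂ] H) a ≤ S :=
      op_le_of_inner hS (fun f => by rw [hinner f]; exact (hbounds f).1)
    have h2 : S ≤ algebraMap ℝ (H →L[ℂ] H) b :=
      op_le_of_inner' hS (fun f => by rw [hinner f]; exact (hbounds f).2)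
    have hspec : spectrum ℝ S ⊆ Set.Icc a b := fun x hx =>
      ⟨(algebraMap_le_iff_le_spectrum hS).mp h1 x hx,
        (le_algebraMap_iff_spectrum_le hS).mp h2 x hx⟩
    have hpos : ∀ x ∈ spectrum ℝ S, 0 < x := fun x hx => lt_of_lt_of_le ha (hspec hx).1
    have hsqrt_cont : ContinuousOn Real.sqrt (spectrum ℝ S) := Real.continuous_sqrt.continuousOn
    have hr_cont : ContinuousOn (fun x : ℝ => (Real.sqrt x)⁻¹) (spectrum ℝ S) :=
      hsqrt_cont.inv₀ (fun x hx => Real.sqrt_ne_zero'.mpr (hpos x hx))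
    have hinv_cont : ContinuousOn (fun x : ℝ => x⁻¹) (spectrum ℝ S) :=
      continuousOn_inv₀.mono (fun x hx => ne_of_gt (hpos x hx))
    have hlog_cont : ContinuousOn Real.log (spectrum ℝ S) :=
      Real.continuousOn_log.mono (fun x hx => ne_of_gt (hpos x hx))
    set R := cfc (fun x : ℝ => (Real.sqrt x)⁻¹) S with hRdef
    set T := cfc Real.sqrt S with hTdef
    set Sinv := cfc (fun x : ℝ => x⁻¹) S with hSinvdef
    set Q := cfc Real.log S with hQdef
    have hR : IsSelfAdjoint R := cfc_predicate _ S
    have hRT : R * T = 1 := by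
      rw [hRdef, hTdef, ← cfc_mul _ _ S hr_cont hsqrt_cont]
      have : cfc (fun x : ℝ => (Real.sqrt x)⁻¹ * Real.sqrt x) S = cfc (fun _ : ℝ => (1:ℝ)) S :=
        cfc_congr (fun x hx => inv_mul_cancel₀ (Real.sqrt_ne_zero'.mpr (hpos x hx)))
      rw [this, cfc_const 1 S hS, map_one]
    have hTR : T * R = 1 := by
      rw [hRdef, hTdef, ← cfc_mul _ _ S hsqrt_cont hr_cont]
      have : cfc (fun x : ℝ => Real.sqrt x * (Real.sqrt x)⁻¹) S = cfc (fun _ : ℝ => (1:ℝ)) S :=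
        cfc_congr (fun x hx => mul_inv_cancel₀ (Real.sqrt_ne_zero'.mpr (hpos x hx)))
      rw [this, cfc_const 1 S hS, map_one]
    have hRR : R * R = Sinv := by
      rw [hRdef, hSinvdef, ← cfc_mul _ _ S hr_cont hr_cont]
      exact cfc_congr (fun x hx => by
        rw [← mul_inv, Real.mul_self_sqrt (hpos x hx).le])
    have hSSinv : S * Sinv = 1 := by
      nth_rewrite 1 [← cfc_id ℝ S hS]
      rw [hSinvdef, ← cfc_mul _ _ S continuousOn_id hinv_cont]
      have : cfc (fun x : ℝ => id x * x⁻¹) S = cfc (fun _ : ℝ => (1:ℝ)) S :=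
        cfc_congr (fun x hx => mul_inv_cancel₀ (ne_of_gt (hpos x hx)))
      rw [this, cfc_const 1 S hS, map_one]
    have hQsa : IsSelfAdjoint Q := cfc_predicate _ S
    have hspecQ : spectrum ℝ Q ⊆ Set.Icc (Real.log a) (Real.log b) := by
      rw [hQdef, cfc_map_spectrum (f := Real.log) (a := S) hS hlog_cont]
      rintro y ⟨x, hx, rfl⟩
      exact ⟨Real.log_le_log ha (hspec hx).1, Real.log_le_log (hpos x hx) (hspec hx).2⟩
    have hcomp : cfc (fun x : ℝ => Real.exp (x / 2)) Q = T := by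
      rw [hQdef, ← cfc_comp (fun x : ℝ => Real.exp (x / 2)) Real.log S hS
          (Continuous.continuousOn (by fun_prop)) hlog_cont, hTdef]
      exact cfc_congr (fun x hx => by
        show Real.exp (Real.log x / 2) = Real.sqrt x
        rw [Real.sqrt_eq_rpow, Real.rpow_def_of_pos (hpos x hx), mul_one_div])
    -- synthesis operator and biorthogonality
    have hCapp : ∀ (f : H) (n : ℕ), (C f : ∀ _ : ℕ, ℂ) n = ⟪φ n, f⟫ := fun f n => rfl
    have hsingle : ∀ k, ContinuousLinearMap.adjoint C (lp.single 2 k 1) = φ k := by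
      intro k
      apply ext_inner_left ℂ
      intro h
      rw [ContinuousLinearMap.adjoint_inner_right, lp.inner_single_right, hCapp h k,
        ← inner_conj_symm h (φ k)]
      simp
    have hsyn : ∀ g : H, HasSum (fun k => ⟪φ k, g⟫ • φ k) (S g) := by
      intro g
      have h := lp.hasSum_single (E := fun _ : ℕ => ℂ) (p := 2) (by norm_num) (C g)
      have h2 := (ContinuousLinearMap.adjoint C).hasSum h
      have key : ∀ k, (ContinuousLinearMap.adjoint C) (lp.single 2 k ((C g : ∀ _ : ℕ, ℂ) k))
          = ((C g : ∀ _ : ℕ, ℂ) k) • φ k := by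
        intro k
        have hq : lp.single (E := fun _ : ℕ => ℂ) 2 k ((C g : ∀ _ : ℕ, ℂ) k)
            = ((C g : ∀ _ : ℕ, ℂ) k) • lp.single 2 k 1 := by
          rw [← lp.single_smul]
          norm_num
        rw [hq, map_smul, hsingle k]
      simp_rw [key, hCapp g] at h2
      exact h2
    have hkey : ∀ (n : ℕ) (g : H), ⟪ψ n, S g⟫ = ⟪φ n, g⟫ := by
      intro n g
      have h2 := (innerSL ℂ (ψ n)).hasSum (hsyn g)
      have hterm : (fun k => (innerSL ℂ (ψ n)) (⟪φ k, g⟫ • φ k))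
          = fun k => if k = n then ⟪φ n, g⟫ else 0 := by
        funext k
        rw [show (innerSL ℂ (ψ n)) (⟪φ k, g⟫ • φ k) = ⟪ψ n, ⟪φ k, g⟫ • φ k⟫ from rfl,
          inner_smul_right, hψ n k]
        by_cases h : n = k
        · subst h; simp
        · rw [if_neg h, if_neg (fun hh => h hh.symm)]
          ring
      rw [hterm] at h2
      exact h2.unique (hasSum_ite_eq n ⟪φ n, g⟫)
    have hbiorth : ∀ n m, ⟪φ n, Sinv (φ m)⟫ = if n = m then (1:ℂ) else 0 := by
      intro n m
      have h := hkey n (Sinv (φ m))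
      rw [show S (Sinv (φ m)) = (S * Sinv) (φ m) from rfl, hSSinv] at h
      simp only [ContinuousLinearMap.one_apply] at h
      rw [← h, hψ n m]
    refine ⟨Q, fun n => R (φ n), hQsa, hspecQ, ⟨?_, ?_⟩, ?_⟩
    · rw [orthonormal_iff_ite]
      intro n m
      rw [sym hR (φ n) (R (φ m)),
        show R (R (φ m)) = (R * R) (φ m) from rfl, hRR]
      exact hbiorth n m
    · have hEq : (fun n => R (φ n)) = fun n => (ContinuousLinearEquiv.equivOfInverse R T
          (fun x => by rw [← ContinuousLinearMap.mul_apply, hTR]; rfl)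
          (fun x => by rw [← ContinuousLinearMap.mul_apply, hRT]; rfl)) (φ n) := rfl
      rw [hEq]
      exact dense_span_image _ hdense
    · intro n
      rw [hcomp, show T (R (φ n)) = (T * R) (φ n) from rfl, hTR]
      rfl
  · rintro ⟨Q, e, hQ, hspec, he, hφ⟩
    set P : H →L[ℂ] H := cfc (fun x : ℝ => Real.exp (x / 2)) Q with hPdef
    set P' : H →L[ℂ] H := cfc (fun x : ℝ => Real.exp (-(x / 2))) Q with hP'def
    have hP : IsSelfAdjoint P := cfc_predicate _ Q
    have hP' : IsSelfAdjoint P' := cfc_predicate _ Q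
    have hPP' : P * P' = 1 := by
      rw [hPdef, hP'def, ← cfc_mul _ _ Q]
      have : cfc (fun x : ℝ => Real.exp (x / 2) * Real.exp (-(x / 2))) Q
          = cfc (fun _ : ℝ => (1:ℝ)) Q := cfc_congr (fun x _ => by rw [← Real.exp_add]; simp)
      rw [this, cfc_const 1 Q, map_one]
    have hP'P : P' * P = 1 := by
      rw [hPdef, hP'def, ← cfc_mul _ _ Q]
      have : cfc (fun x : ℝ => Real.exp (-(x / 2)) * Real.exp (x / 2)) Q
          = cfc (fun _ : ℝ => (1:ℝ)) Q := cfc_congr (fun x _ => by rw [← Real.exp_add]; simp)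
      rw [this, cfc_const 1 Q, map_one]
    have happ : ∀ (A B : H →L[ℂ] H) (x : H), (A * B) x = A (B x) := fun _ _ _ => rfl
    have hφP : ∀ n, φ n = P (e n) := hφ
    refine ⟨⟨fun n => P' (e n), fun n m => ?_⟩, ?_, ?_, ?_⟩
    · rw [hφP m, sym hP' (e n) (P (e m)), ← happ, hP'P]
      exact orthonormal_iff_ite.mp he.1 n m
    · have hEq : φ = fun n => (ContinuousLinearEquiv.equivOfInverse P P'
          (fun x => by rw [← happ, hP'P]; rfl) (fun x => by rw [← happ, hPP']; rfl)) (e n) := by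
        funext n; exact hφP n
      rw [hEq]
      exact dense_span_image _ he.2
    · intro f
      have key : ∀ n, ⟪f, φ n⟫ = ⟪P f, e n⟫ := fun n => by
        rw [hφP n]; exact (sym hP f (e n)).symm
      have hs := parseval he (P f)
      simp_rw [← key] at hs
      exact hs.summable
    · intro f
      have key : ∀ n, ⟪f, φ n⟫ = ⟪P f, e n⟫ := fun n => by
        rw [hφP n]; exact (sym hP f (e n)).symm
      have hs := parseval he (P f)
      simp_rw [← key] at hs
      rw [hs.tsum_eq]
      have hsq : ‖P f‖ ^ 2 = Complex.reCLM ⟪f, (P * P) f⟫ := by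
        rw [happ, ← sym hP f (P f)]
        exact (inner_self_eq_norm_sq (𝕜 := ℂ) (P f)).symm
      have hPP : P * P = cfc Real.exp Q := by
        rw [hPdef, ← cfc_mul _ _ Q]
        exact cfc_congr (fun x _ => by rw [← Real.exp_add, add_halves])
      have h1 : algebraMap ℝ (H →L[ℂ] H) a ≤ cfc Real.exp Q := by
        apply algebraMap_le_cfc Real.exp a Q
        intro x hx
        calc a = Real.exp (Real.log a) := (Real.exp_log ha).symm
          _ ≤ Real.exp x := Real.exp_le_exp.mpr (hspec hx).1
      have h2 : cfc Real.exp Q ≤ algebraMap ℝ (H →L[ℂ] H) b := by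
        apply cfc_le_algebraMap Real.exp b Q
        intro x hx
        calc Real.exp x ≤ Real.exp (Real.log b) := Real.exp_le_exp.mpr (hspec hx).2
          _ = b := Real.exp_log (lt_of_lt_of_le ha hab)
      constructor
      · have h3 := inner_le_of_le_op h1 f
        rw [inner_algebraMap] at h3
        rw [hsq, hPP]; exact h3
      · have h3 := inner_le_of_le_op h2 f
        rw [inner_algebraMap] at h3
        rw [hsq, hPP]; exact h3
end
end

section
/- Let J be a fundamental symmetry on a Hilbert space H and let {φ_n} be a complete J-orthonormal sequence. Then {φ_n} is a Bessel sequence if and only if {φ_n} is a Riesz basis. -/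
open scoped ComplexInnerProductSpace

set_option maxHeartbeats 1000000

noncomputable section

variable {H : Type*} [NormedAddCommGroup H] [InnerProductSpace ℂ H] [CompleteSpace H]

/-- Auxiliary: Cauchy–Schwarz for infinite sums of nonnegative reals: summability. -/
lemma aux_cs_summable {a b : ℕ → ℝ} (ha : Summable fun n => a n ^ 2)
    (hb : Summable fun n => b n ^ 2) : Summable fun n => |a n| * |b n| := by
  refine Summable.of_nonneg_of_le (fun n => by positivity) (fun n => ?_)
    (((ha.add hb).mul_left (1 / 2)))
  have h1 : 2 * |a n| * |b n| ≤ |a n| ^ 2 + |b n| ^ 2 := two_mul_le_add_sq _ _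
  have h2 : |a n| ^ 2 = a n ^ 2 := sq_abs _
  have h3 : |b n| ^ 2 = b n ^ 2 := sq_abs _
  nlinarith

/-- Auxiliary: Cauchy–Schwarz for infinite sums of nonnegative reals. -/
lemma aux_cs_tsum {a b : ℕ → ℝ} (ha : Summable fun n => a n ^ 2)
    (hb : Summable fun n => b n ^ 2) :
    (∑' n, |a n| * |b n|) ≤ Real.sqrt (∑' n, a n ^ 2) * Real.sqrt (∑' n, b n ^ 2) := by
  refine Summable.tsum_le_of_sum_le (aux_cs_summable ha hb) (fun s => ?_)
  calc ∑ i ∈ s, |a i| * |b i|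
      ≤ Real.sqrt (∑ i ∈ s, |a i| ^ 2) * Real.sqrt (∑ i ∈ s, |b i| ^ 2) :=
        Real.sum_mul_le_sqrt_mul_sqrt s _ _
    _ ≤ Real.sqrt (∑' n, a n ^ 2) * Real.sqrt (∑' n, b n ^ 2) := by
        apply mul_le_mul
        · apply Real.sqrt_le_sqrt
          simp only [sq_abs]
          exact Summable.sum_le_tsum s (fun n _ => sq_nonneg _) ha
        · apply Real.sqrt_le_sqrt
          simp only [sq_abs]
          exact Summable.sum_le_tsum s (fun n _ => sq_nonneg _) hb
        · positivity
        · positivity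

/-- A complete `J`-orthonormal sequence is a Bessel sequence if and only if it is a Riesz basis
(in the sense of the two-sided frame inequality). -/
theorem complete_Jorthonormal_bessel_iff_riesz
    (J : H →L[ℂ] H) (hJsa : IsSelfAdjoint J) (hJ2 : ∀ f : H, J (J f) = f)
    (φ : ℕ → H)
    (hJon : ∀ n m, ‖⟪J (φ n), φ m⟫‖ = if n = m then (1 : ℝ) else 0)
    (hcomp : Dense ((Submodule.span ℂ (Set.range φ) : Submodule ℂ H) : Set H)) :
    (∃ b > (0 : ℝ), ∀ f : H, Summable (fun n => ‖⟪f, φ n⟫‖ ^ 2) ∧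
        ∑' n, ‖⟪f, φ n⟫‖ ^ 2 ≤ b * ‖f‖ ^ 2)
    ↔
    (∃ a b : ℝ, 0 < a ∧ a ≤ b ∧ ∀ f : H, Summable (fun n => ‖⟪f, φ n⟫‖ ^ 2) ∧
        a * ‖f‖ ^ 2 ≤ ∑' n, ‖⟪f, φ n⟫‖ ^ 2 ∧ ∑' n, ‖⟪f, φ n⟫‖ ^ 2 ≤ b * ‖f‖ ^ 2) := by
  constructor
  · rintro ⟨b, hb, hB⟩
    -- J is self-adjoint as a sesquilinear identity
    have hJeq : ContinuousLinearMap.adjoint J = J :=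
      ContinuousLinearMap.isSelfAdjoint_iff'.mp hJsa
    have hadj : ∀ x y : H, ⟪J x, y⟫ = ⟪x, J y⟫ := by
      intro x y
      conv_lhs => rw [← hJeq]
      exact ContinuousLinearMap.adjoint_inner_left J y x
    -- J is an isometry
    have hiso : ∀ x : H, ‖J x‖ = ‖x‖ := by
      intro x
      have h1 : (⟪J x, J x⟫ : ℂ) = ⟪x, x⟫ := by rw [hadj, hJ2]
      rw [norm_eq_sqrt_re_inner (𝕜 := ℂ) (J x), norm_eq_sqrt_re_inner (𝕜 := ℂ) x, h1]
    -- the signs ε n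
    set ε : ℕ → ℂ := fun n => ⟪J (φ n), φ n⟫ with hε
    have hεnorm : ∀ n, ‖ε n‖ = 1 := by intro n; simpa using hJon n n
    -- the coefficients of the biorthogonal system: ψc x n = ⟪ψ n, x⟫
    set ψc : H → ℕ → ℂ := fun x n => (starRingEnd ℂ) (ε n) * ⟪φ n, J x⟫ with hψc
    have hψnorm : ∀ x n, ‖ψc x n‖ = ‖⟪J x, φ n⟫‖ := by
      intro x n
      rw [hψc]
      simp only [norm_mul, RCLike.norm_conj, hεnorm, one_mul]
      rw [norm_inner_symm, hadj]
    have hψsq : ∀ x n, ‖ψc x n‖ ^ 2 = ‖⟪J x, φ n⟫‖ ^ 2 := fun x n => by rw [hψnorm]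
    -- Bessel bound for the biorthogonal coefficients
    have hψsum : ∀ x : H, Summable (fun n => ‖ψc x n‖ ^ 2) := by
      intro x
      simpa only [hψsq] using (hB (J x)).1
    have hψbd : ∀ x : H, (∑' n, ‖ψc x n‖ ^ 2) ≤ b * ‖x‖ ^ 2 := by
      intro x
      calc (∑' n, ‖ψc x n‖ ^ 2) = ∑' n, ‖⟪J x, φ n⟫‖ ^ 2 := by simp only [hψsq]
        _ ≤ b * ‖J x‖ ^ 2 := (hB (J x)).2
        _ = b * ‖x‖ ^ 2 := by rw [hiso]
    -- summability of the products
    have hprodnorm : ∀ f x : H, Summable (fun n => ‖⟪f, φ n⟫ * ψc x n‖) := by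
      intro f x
      have h : (fun n => ‖⟪f, φ n⟫ * ψc x n‖) = fun n => |‖⟪f, φ n⟫‖| * |‖ψc x n‖| := by
        funext n
        rw [norm_mul, abs_norm, abs_norm]
      rw [h]
      exact aux_cs_summable (hB f).1 (hψsum x)
    have hprod : ∀ f x : H, Summable (fun n => ⟪f, φ n⟫ * ψc x n) :=
      fun f x => (hprodnorm f x).of_norm
    have hprodbd : ∀ f x : H, (∑' n, ‖⟪f, φ n⟫ * ψc x n‖) ≤
        Real.sqrt (∑' n, ‖⟪f, φ n⟫‖ ^ 2) * Real.sqrt (∑' n, ‖ψc x n‖ ^ 2) := by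
      intro f x
      have h1 : (fun n => ‖⟪f, φ n⟫ * ψc x n‖) = fun n => |‖⟪f, φ n⟫‖| * |‖ψc x n‖| := by
        funext n; rw [norm_mul, abs_norm, abs_norm]
      rw [h1]
      exact aux_cs_tsum (hB f).1 (hψsum x)
    -- the key reproducing identity
    have C_def : ∀ f : H, (0:ℝ) ≤ Real.sqrt (∑' n, ‖⟪f, φ n⟫‖ ^ 2) * Real.sqrt b := by
      intro f; positivity
    have key : ∀ f : H, (⟪f, f⟫ : ℂ) = ∑' n, ⟪f, φ n⟫ * ψc f n := by
      intro f
      set F : H → ℂ := fun x => ∑' n, ⟪f, φ n⟫ * ψc x n with hF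
      set C : ℝ := Real.sqrt (∑' n, ‖⟪f, φ n⟫‖ ^ 2) * Real.sqrt b with hC
      have hCnn : (0:ℝ) ≤ C := C_def f
      have hψadd : ∀ x y : H, ∀ n, ψc (x + y) n = ψc x n + ψc y n := by
        intro x y n
        simp only [hψc, map_add, inner_add_right, mul_add]
      have hψsmul : ∀ (c : ℂ) (x : H) (n : ℕ), ψc (c • x) n = c * ψc x n := by
        intro c x n
        simp only [hψc, map_smul, inner_smul_right]
        ring
      have hψsub : ∀ x y : H, ∀ n, ψc (x - y) n = ψc x n - ψc y n := by
        intro x y n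
        simp only [hψc, map_sub, inner_sub_right, mul_sub]
      have hFadd : ∀ x y : H, F (x + y) = F x + F y := by
        intro x y
        simp only [hF, hψadd, mul_add]
        exact Summable.tsum_add (hprod f x) (hprod f y)
      have hFsub : ∀ x y : H, F (x - y) = F x - F y := by
        intro x y
        simp only [hF, hψsub, mul_sub]
        exact Summable.tsum_sub (hprod f x) (hprod f y)
      have hFsmul : ∀ (c : ℂ) (x : H), F (c • x) = c * F x := by
        intro c x
        simp only [hF, hψsmul]
        calc (∑' n, ⟪f, φ n⟫ * (c * ψc x n)) = ∑' n, c * (⟪f, φ n⟫ * ψc x n) := by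
              congr 1; funext n; ring
          _ = c * ∑' n, ⟪f, φ n⟫ * ψc x n := tsum_mul_left
      have hFbd : ∀ x : H, ‖F x‖ ≤ C * ‖x‖ := by
        intro x
        have h1 : ‖F x‖ ≤ ∑' n, ‖⟪f, φ n⟫ * ψc x n‖ :=
          norm_tsum_le_tsum_norm (hprodnorm f x)
        have h2 := hprodbd f x
        have h3 : Real.sqrt (∑' n, ‖ψc x n‖ ^ 2) ≤ Real.sqrt b * ‖x‖ := by
          rw [← Real.sqrt_sq (norm_nonneg x), ← Real.sqrt_mul hb.le]
          exact Real.sqrt_le_sqrt (by simpa using hψbd x)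
        calc ‖F x‖ ≤ ∑' n, ‖⟪f, φ n⟫ * ψc x n‖ := h1
          _ ≤ Real.sqrt (∑' n, ‖⟪f, φ n⟫‖ ^ 2) * Real.sqrt (∑' n, ‖ψc x n‖ ^ 2) := h2
          _ ≤ Real.sqrt (∑' n, ‖⟪f, φ n⟫‖ ^ 2) * (Real.sqrt b * ‖x‖) :=
              mul_le_mul_of_nonneg_left h3 (Real.sqrt_nonneg _)
          _ = C * ‖x‖ := by rw [hC]; ring
      have hFcont : Continuous F := by
        refine (LipschitzWith.of_dist_le_mul (K := Real.toNNReal C) ?_).continuous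
        intro x y
        rw [dist_eq_norm, dist_eq_norm, ← hFsub]
        calc ‖F (x - y)‖ ≤ C * ‖x - y‖ := hFbd _
          _ = (Real.toNNReal C : ℝ) * ‖x - y‖ := by rw [Real.coe_toNNReal C hCnn]
      have hGcont : Continuous (fun x : H => (⟪f, x⟫ : ℂ)) :=
        continuous_const.inner continuous_id
      have hψφ : ∀ n m, ψc (φ m) n = if n = m then 1 else 0 := by
        intro n m
        by_cases hnm : n = m
        · subst hnm
          have h0 : (⟪φ n, J (φ n)⟫ : ℂ) = ε n := (hadj (φ n) (φ n)).symm
          simp only [hψc, h0, if_pos rfl]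
          rw [RCLike.conj_mul, hεnorm]
          norm_num
        · have h0 : (⟪φ n, J (φ m)⟫ : ℂ) = 0 := by
            rw [← hadj]
            have := hJon n m
            rw [if_neg hnm] at this
            exact norm_eq_zero.mp this
          simp [hψc, h0, hnm]
      have hrange : ∀ m, F (φ m) = ⟪f, φ m⟫ := by
        intro m
        rw [hF]
        show (∑' n, ⟪f, φ n⟫ * ψc (φ m) n) = ⟪f, φ m⟫
        rw [tsum_eq_single m]
        · rw [hψφ m m, if_pos rfl, mul_one]
        · intro n hn
          rw [hψφ n m, if_neg hn, mul_zero]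
      have heqon : Set.EqOn F (fun x : H => (⟪f, x⟫ : ℂ))
          ((Submodule.span ℂ (Set.range φ) : Submodule ℂ H) : Set H) := by
        intro x hx
        induction hx using Submodule.span_induction with
        | mem x hxm =>
            obtain ⟨m, rfl⟩ := hxm
            exact hrange m
        | zero =>
            have : F 0 = F 0 + F 0 := by rw [← hFadd]; norm_num
            have h0 : F 0 = 0 := by linear_combination -this
            simpa [inner_zero_right] using h0
        | add x y hxm hym hx hy =>
            show F (x + y) = ⟪f, x + y⟫
            rw [hFadd, inner_add_right, hx, hy]
        | smul c x hxm hx =>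
            show F (c • x) = ⟪f, c • x⟫
            rw [hFsmul, inner_smul_right, hx]
      have heq : F = fun x : H => (⟪f, x⟫ : ℂ) :=
        Continuous.ext_on hcomp hFcont hGcont heqon
      have := congrFun heq f
      rw [← this]
    -- derive the lower frame bound
    have lower : ∀ f : H, ‖f‖ ^ 2 / b ≤ ∑' n, ‖⟪f, φ n⟫‖ ^ 2 := by
      intro f
      by_cases hf : f = 0
      · subst hf
        simp only [norm_zero]
        rw [zero_pow (by norm_num), zero_div]
        exact tsum_nonneg (fun n => sq_nonneg _)
      · set S : ℝ := ∑' n, ‖⟪f, φ n⟫‖ ^ 2 with hS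
        have hS0 : 0 ≤ S := tsum_nonneg (fun n => sq_nonneg _)
        have h1 : ‖f‖ ^ 2 = RCLike.re (⟪f, f⟫ : ℂ) := (inner_self_eq_norm_sq f).symm
        have h2 : RCLike.re (⟪f, f⟫ : ℂ) ≤ ‖(⟪f, f⟫ : ℂ)‖ := RCLike.re_le_norm _
        have h3 : ‖(⟪f, f⟫ : ℂ)‖ ≤ ∑' n, ‖⟪f, φ n⟫ * ψc f n‖ := by
          rw [key f]
          exact norm_tsum_le_tsum_norm (hprodnorm f f)
        have h4 := hprodbd f f
        have h5 : Real.sqrt (∑' n, ‖ψc f n‖ ^ 2) ≤ Real.sqrt (b * ‖f‖ ^ 2) :=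
          Real.sqrt_le_sqrt (hψbd f)
        have h6 : ‖f‖ ^ 2 ≤ Real.sqrt S * Real.sqrt (b * ‖f‖ ^ 2) := by
          calc ‖f‖ ^ 2 = RCLike.re (⟪f, f⟫ : ℂ) := h1
            _ ≤ ‖(⟪f, f⟫ : ℂ)‖ := h2
            _ ≤ ∑' n, ‖⟪f, φ n⟫ * ψc f n‖ := h3
            _ ≤ Real.sqrt S * Real.sqrt (∑' n, ‖ψc f n‖ ^ 2) := h4
            _ ≤ Real.sqrt S * Real.sqrt (b * ‖f‖ ^ 2) := by
                exact mul_le_mul_of_nonneg_left h5 (Real.sqrt_nonneg _)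
        -- square both sides
        have h7 : (‖f‖ ^ 2) ^ 2 ≤ S * (b * ‖f‖ ^ 2) := by
          have hrhs : (Real.sqrt S * Real.sqrt (b * ‖f‖ ^ 2)) ^ 2 = S * (b * ‖f‖ ^ 2) := by
            rw [mul_pow, Real.sq_sqrt hS0, Real.sq_sqrt (by positivity)]
          calc (‖f‖ ^ 2) ^ 2 ≤ (Real.sqrt S * Real.sqrt (b * ‖f‖ ^ 2)) ^ 2 := by
                apply pow_le_pow_left₀ (by positivity) h6
            _ = S * (b * ‖f‖ ^ 2) := hrhs
        have hfpos : (0 : ℝ) < ‖f‖ ^ 2 := pow_pos (norm_pos_iff.mpr hf) 2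
        rw [div_le_iff₀ hb]
        nlinarith
    refine ⟨min b b⁻¹, b, lt_min hb (by positivity), min_le_left _ _, fun f => ?_⟩
    refine ⟨(hB f).1, ?_, (hB f).2⟩
    calc min b b⁻¹ * ‖f‖ ^ 2 ≤ b⁻¹ * ‖f‖ ^ 2 := by
          apply mul_le_mul_of_nonneg_right (min_le_right _ _) (by positivity)
      _ = ‖f‖ ^ 2 / b := by rw [div_eq_inv_mul]
      _ ≤ ∑' n, ‖⟪f, φ n⟫‖ ^ 2 := lower f
  · rintro ⟨a, b, ha, hab, h⟩
    exact ⟨b, lt_of_lt_of_le ha hab, fun f => ⟨(h f).1, (h f).2.2⟩⟩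
end
end

section
/- Let {𝖾_n}_{n≥0} be an orthonormal basis of a Hilbert space H and for real parameters α, β set φ_n = n^{-β}𝖾_n + n^{-α}𝖾_0 for n ≥ 1. Then {φ_n}_{n≥1} is minimal with biorthogonal sequence ψ_n = n^{β}𝖾_n, and {φ_n}_{n≥1} is complete in H if and only if α - β ≤ 1/2. -/
open scoped ComplexInnerProductSpace

noncomputable section

variable {H : Type*} [NormedAddCommGroup H] [InnerProductSpace ℂ H] [CompleteSpace H]

lemma mem_orthogonal_span_iff' {S : Set H} (x : H) :
    x ∈ (Submodule.span ℂ S)ᗮ ↔ ∀ s ∈ S, ⟪s, x⟫ = 0 := by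
  constructor
  · intro hx s hs
    exact Submodule.inner_right_of_mem_orthogonal (Submodule.subset_span hs) hx
  · intro h
    rw [Submodule.mem_orthogonal]
    intro u hu
    induction hu using Submodule.span_induction with
    | mem s hs => exact h s hs
    | zero => simp
    | add u v _ _ hu hv => rw [inner_add_left, hu, hv, add_zero]
    | smul c u _ hu => rw [inner_smul_left, hu, mul_zero]

lemma summable_shifted_rpow_iff (p : ℝ) :
    Summable (fun n : ℕ => ((n + 1 : ℕ) : ℝ) ^ p) ↔ p < -1 :=
  (summable_nat_add_iff (f := fun n : ℕ => (n:ℝ) ^ p) 1).trans Real.summable_nat_rpow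

/-- For an orthonormal basis `{ee_n}_{n ≥ 0}` and `φ_n = n^{-β}ee_n + n^{-α}ee_0` (`n ≥ 1`):
the sequence `{ψ_n = n^{β}ee_n}` is biorthogonal to `{φ_n}` (so `{φ_n}` is minimal), and
`{φ_n}_{n ≥ 1}` is complete in `H` if and only if `α - β ≤ 1/2`. -/
theorem shifted_basis_minimal_and_complete_iff
    (ee : ℕ → H) (hee : IsONB ee) (α β : ℝ) :
    (∀ n m : ℕ, 1 ≤ n → 1 ≤ m →
      ⟪((((n : ℝ) ^ β : ℝ)) : ℂ) • ee n,
        ((((m : ℝ) ^ (-β) : ℝ)) : ℂ) • ee m + ((((m : ℝ) ^ (-α) : ℝ)) : ℂ) • ee 0⟫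
        = if n = m then (1 : ℂ) else 0) ∧
    (Dense ((Submodule.span ℂ
        ((fun n : ℕ => ((((n : ℝ) ^ (-β) : ℝ)) : ℂ) • ee n
            + ((((n : ℝ) ^ (-α) : ℝ)) : ℂ) • ee 0) '' {n : ℕ | 1 ≤ n})
        : Submodule ℂ H) : Set H)
      ↔ α - β ≤ 1 / 2) := by
  obtain ⟨ho, hd⟩ := hee
  have hite := orthonormal_iff_ite.mp ho
  constructor
  · -- biorthogonality
    intro n m hn hm
    have hn0 : (0:ℝ) < (n:ℝ) := by exact_mod_cast hn
    rw [inner_add_right, inner_smul_left, inner_smul_left, inner_smul_right, inner_smul_right,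
      hite n m, hite n 0]
    have hne : ¬ n = 0 := by omega
    by_cases h : n = m
    · subst h
      have h1 : ((n:ℝ) ^ β : ℝ) * ((n:ℝ) ^ (-β) : ℝ) = 1 := by
        rw [← Real.rpow_add hn0]; simp
      simp [hne, Complex.conj_ofReal, ← Complex.ofReal_mul, h1]
    · simp [h, hne]
  · -- completeness iff
    set φ : ℕ → H := fun n : ℕ => ((((n : ℝ) ^ (-β) : ℝ)) : ℂ) • ee n
            + ((((n : ℝ) ^ (-α) : ℝ)) : ℂ) • ee 0 with hφ
    set K : Submodule ℂ H := Submodule.span ℂ (φ '' {n : ℕ | 1 ≤ n}) with hK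
    -- Hilbert basis
    have hsp : ⊤ ≤ (Submodule.span ℂ (Set.range ee)).topologicalClosure :=
      le_of_eq (Submodule.dense_iff_topologicalClosure_eq_top.mp hd).symm
    let b : HilbertBasis ℕ ℂ H := HilbertBasis.mk ho hsp
    have hbcoe : ∀ i, b i = ee i := fun i => congrFun (HilbertBasis.coe_mk ho hsp) i
    have hdense : Dense (K : Set H) ↔ Kᗮ = ⊥ := by
      rw [Submodule.dense_iff_topologicalClosure_eq_top, Submodule.topologicalClosure_eq_top_iff]
    -- key: inner product of φ n with x in terms of coefficients
    have hinner : ∀ (x : H) (n : ℕ), 1 ≤ n →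
        ⟪φ n, x⟫ = ((n:ℝ) ^ (-β) : ℝ) * (b.repr x n) + ((n:ℝ) ^ (-α) : ℝ) * (b.repr x 0) := by
      intro x n hn
      rw [hφ]
      simp only [inner_add_left, inner_smul_left, Complex.conj_ofReal]
      rw [b.repr_apply_apply, b.repr_apply_apply, hbcoe, hbcoe]
    constructor
    · -- dense → α - β ≤ 1/2, by contraposition
      intro hdense'
      by_contra hgt
      push_neg at hgt
      -- build the orthogonal vector
      have hexp : (β - α) * 2 < -1 := by nlinarith
      set f : ℕ → ℂ := fun n => if n = 0 then 1 else (-(((n:ℝ) ^ (β - α) : ℝ)) : ℂ) with hf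
      have hmem : Memℓp f 2 := by
        apply memℓp_gen
        have h2 : (2 : ENNReal).toReal = 2 := by simp
        rw [h2]
        rw [← summable_nat_add_iff (f := fun i : ℕ => ‖f i‖ ^ (2:ℝ)) 1]
        have hval : ∀ n : ℕ, ‖f (n + 1)‖ ^ (2:ℝ) = ((n + 1 : ℕ) : ℝ) ^ ((β - α) * 2) := by
          intro n
          have hpos : (0:ℝ) < ((n+1 : ℕ) : ℝ) := by positivity
          have hfv : f (n + 1) = -(((((n+1:ℕ):ℝ)) ^ (β - α) : ℝ) : ℂ) := by simp [hf]
          rw [hfv, norm_neg, Complex.norm_real, Real.norm_eq_abs,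
            abs_of_nonneg (Real.rpow_nonneg hpos.le _), ← Real.rpow_mul hpos.le]
        exact Summable.congr ((summable_shifted_rpow_iff _).mpr hexp) (fun n => (hval n).symm)
      set γ : H := b.repr.symm ⟨f, hmem⟩ with hγ
      have hγrepr : ∀ i, b.repr γ i = f i := by
        intro i
        rw [hγ, LinearIsometryEquiv.apply_symm_apply]
        try rfl
      have hγne : γ ≠ 0 := by
        intro h0
        have := hγrepr 0
        rw [h0, map_zero] at this
        simp [hf] at this
      have hγorth : γ ∈ Kᗮ := by
        rw [hK, mem_orthogonal_span_iff']
        rintro s ⟨n, hn, rfl⟩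
        have hne : ¬ n = 0 := by simpa using Nat.one_le_iff_ne_zero.mp hn
        have hn0 : (0:ℝ) < (n:ℝ) := by
          have h1 : 1 ≤ n := hn
          exact_mod_cast h1
        have e1 : f n = -((((n:ℝ) ^ (β - α) : ℝ)) : ℂ) := by simp [hf, hne]
        have e2 : f 0 = 1 := by simp [hf]
        rw [hinner γ n hn, hγrepr, hγrepr, e1, e2, mul_one, mul_neg, ← Complex.ofReal_mul,
          ← Real.rpow_add hn0]
        have e3 : -β + (β - α) = -α := by ring
        rw [e3]
        ring
      rw [hdense, Submodule.eq_bot_iff] at hdense'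
      exact hγne (hdense' γ hγorth)
    · -- α - β ≤ 1/2 → dense
      intro hle
      rw [hdense, Submodule.eq_bot_iff]
      intro x hx
      rw [hK, mem_orthogonal_span_iff'] at hx
      set c : ℕ → ℂ := fun i => b.repr x i with hc
      have hrel : ∀ n : ℕ, 1 ≤ n →
          ((n:ℝ) ^ (-β) : ℝ) * c n + ((n:ℝ) ^ (-α) : ℝ) * c 0 = 0 := by
        intro n hn
        have := hx (φ n) ⟨n, hn, rfl⟩
        rw [hinner x n hn] at this
        exact this
      have hc0 : c 0 = 0 := by
        by_contra hc0
        -- then c n = -(n^{β-α}) c 0, not ℓ²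
        have hcn : ∀ n : ℕ, 1 ≤ n → c n = -((((n:ℝ) ^ (β - α) : ℝ)) : ℂ) * c 0 := by
          intro n hn
          have hn0 : (0:ℝ) < (n:ℝ) := by
            have : 1 ≤ n := hn
            exact_mod_cast this
          have h1 := hrel n hn
          have hkey : (((n:ℝ) ^ β : ℝ) : ℂ) * ((((n:ℝ) ^ (-β) : ℝ)) : ℂ) = 1 := by
            rw [← Complex.ofReal_mul, ← Real.rpow_add hn0]; simp
          have hkey2 : (((n:ℝ) ^ β : ℝ) : ℂ) * ((((n:ℝ) ^ (-α) : ℝ)) : ℂ)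
              = ((((n:ℝ) ^ (β - α) : ℝ)) : ℂ) := by
            rw [← Complex.ofReal_mul, ← Real.rpow_add hn0, sub_eq_add_neg]
          have hstep : c n = (((n:ℝ) ^ β : ℝ) : ℂ) *
                ((((n:ℝ) ^ (-β) : ℝ) : ℂ) * c n + (((n:ℝ) ^ (-α) : ℝ) : ℂ) * c 0)
                - ((((n:ℝ) ^ (β - α) : ℝ)) : ℂ) * c 0 := by
            rw [mul_add, ← mul_assoc, hkey, ← mul_assoc, hkey2]; ring
          rw [hstep, h1]; ring
        -- summability contradiction
        have hsum : Summable fun i : ℕ => ‖c i‖ ^ (2:ℝ) := by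
          have := (lp.memℓp (b.repr x)).summable (by norm_num : (0:ℝ) < (2:ENNReal).toReal)
          have h2 : (2 : ENNReal).toReal = 2 := by simp
          rw [h2] at this
          exact this
        have hsum2 : Summable (fun n : ℕ => ((n + 1 : ℕ) : ℝ) ^ ((β - α) * 2) * ‖c 0‖ ^ (2:ℝ)) := by
          apply Summable.congr ((summable_nat_add_iff 1).mpr hsum)
          intro n
          have hpos : (0:ℝ) < ((n+1 : ℕ) : ℝ) := by positivity
          rw [hcn (n+1) (Nat.le_add_left 1 n)]
          rw [norm_mul, norm_neg, Complex.norm_real, Real.norm_eq_abs,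
            abs_of_nonneg (Real.rpow_nonneg hpos.le _),
            Real.mul_rpow (Real.rpow_nonneg hpos.le _) (norm_nonneg _),
            ← Real.rpow_mul hpos.le]
        have hsum3 : Summable (fun n : ℕ => ((n + 1 : ℕ) : ℝ) ^ ((β - α) * 2)) := by
          have hne : ‖c 0‖ ^ (2:ℝ) ≠ 0 := by
            apply ne_of_gt
            apply Real.rpow_pos_of_pos
            simpa using hc0
          have := hsum2.mul_right (‖c 0‖ ^ (2:ℝ))⁻¹
          apply Summable.congr this
          intro n
          rw [mul_assoc, mul_inv_cancel₀ hne, mul_one]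
        rw [summable_shifted_rpow_iff] at hsum3
        nlinarith
      -- now all coefficients vanish
      have hcall : ∀ i, c i = 0 := by
        intro i
        rcases Nat.eq_zero_or_pos i with h0 | hpos
        · rw [h0]; exact hc0
        · have h1 := hrel i hpos
          rw [hc0, mul_zero, add_zero] at h1
          have hn0 : (0:ℝ) < (i:ℝ) := by exact_mod_cast hpos
          have hb0 : (((i:ℝ) ^ (-β) : ℝ) : ℂ) ≠ 0 := by
            simp only [ne_eq, Complex.ofReal_eq_zero]
            exact (Real.rpow_pos_of_pos hn0 _).ne'
          exact (mul_eq_zero.mp h1).resolve_left hb0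
      have : b.repr x = 0 := by
        ext i
        exact hcall i
      have := congrArg b.repr.symm this
      rwa [LinearIsometryEquiv.symm_apply_apply, map_zero] at this
end
end

section
/- Let {𝖾_n}_{n≥0} be an orthonormal basis of H and φ_n = n^{-β}𝖾_n + n^{-α}𝖾_0 (n ≥ 1) with β ≤ 0 and α - β ≤ 1/2. Then the closure of the operator S defined by Sφ_n = n^{β}𝖾_n (extended linearly to span{φ_n}) annihilates 𝖾_0 (S̄𝖾_0 = 0); consequently S̄ is not positive and {φ_n} is a semi-regular sequence that is not a generalized Riesz system. -/
open scoped ComplexInnerProductSpace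
open Filter Topology

noncomputable section

variable {H : Type*} [NormedAddCommGroup H] [InnerProductSpace ℂ H] [CompleteSpace H]

set_option linter.unusedSectionVars false in
/-- Norm-squared of a finite real-coefficient combination of an orthonormal family. -/
lemma norm_sq_sum_smul_aux (v : ℕ → H) (hv : Orthonormal ℂ v) (d : ℕ → ℝ) (s : Finset ℕ) :
    ‖∑ i ∈ s, ((d i : ℝ) : ℂ) • v i‖ ^ 2 = ∑ i ∈ s, (d i) ^ 2 := by
  have h := hv.inner_sum (fun i => ((d i : ℝ) : ℂ)) (fun i => ((d i : ℝ) : ℂ)) s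
  rw [inner_self_eq_norm_sq_to_K] at h
  have h2 := congrArg Complex.re h
  simpa [Complex.conj_ofReal, pow_two, ← Complex.ofReal_mul, ← Complex.ofReal_pow] using h2

set_option linter.unusedSectionVars false in
/-- The key approximation: if the graph of `T` contains the pairs `(φ_{i+1}, r i • ψ' i)` with
`ψ'` orthonormal and `0 ≤ r i ≤ 1`, then there is a sequence in the graph converging
to `(ee 0, 0)`. -/
lemma key_tendsto_aux (ee : ℕ → H) (hee : Orthonormal ℂ ee) (α β : ℝ) (hβ : β ≤ 0)
    (hαβ : α - β ≤ 1 / 2) (T : H →ₗ.[ℂ] H) (r : ℕ → ℝ) (hr0 : ∀ i, 0 ≤ r i) (hr : ∀ i, r i ≤ 1)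
    (ψ' : ℕ → H) (hψ' : Orthonormal ℂ ψ')
    (hmem : ∀ i : ℕ, (((((i + 1 : ℕ) : ℝ) ^ (-β) : ℝ) : ℂ) • ee (i + 1)
        + ((((i + 1 : ℕ) : ℝ) ^ (-α) : ℝ) : ℂ) • ee 0, (r i : ℂ) • ψ' i) ∈ T.graph) :
    ∃ u w : ℕ → H, (∀ k, (u k, w k) ∈ T.graph) ∧
      Tendsto u atTop (𝓝 (ee 0)) ∧ Tendsto w atTop (𝓝 0) := by
  classical
  have hb1 : ∀ i : ℕ, (1 : ℝ) ≤ ((i + 1 : ℕ) : ℝ) := fun i => by push_cast; linarith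
  have hb0 : ∀ i : ℕ, (0 : ℝ) < ((i + 1 : ℕ) : ℝ) := fun i => lt_of_lt_of_le one_pos (hb1 i)
  set W : ℕ → ℝ := fun k => ∑ i ∈ Finset.range k, ((i + 1 : ℕ) : ℝ) ^ (2 * β - 2 * α) with hW
  have hWpos : ∀ k, 1 ≤ k → 0 < W k := by
    intro k hk
    exact Finset.sum_pos (fun i _ => Real.rpow_pos_of_pos (hb0 i) _)
      (Finset.nonempty_range_iff.2 (by omega))
  have hWtop : Tendsto W atTop atTop := by
    refine tendsto_atTop_mono (fun k => ?_) Real.tendsto_sum_range_one_div_nat_succ_atTop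
    apply Finset.sum_le_sum
    intro i _
    have : ((i + 1 : ℕ) : ℝ) ^ (-1 : ℝ) ≤ ((i + 1 : ℕ) : ℝ) ^ (2 * β - 2 * α) := by
      apply Real.rpow_le_rpow_of_exponent_le (hb1 i); linarith
    rw [Real.rpow_neg_one] at this
    rw [one_div]
    push_cast at this ⊢
    convert this using 2
  have hWinv : Tendsto (fun k => (W k)⁻¹) atTop (𝓝 0) := hWtop.inv_tendsto_atTop
  set c : ℕ → ℕ → ℝ := fun k i => ((i + 1 : ℕ) : ℝ) ^ (2 * β - α) / W k with hc
  set φ : ℕ → H := fun i => ((((i + 1 : ℕ) : ℝ) ^ (-β) : ℝ) : ℂ) • ee (i + 1)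
      + ((((i + 1 : ℕ) : ℝ) ^ (-α) : ℝ) : ℂ) • ee 0 with hφ
  set u : ℕ → H := fun k => ∑ i ∈ Finset.range k, ((c k i : ℝ) : ℂ) • φ i with hu
  set w : ℕ → H := fun k => ∑ i ∈ Finset.range k, ((c k i : ℝ) : ℂ) • ((r i : ℂ) • ψ' i) with hw
  refine ⟨u, w, ?_, ?_, ?_⟩
  · intro k
    have : (u k, w k) = ∑ i ∈ Finset.range k, ((c k i : ℝ) : ℂ) • (φ i, (r i : ℂ) • ψ' i) := by
      rw [Prod.ext_iff]
      constructor
      · simp [hu, Prod.fst_sum]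
      · simp [hw, Prod.snd_sum]
    rw [this]
    exact Submodule.sum_mem _ (fun i _ => Submodule.smul_mem _ _ (hmem i))
  · -- u k → ee 0
    have hsum1 : ∀ k, 1 ≤ k → ∑ i ∈ Finset.range k, c k i * ((i + 1 : ℕ) : ℝ) ^ (-α) = 1 := by
      intro k hk
      have : ∀ i ∈ Finset.range k, c k i * ((i + 1 : ℕ) : ℝ) ^ (-α)
          = ((i + 1 : ℕ) : ℝ) ^ (2 * β - 2 * α) / W k := by
        intro i _
        rw [hc]
        rw [div_mul_eq_mul_div, ← Real.rpow_add (hb0 i)]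
        ring_nf
      rw [Finset.sum_congr rfl this, ← Finset.sum_div]
      exact div_self (ne_of_gt (hWpos k hk))
    have hkey : ∀ k, 1 ≤ k → ‖u k - ee 0‖ ^ 2 = (W k)⁻¹ := by
      intro k hk
      have hueq : u k - ee 0 = ∑ i ∈ Finset.range k,
          (((c k i * ((i + 1 : ℕ) : ℝ) ^ (-β)) : ℝ) : ℂ) • ee (i + 1) := by
        rw [hu, hφ]
        simp only [smul_add, smul_smul, ← Complex.ofReal_mul, Finset.sum_add_distrib]
        have hone : ∑ i ∈ Finset.range k,
            (((c k i * ((i + 1 : ℕ) : ℝ) ^ (-α)) : ℝ) : ℂ) • ee 0 = ee 0 := by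
          rw [← Finset.sum_smul, ← Complex.ofReal_sum, hsum1 k hk]
          simp
        rw [hone]
        abel
      have hcomp : Orthonormal ℂ (fun i : ℕ => ee (i + 1)) :=
        hee.comp (fun i => i + 1) (fun a b hab => by simpa using hab)
      rw [hueq, norm_sq_sum_smul_aux (fun i => ee (i + 1)) hcomp
        (fun i => c k i * ((i + 1 : ℕ) : ℝ) ^ (-β)) (Finset.range k)]
      have hterm : ∀ i ∈ Finset.range k, (c k i * ((i + 1 : ℕ) : ℝ) ^ (-β)) ^ 2
          = ((i + 1 : ℕ) : ℝ) ^ (2 * β - 2 * α) / (W k) ^ 2 := by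
        intro i _
        have e1 : c k i * ((i + 1 : ℕ) : ℝ) ^ (-β)
            = ((i + 1 : ℕ) : ℝ) ^ (β - α) / W k := by
          rw [hc, div_mul_eq_mul_div, ← Real.rpow_add (hb0 i)]
          ring_nf
        rw [e1, div_pow, pow_two (((i + 1 : ℕ) : ℝ) ^ (β - α)), ← Real.rpow_add (hb0 i),
          show β - α + (β - α) = 2 * β - 2 * α by ring]
      rw [Finset.sum_congr rfl hterm, ← Finset.sum_div]
      rw [pow_two, ← div_div]
      rw [div_self (ne_of_gt (hWpos k hk)), one_div]
    have h2 : Tendsto (fun k => ‖u k - ee 0‖ ^ 2) atTop (𝓝 0) := by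
      apply squeeze_zero' (Filter.Eventually.of_forall fun k => sq_nonneg _)
        _ hWinv
      filter_upwards [Filter.eventually_ge_atTop 1] with k hk
      rw [hkey k hk]
    rw [tendsto_iff_norm_sub_tendsto_zero]
    have h3 := (Real.continuous_sqrt.tendsto 0).comp h2
    simpa [Function.comp_def, Real.sqrt_sq (norm_nonneg _)] using h3
  · -- w k → 0
    have hkey : ∀ k, 1 ≤ k → ‖w k‖ ^ 2 ≤ (W k)⁻¹ := by
      intro k hk
      have hweq : w k = ∑ i ∈ Finset.range k, (((c k i * r i) : ℝ) : ℂ) • ψ' i := by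
        rw [hw]
        simp only [smul_smul, ← Complex.ofReal_mul]
      rw [hweq, norm_sq_sum_smul_aux _ hψ']
      have hle1 : ∀ i ∈ Finset.range k, (c k i * r i) ^ 2
          ≤ ((i + 1 : ℕ) : ℝ) ^ (2 * β - 2 * α) / (W k) ^ 2 := by
        intro i _
        have h1 : (c k i * r i) ^ 2 ≤ (c k i) ^ 2 := by
          rw [mul_pow]
          have : (r i) ^ 2 ≤ 1 := by nlinarith [hr i, hr0 i]
          nlinarith [sq_nonneg (c k i)]
        refine h1.trans ?_
        have e1 : (c k i) ^ 2 = ((i + 1 : ℕ) : ℝ) ^ (4 * β - 2 * α) / (W k) ^ 2 := by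
          rw [hc, div_pow, pow_two (((i + 1 : ℕ) : ℝ) ^ (2 * β - α)), ← Real.rpow_add (hb0 i),
            show 2 * β - α + (2 * β - α) = 4 * β - 2 * α by ring]
        rw [e1]
        have hW2 : (0 : ℝ) < (W k) ^ 2 := pow_pos (hWpos k hk) 2
        have hnum : ((i + 1 : ℕ) : ℝ) ^ (4 * β - 2 * α)
            ≤ ((i + 1 : ℕ) : ℝ) ^ (2 * β - 2 * α) :=
          Real.rpow_le_rpow_of_exponent_le (hb1 i) (by linarith)
        exact div_le_div_of_nonneg_right hnum hW2.le |>.trans_eq rfl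
      calc ∑ i ∈ Finset.range k, (c k i * r i) ^ 2
          ≤ ∑ i ∈ Finset.range k, ((i + 1 : ℕ) : ℝ) ^ (2 * β - 2 * α) / (W k) ^ 2 :=
            Finset.sum_le_sum hle1
        _ = (W k)⁻¹ := by
            rw [← Finset.sum_div, pow_two, ← div_div, div_self (ne_of_gt (hWpos k hk)), one_div]
    have h2 : Tendsto (fun k => ‖w k‖ ^ 2) atTop (𝓝 0) := by
      apply squeeze_zero' (Filter.Eventually.of_forall fun k => sq_nonneg _) _ hWinv
      filter_upwards [Filter.eventually_ge_atTop 1] with k hk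
      exact hkey k hk
    rw [tendsto_zero_iff_norm_tendsto_zero]
    have h3 := (Real.continuous_sqrt.tendsto 0).comp h2
    simpa [Function.comp_def, Real.sqrt_sq (norm_nonneg _)] using h3
/-- Let `φ_n = n^{-β} ee_n + n^{-α} ee_0` (`n ≥ 1`) with `β ≤ 0` and `α - β ≤ 1/2`, and let `S`
be the operator `Sφ_n = n^{β} ee_n` on `span{φ_n}`.  Then the closure `S̄` of `S` annihilates
`ee_0`; consequently `S̄` is not positive and `{φ_n}` is a semi-regular sequence which is not a
generalized Riesz system. -/
theorem closure_kills_e0_not_GRS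
    (ee : ℕ → H) (hee : IsONB ee) (α β : ℝ) (hβ : β ≤ 0) (hαβ : α - β ≤ 1 / 2)
    (S : H →ₗ.[ℂ] H)
    (hdom : S.domain = Submodule.span ℂ
      ((fun n : ℕ => ((((n : ℝ) ^ (-β) : ℝ)) : ℂ) • ee n
          + ((((n : ℝ) ^ (-α) : ℝ)) : ℂ) • ee 0) '' {n : ℕ | 1 ≤ n}))
    (hS : ∀ n : ℕ, 1 ≤ n → ∃ h : ((((n : ℝ) ^ (-β) : ℝ)) : ℂ) • ee n
          + ((((n : ℝ) ^ (-α) : ℝ)) : ℂ) • ee 0 ∈ S.domain,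
        S ⟨_, h⟩ = ((((n : ℝ) ^ β : ℝ)) : ℂ) • ee n) :
    S.IsClosable ∧
    (∃ h0 : ee 0 ∈ S.closure.domain, S.closure ⟨ee 0, h0⟩ = 0) ∧
    ¬ S.closure.IsPositive ∧
    ¬ IsGRS (fun n : ℕ => ((((n + 1 : ℕ) : ℝ) ^ (-β) : ℝ) : ℂ) • ee (n + 1)
        + ((((n + 1 : ℕ) : ℝ) ^ (-α) : ℝ) : ℂ) • ee 0) := by
  classical
  obtain ⟨heo, hed⟩ := hee
  have hij : ∀ i j : ℕ, (⟪ee i, ee j⟫ : ℂ) = if i = j then 1 else 0 :=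
    orthonormal_iff_ite.mp heo
  have hne0 : ee 0 ≠ 0 := by
    intro h
    have h1 := heo.1 0
    rw [h, norm_zero] at h1
    norm_num at h1
  -- Step 1: every element of the graph satisfies the diagonal relations
  set wc : ℕ → ℂ := fun m => if m = 0 then 0 else ((((m : ℝ) ^ (2 * β) : ℝ)) : ℂ) with hwc
  have hrel : ∀ m : ℕ, ∀ p ∈ S.graph, (⟪ee m, p.2⟫ : ℂ) = wc m * ⟪ee m, p.1⟫ := by
    intro m p hp
    rw [LinearPMap.mem_graph_iff'] at hp
    obtain ⟨y, rfl⟩ := hp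
    obtain ⟨x, hx⟩ := y
    simp only
    have hx' : x ∈ Submodule.span ℂ
        ((fun n : ℕ => ((((n : ℝ) ^ (-β) : ℝ)) : ℂ) • ee n
          + ((((n : ℝ) ^ (-α) : ℝ)) : ℂ) • ee 0) '' {n : ℕ | 1 ≤ n}) := by
      rw [← hdom]; exact hx
    revert hx
    induction hx' using Submodule.span_induction with
    | mem z hz =>
      intro hzd
      obtain ⟨n, hn, rfl⟩ := hz
      obtain ⟨h, heq⟩ := hS n hn
      have hSval : S ⟨_, hzd⟩ = ((((n : ℝ) ^ β : ℝ)) : ℂ) • ee n := heq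
      rw [hSval]
      simp only [inner_smul_right, inner_add_right]
      rw [hij m n, hij m 0]
      have hn1 : 1 ≤ n := hn
      by_cases hm0 : m = 0
      · subst hm0
        rw [hwc]
        simp only [if_pos rfl]
        rw [if_neg (by omega)]
        simp
      · rw [hwc]
        simp only [if_neg hm0]
        by_cases hmn : m = n
        · subst hmn
          have hmpos : (0 : ℝ) < (m : ℝ) := by
            exact_mod_cast Nat.pos_of_ne_zero hm0
          simp only [if_true, eq_self_iff_true, if_pos, mul_one, mul_zero, add_zero]
          rw [← Complex.ofReal_mul, ← Real.rpow_add hmpos, show 2 * β + -β = β by ring]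
        · simp [if_neg hmn]
    | zero =>
      intro hzd
      have : S ⟨0, hzd⟩ = 0 := by
        have h0 : (⟨0, hzd⟩ : S.domain) = 0 := rfl
        rw [h0, S.map_zero]
      rw [this]
      simp
    | add z₁ z₂ hz₁ hz₂ ih₁ ih₂ =>
      intro hzd
      have hz₁d : z₁ ∈ S.domain := by rw [hdom]; exact hz₁
      have hz₂d : z₂ ∈ S.domain := by rw [hdom]; exact hz₂
      have hsplit : (⟨z₁ + z₂, hzd⟩ : S.domain) = ⟨z₁, hz₁d⟩ + ⟨z₂, hz₂d⟩ := rfl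
      rw [hsplit, S.map_add, inner_add_right, inner_add_right, ih₁ hz₁d, ih₂ hz₂d]
      ring
    | smul a z hz ih =>
      intro hzd
      have hzd' : z ∈ S.domain := by rw [hdom]; exact hz
      have hsplit : (⟨a • z, hzd⟩ : S.domain) = a • (⟨z, hzd'⟩ : S.domain) := rfl
      rw [hsplit, S.map_smul, inner_smul_right, inner_smul_right, ih hzd']
      ring
  -- Step 2: the closure of the graph kills nothing: (0, y) in closure implies y = 0
  have hclosed : ∀ m : ℕ, IsClosed {p : H × H | (⟪ee m, p.2⟫ : ℂ) = wc m * ⟪ee m, p.1⟫} := by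
    intro m
    apply isClosed_eq
    · exact Continuous.inner continuous_const continuous_snd
    · exact Continuous.mul continuous_const (Continuous.inner continuous_const continuous_fst)
  have hrelc : ∀ m : ℕ, ∀ p ∈ S.graph.topologicalClosure,
      (⟪ee m, p.2⟫ : ℂ) = wc m * ⟪ee m, p.1⟫ := by
    intro m p hp
    have hsub : (S.graph : Set (H × H)) ⊆ {p : H × H | (⟪ee m, p.2⟫ : ℂ) = wc m * ⟪ee m, p.1⟫} :=
      fun q hq => hrel m q hq
    have := closure_minimal hsub (hclosed m)
    rw [← Submodule.topologicalClosure_coe] at this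
    exact this hp
  have horth : ∀ y : H, (∀ m : ℕ, (⟪ee m, y⟫ : ℂ) = 0) → y = 0 := by
    intro y hy
    have hKd : Dense ((Submodule.span ℂ (Set.range ee) : Submodule ℂ H) : Set H) := hed
    refine Dense.eq_zero_of_inner_right ℂ hKd ?_
    intro v hv
    induction hv using Submodule.span_induction with
    | mem z hz =>
      obtain ⟨m, rfl⟩ := hz
      exact hy m
    | zero => simp
    | add z₁ z₂ hz₁ hz₂ ih₁ ih₂ => rw [inner_add_left, ih₁, ih₂]; ring
    | smul a z hz ih => rw [inner_smul_left, ih]; ring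
  have hker : ∀ x ∈ S.graph.topologicalClosure, x.1 = 0 → x.2 = 0 := by
    intro x hx h1
    refine horth x.2 fun m => ?_
    rw [hrelc m x hx, h1]
    simp
  have hclosable : S.IsClosable :=
    ⟨S.graph.topologicalClosure.toLinearPMap, (Submodule.toLinearPMap_graph_eq _ hker).symm⟩
  -- Step 3: the sequence converging to (ee 0, 0) in the graph of S
  have hmemS : ∀ i : ℕ, (((((i + 1 : ℕ) : ℝ) ^ (-β) : ℝ) : ℂ) • ee (i + 1)
      + ((((i + 1 : ℕ) : ℝ) ^ (-α) : ℝ) : ℂ) • ee 0,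
      ((((i + 1 : ℕ) : ℝ) ^ β : ℝ) : ℂ) • ee (i + 1)) ∈ S.graph := by
    intro i
    obtain ⟨h, heq⟩ := hS (i + 1) (by omega)
    have := S.mem_graph ⟨_, h⟩
    rwa [heq] at this
  obtain ⟨u, w, hg, hu, hw⟩ := key_tendsto_aux ee heo α β hβ hαβ S
    (fun i => ((i + 1 : ℕ) : ℝ) ^ β)
    (fun i => Real.rpow_nonneg (by positivity) β)
    (fun i => Real.rpow_le_one_of_one_le_of_nonpos (by push_cast; linarith) hβ)
    (fun i => ee (i + 1)) (heo.comp (fun i => i + 1) (fun a b hab => by simpa using hab))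
    hmemS
  have hmemc : (ee 0, (0 : H)) ∈ S.closure.graph := by
    rw [← hclosable.graph_closure_eq_closure_graph]
    have ht : Tendsto (fun k => (u k, w k)) atTop (𝓝 (ee 0, (0 : H))) := hu.prodMk_nhds hw
    have hmc : (ee 0, (0 : H)) ∈ closure (S.graph : Set (H × H)) :=
      mem_closure_of_tendsto ht (Filter.Eventually.of_forall hg)
    rwa [← Submodule.topologicalClosure_coe] at hmc
  obtain ⟨y, hy1, hy2⟩ := (S.closure.mem_graph_iff).mp hmemc
  have hy1' : (y : H) = ee 0 := hy1
  have hy2' : S.closure y = 0 := hy2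
  have h0 : ee 0 ∈ S.closure.domain := by rw [← hy1']; exact y.2
  have hval : S.closure ⟨ee 0, h0⟩ = 0 := by
    have hyy : (⟨ee 0, h0⟩ : S.closure.domain) = y := Subtype.ext hy1'.symm
    rw [hyy]; exact hy2'
  refine ⟨hclosable, ⟨h0, hval⟩, ?_, ?_⟩
  · -- not positive
    intro hpos
    have := hpos ⟨ee 0, h0⟩ hne0
    rw [hval] at this
    simp at this
  · -- not a GRS
    rintro ⟨E, F, e, hE, hF, hEp, hFp, hFE, hEF, heONB, hphi⟩
    have hmemF : ∀ i : ℕ, (((((i + 1 : ℕ) : ℝ) ^ (-β) : ℝ) : ℂ) • ee (i + 1)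
        + ((((i + 1 : ℕ) : ℝ) ^ (-α) : ℝ) : ℂ) • ee 0,
        (((1 : ℝ) : ℂ)) • e i) ∈ F.graph := by
      intro i
      obtain ⟨h1, h2, heq⟩ := hphi i
      obtain ⟨hm, hv⟩ := hFE ⟨e i, h1⟩
      have := F.mem_graph ⟨E ⟨e i, h1⟩, hm⟩
      rw [hv] at this
      have hcast : (((1 : ℝ) : ℂ)) • e i = e i := by norm_num
      rw [hcast,
        show (((((i + 1 : ℕ) : ℝ) ^ (-β) : ℝ) : ℂ) • ee (i + 1)
          + ((((i + 1 : ℕ) : ℝ) ^ (-α) : ℝ) : ℂ) • ee 0 : H) = E ⟨e i, h1⟩ from heq]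
      exact this
    obtain ⟨u2, w2, hg2, hu2, hw2⟩ := key_tendsto_aux ee heo α β hβ hαβ F
      (fun _ => (1 : ℝ)) (fun _ => zero_le_one) (fun _ => le_refl 1) e heONB.1 hmemF
    have hFd : Dense (F.domain : Set H) := hF.dense_domain
    have hsym : F.IsFormalAdjoint F := by
      have h1 := LinearPMap.adjoint_isFormalAdjoint (hT := hFd)
      rwa [LinearPMap.isSelfAdjoint_def.mp hF] at h1
    have hzero : ∀ y : F.domain, (⟪ee 0, F y⟫ : ℂ) = 0 := by
      intro y
      have h1 : Tendsto (fun k => (⟪u2 k, F y⟫ : ℂ)) atTop (𝓝 ⟪ee 0, F y⟫) :=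
        Filter.Tendsto.inner hu2 tendsto_const_nhds
      have h2 : Tendsto (fun k => (⟪w2 k, (y : H)⟫ : ℂ)) atTop (𝓝 ⟪(0 : H), (y : H)⟫) :=
        Filter.Tendsto.inner hw2 tendsto_const_nhds
      have heqk : ∀ k, (⟪w2 k, (y : H)⟫ : ℂ) = ⟪u2 k, F y⟫ := by
        intro k
        obtain ⟨z, hz1, hz2⟩ := (F.mem_graph_iff).mp (hg2 k)
        have hz1' : (z : H) = u2 k := hz1
        have hz2' : F z = w2 k := hz2
        rw [← hz1', ← hz2']
        exact hsym z y
      rw [show (fun k => (⟪w2 k, (y : H)⟫ : ℂ)) = fun k => (⟪u2 k, F y⟫ : ℂ) from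
        funext heqk] at h2
      have := tendsto_nhds_unique h1 h2
      rw [this]
      simp
    have hzero2 : ∀ x : E.domain, (⟪ee 0, (x : H)⟫ : ℂ) = 0 := by
      intro x
      obtain ⟨h, heq⟩ := hFE x
      have := hzero ⟨E x, h⟩
      rwa [heq] at this
    have hEd : Dense (E.domain : Set H) := hE.dense_domain
    have : ee 0 = 0 := Dense.eq_zero_of_inner_left ℂ hEd fun v hv => hzero2 ⟨v, hv⟩
    exact hne0 this
end
end
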